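/- arXiv:1505.02926 — 4 statements merged into one kernel-verified Lean document; each statement's English description precedes it below -/
import Mathlib

section
/- Every continuous linear functional Λ on 𝒞([-T,0[) admits a unique representation Λγ = ∫_{[-T,0[} γ(x) μ(dx) for all γ ∈ 𝒞([-T,0[), where μ is a finite signed Borel measure on [-T,0] with μ({0}) = 0. -/
open MeasureTheory Filter Topology Set

/-- Membership in `𝒞([-T,0[)`: bounded and continuous on `[-T,0[`. -/
def memScrC' (T : ℝ) (γ : ℝ → ℝ) : Prop :=
  (∃ C, ∀ x ∈ Set.Ico (-T) (0:ℝ), |γ x| ≤ C) ∧ ContinuousOn γ (Set.Ico (-T) 0)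

namespace Stmt9

variable {T : ℝ}

lemma mem_of_continuous {γ : ℝ → ℝ} (h : Continuous γ) : memScrC' T γ := by
  obtain ⟨C, hC⟩ := (isCompact_Icc (a := -T) (b := (0:ℝ))).exists_bound_of_continuousOn
    h.continuousOn
  exact ⟨⟨C, fun x hx => hC x (Icc_subset_Icc_right le_rfl ⟨hx.1, hx.2.le⟩)⟩,
    h.continuousOn⟩

lemma mem_zero : memScrC' T (fun _ => (0:ℝ)) := mem_of_continuous continuous_const

lemma mem_const (c : ℝ) : memScrC' T (fun _ => c) := mem_of_continuous continuous_const

lemma mem_add {γ ξ : ℝ → ℝ} (hγ : memScrC' T γ) (hξ : memScrC' T ξ) :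
    memScrC' T (fun t => γ t + ξ t) := by
  obtain ⟨⟨C, hC⟩, hcγ⟩ := hγ
  obtain ⟨⟨D, hD⟩, hcξ⟩ := hξ
  refine ⟨⟨C + D, fun x hx => ?_⟩, hcγ.add hcξ⟩
  calc |γ x + ξ x| ≤ |γ x| + |ξ x| := abs_add_le _ _
    _ ≤ C + D := add_le_add (hC x hx) (hD x hx)

lemma mem_smul (c : ℝ) {γ : ℝ → ℝ} (hγ : memScrC' T γ) :
    memScrC' T (fun t => c * γ t) := by
  obtain ⟨⟨C, hC⟩, hcγ⟩ := hγ
  refine ⟨⟨|c| * C, fun x hx => ?_⟩, continuousOn_const.mul hcγ⟩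
  rw [abs_mul]
  exact mul_le_mul_of_nonneg_left (hC x hx) (abs_nonneg c)

lemma mem_sub {γ ξ : ℝ → ℝ} (hγ : memScrC' T γ) (hξ : memScrC' T ξ) :
    memScrC' T (fun t => γ t - ξ t) := by
  have := mem_add hγ (mem_smul (-1) hξ)
  simpa [sub_eq_add_neg] using this

lemma mem_mul {γ ξ : ℝ → ℝ} (hγ : memScrC' T γ) (hξ : memScrC' T ξ) :
    memScrC' T (fun t => γ t * ξ t) := by
  obtain ⟨⟨C, hC⟩, hcγ⟩ := hγ
  obtain ⟨⟨D, hD⟩, hcξ⟩ := hξ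
  refine ⟨⟨(max C 0) * max D 0, fun x hx => ?_⟩, hcγ.mul hcξ⟩
  rw [abs_mul]
  exact mul_le_mul ((hC x hx).trans (le_max_left _ _)) ((hD x hx).trans (le_max_left _ _))
    (abs_nonneg _) (le_max_right _ _)

lemma mem_min {γ ξ : ℝ → ℝ} (hγ : memScrC' T γ) (hξ : memScrC' T ξ) :
    memScrC' T (fun t => min (γ t) (ξ t)) := by
  obtain ⟨⟨C, hC⟩, hcγ⟩ := hγ
  obtain ⟨⟨D, hD⟩, hcξ⟩ := hξ
  refine ⟨⟨max C D, fun x hx => ?_⟩, fun y hy => (hcγ y hy).min (hcξ y hy)⟩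
  have h1 := hC x hx; have h2 := hD x hx
  rw [abs_le] at h1 h2 ⊢
  constructor
  · exact le_min (by linarith [le_max_left C D]) (by linarith [le_max_right C D])
  · exact min_le_of_left_le (by linarith [le_max_left C D])

lemma mem_max0 {γ : ℝ → ℝ} (hγ : memScrC' T γ) :
    memScrC' T (fun t => max (γ t) 0) := by
  obtain ⟨⟨C, hC⟩, hcγ⟩ := hγ
  refine ⟨⟨max C 0, fun x hx => ?_⟩, fun y hy => (hcγ y hy).max continuousWithinAt_const⟩
  have h1 := hC x hx
  rw [abs_le] at h1 ⊢
  constructor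
  · exact le_max_of_le_right (by linarith [le_max_right C 0])
  · exact max_le (by linarith [le_max_left C 0]) (le_max_right C 0)

/-! ### The ramp functions -/

/-- `phi x δ` is `1` on `(-∞, x]`, `0` on `[x+δ, ∞)`, linear in between. -/
noncomputable def phi (x δ : ℝ) : ℝ → ℝ := fun t => max 0 (min 1 ((x + δ - t) / δ))

lemma phi_continuous (x δ : ℝ) : Continuous (phi x δ) := by
  unfold phi
  exact continuous_const.max (continuous_const.min ((continuous_const.sub continuous_id).div_const δ))

lemma phi_mem (x δ : ℝ) : memScrC' T (phi x δ) := mem_of_continuous (phi_continuous x δ)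

lemma phi_nonneg (x δ t : ℝ) : 0 ≤ phi x δ t := le_max_left _ _

lemma phi_le_one (x δ t : ℝ) : phi x δ t ≤ 1 :=
  max_le zero_le_one (min_le_left _ _)

lemma phi_eq_one {x δ t : ℝ} (hδ : 0 < δ) (h : t ≤ x) : phi x δ t = 1 := by
  have h1 : (1:ℝ) ≤ (x + δ - t) / δ := (le_div_iff₀ hδ).2 (by linarith)
  unfold phi
  rw [min_eq_left h1]
  exact max_eq_right zero_le_one

lemma phi_eq_zero {x δ t : ℝ} (hδ : 0 < δ) (h : x + δ ≤ t) : phi x δ t = 0 := by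
  have h1 : (x + δ - t) / δ ≤ 0 := div_nonpos_of_nonpos_of_nonneg (by linarith) hδ.le
  unfold phi
  rw [max_eq_left (le_trans (min_le_right _ _) h1)]

lemma phi_mono_left {x x' : ℝ} (δ : ℝ) (hδ : 0 < δ) (h : x ≤ x') (t : ℝ) :
    phi x δ t ≤ phi x' δ t := by
  unfold phi
  have h1 : (x + δ - t) / δ ≤ (x' + δ - t) / δ := by gcongr <;> linarith
  exact max_le_max le_rfl (min_le_min le_rfl h1)

lemma phi_le_of_le {x δ x' δ' : ℝ} (hδ : 0 < δ) (hδ' : 0 < δ') (h : x + δ ≤ x') (t : ℝ) :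
    phi x δ t ≤ phi x' δ' t := by
  rcases le_or_gt t x' with ht | ht
  · rw [phi_eq_one hδ' ht]; exact phi_le_one _ _ _
  · rw [phi_eq_zero hδ (by linarith)]; exact phi_nonneg _ _ _

/-! ### Cutoff sequence -/

/-- Cutoff abscissas accumulating at `0` from the left. -/
noncomputable def cutX (T : ℝ) (k : ℕ) : ℝ := -(min T 1) / (k + 1)

/-- `cutf T k` is `1` on `(-∞, cutX T k]` and `0` on `[cutX T (k+1), ∞)`. -/
noncomputable def cutf (T : ℝ) (k : ℕ) : ℝ → ℝ :=
  phi (cutX T k) (cutX T (k+1) - cutX T k)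

set_option linter.unusedSectionVars false

variable (hT : 0 < T)
include hT

lemma minT1_pos : 0 < min T 1 := lt_min hT one_pos

lemma cutX_neg (k : ℕ) : cutX T k < 0 := by
  apply div_neg_of_neg_of_pos (by linarith [minT1_pos hT]) (by positivity)

lemma cutX_strictMono {k l : ℕ} (h : k < l) : cutX T k < cutX T l := by
  have hm := minT1_pos hT
  rw [cutX, cutX, div_lt_div_iff₀ (by positivity) (by positivity)]
  have : (k:ℝ) < l := by exact_mod_cast h
  nlinarith

lemma cutδ_pos (k : ℕ) : 0 < cutX T (k+1) - cutX T k :=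
  sub_pos.2 (cutX_strictMono hT (Nat.lt_succ_self k))

lemma cutX_tendsto : Tendsto (cutX T) atTop (𝓝 0) := by
  have h : Tendsto (fun k : ℕ => ((k:ℝ) + 1)) atTop atTop :=
    tendsto_natCast_atTop_atTop.atTop_add tendsto_const_nhds
  exact (tendsto_const_nhds (x := -(min T 1))).div_atTop h

lemma cutf_mem (k : ℕ) : memScrC' T (cutf T k) := phi_mem _ _

lemma cutf_nonneg (k : ℕ) (t : ℝ) : 0 ≤ cutf T k t := phi_nonneg _ _ _

lemma cutf_le_one (k : ℕ) (t : ℝ) : cutf T k t ≤ 1 := phi_le_one _ _ _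

lemma cutf_eq_one {k : ℕ} {t : ℝ} (h : t ≤ cutX T k) : cutf T k t = 1 :=
  phi_eq_one (cutδ_pos hT k) h

lemma cutf_eq_zero {k : ℕ} {t : ℝ} (h : cutX T (k+1) ≤ t) : cutf T k t = 0 :=
  phi_eq_zero (cutδ_pos hT k) (by linarith [h, (by ring : cutX T k + (cutX T (k+1) - cutX T k) = cutX T (k+1))])

lemma cutf_mono (k : ℕ) (t : ℝ) : cutf T k t ≤ cutf T (k+1) t := by
  apply phi_le_of_le (cutδ_pos hT k) (cutδ_pos hT (k+1)) (by linarith [cutδ_pos hT k])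

end Stmt9
namespace Stmt9

section Functional

set_option linter.unusedSectionVars false

variable {T : ℝ} (hT : 0 < T) {Λ : (ℝ → ℝ) → ℝ}
  (hadd : ∀ γ ξ, memScrC' T γ → memScrC' T ξ → Λ (γ + ξ) = Λ γ + Λ ξ)
  (hsmul : ∀ (c : ℝ) γ, memScrC' T γ → Λ (c • γ) = c * Λ γ)
  (hcont : ∀ (γk : ℕ → ℝ → ℝ) (γ : ℝ → ℝ),
      (∀ k, memScrC' T (γk k)) → memScrC' T γ →
      (∃ C, ∀ k, ∀ x ∈ Set.Ico (-T) (0:ℝ), |γk k x| ≤ C) →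
      (∀ K ⊆ Set.Ico (-T) (0:ℝ), IsCompact K → TendstoUniformlyOn γk γ atTop K) →
      Tendsto (fun k => Λ (γk k)) atTop (𝓝 (Λ γ)))

include hadd hsmul hcont hT

lemma lam_zero : Λ (fun _ => (0:ℝ)) = 0 := by
  have h := hsmul 0 (fun _ => (0:ℝ)) mem_zero
  have h2 : (0:ℝ) • (fun _ => (0:ℝ)) = (fun (_:ℝ) => (0:ℝ)) := by
    funext t; simp
  rw [h2] at h
  simpa using h

lemma lam_congr {γ ξ : ℝ → ℝ} (hγ : memScrC' T γ) (hξ : memScrC' T ξ)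
    (h : ∀ x ∈ Set.Ico (-T) (0:ℝ), γ x = ξ x) : Λ γ = Λ ξ := by
  have key := hcont (fun _ => γ) ξ (fun _ => hγ) hξ
    (by obtain ⟨C, hC⟩ := hγ.1; exact ⟨C, fun _ => hC⟩)
    (fun K hK _ => by
      rw [Metric.tendstoUniformlyOn_iff]
      intro ε hε
      filter_upwards with k x hx
      rw [h x (hK hx)]
      simpa using hε)
  exact tendsto_nhds_unique tendsto_const_nhds key

set_option maxHeartbeats 1000000 in
/-- The functional is bounded. -/
lemma lam_bounded : ∃ M : ℝ, 0 ≤ M ∧ ∀ γ C, memScrC' T γ →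
    (∀ x ∈ Set.Ico (-T) (0:ℝ), |γ x| ≤ C) → |Λ γ| ≤ M * C := by
  by_contra hM
  push_neg at hM
  have key : ∀ k : ℕ, ∃ γ C, memScrC' T γ ∧ (∀ x ∈ Set.Ico (-T) (0:ℝ), |γ x| ≤ C) ∧
      ((k:ℝ)+1) * C < |Λ γ| := by
    intro k
    obtain ⟨γ, C, h1, h2, h3⟩ := hM ((k:ℝ)+1) (by positivity)
    exact ⟨γ, C, h1, h2, h3⟩
  choose γ C hmem hbd hlt using key
  have hmemI : (-T : ℝ) ∈ Set.Ico (-T) (0:ℝ) := ⟨le_rfl, by linarith⟩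
  have hCpos : ∀ k, 0 < C k := by
    intro k
    rcases lt_or_ge 0 (C k) with h | h
    · exact h
    · exfalso
      have hzero : ∀ x ∈ Set.Ico (-T) (0:ℝ), γ k x = 0 := by
        intro x hx
        have := hbd k x hx
        have : |γ k x| ≤ 0 := this.trans h
        simpa [abs_nonpos_iff] using this
      have hc := lam_congr hT hadd hsmul hcont (hmem k) mem_zero hzero
      have hl := hlt k
      rw [hc, lam_zero hT hadd hsmul hcont] at hl
      simp only [abs_zero] at hl
      nlinarith [abs_nonneg (γ k (-T)), hbd k (-T) hmemI, (by positivity : (0:ℝ) < (k:ℝ)+1)]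
  set ξ : ℕ → ℝ → ℝ := fun k => (1/(((k:ℝ)+1) * C k)) • γ k with hξdef
  have hξmem : ∀ k, memScrC' T (ξ k) := fun k => mem_smul _ (hmem k)
  have hξbd : ∀ k, ∀ x ∈ Set.Ico (-T) (0:ℝ), |ξ k x| ≤ 1/((k:ℝ)+1) := by
    intro k x hx
    have hc : (0:ℝ) < ((k:ℝ)+1) * C k := mul_pos (by positivity) (hCpos k)
    have heq : |ξ k x| = |γ k x| / (((k:ℝ)+1) * C k) := by
      simp only [hξdef, Pi.smul_apply, smul_eq_mul, abs_mul, abs_of_pos (one_div_pos.2 hc)]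
      rw [one_div, inv_mul_eq_div]
    rw [heq, div_le_div_iff₀ hc (by positivity)]
    have h1 := hbd k x hx
    have h2 : (0:ℝ) < (k:ℝ)+1 := by positivity
    nlinarith [hCpos k]
  have hconv := hcont ξ (fun _ => 0) hξmem mem_zero
    ⟨1, fun k x hx => (hξbd k x hx).trans (by
      rw [div_le_one (by positivity)]; linarith [Nat.cast_nonneg (α := ℝ) k])⟩
    (fun K hK _ => by
      rw [Metric.tendstoUniformlyOn_iff]
      intro ε hε
      have : Tendsto (fun k : ℕ => 1/((k:ℝ)+1)) atTop (𝓝 0) := by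
        simpa using (tendsto_const_nhds (x := (1:ℝ))).div_atTop
          (tendsto_natCast_atTop_atTop.atTop_add tendsto_const_nhds)
      filter_upwards [(this.eventually (gt_mem_nhds hε))] with k hk x hx
      have := hξbd k x (hK hx)
      rw [Real.dist_eq]
      simp only [zero_sub, abs_neg]
      exact lt_of_le_of_lt this hk)
  rw [lam_zero hT hadd hsmul hcont] at hconv
  have habs : Tendsto (fun k => |Λ (ξ k)|) atTop (𝓝 0) := by
    simpa using hconv.abs
  have hone : ∀ k, 1 < |Λ (ξ k)| := by
    intro k
    have hc : (0:ℝ) < ((k:ℝ)+1) * C k := mul_pos (by positivity) (hCpos k)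
    have heq : Λ (ξ k) = (1/(((k:ℝ)+1) * C k)) * Λ (γ k) := hsmul _ (γ k) (hmem k)
    rw [heq, abs_mul, abs_of_pos (one_div_pos.2 hc), one_div, inv_mul_eq_div,
      lt_div_iff₀ hc, one_mul]
    exact hlt k
  have := habs.eventually (gt_mem_nhds one_pos)
  obtain ⟨k, hk⟩ := this.exists
  exact absurd (hone k) (not_lt.2 hk.le)

end Functional

end Stmt9
namespace Stmt9

set_option linter.unusedSectionVars false

/-- An abstract positive functional on `𝒞([-T,0[)` with no mass near `0`. -/
structure PosLin (T : ℝ) where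
  P : (ℝ → ℝ) → ℝ
  congrI : ∀ γ ξ, memScrC' T γ → memScrC' T ξ →
    (∀ x ∈ Set.Ico (-T) (0:ℝ), γ x = ξ x) → P γ = P ξ
  add : ∀ γ ξ, memScrC' T γ → memScrC' T ξ →
    (∀ x ∈ Set.Ico (-T) (0:ℝ), 0 ≤ γ x) → (∀ x ∈ Set.Ico (-T) (0:ℝ), 0 ≤ ξ x) →
    P (fun t => γ t + ξ t) = P γ + P ξ
  smul : ∀ (c : ℝ) γ, 0 ≤ c → memScrC' T γ → (∀ x ∈ Set.Ico (-T) (0:ℝ), 0 ≤ γ x) →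
    P (fun t => c * γ t) = c * P γ
  nonneg : ∀ γ, memScrC' T γ → (∀ x ∈ Set.Ico (-T) (0:ℝ), 0 ≤ γ x) → 0 ≤ P γ
  tail : Tendsto (fun k => P (fun t => 1 - cutf T k t)) atTop (𝓝 0)

namespace PosLin

variable {T : ℝ} (S : PosLin T) (hT : 0 < T)

lemma zero : S.P (fun _ => 0) = 0 := by
  have h := S.smul 0 (fun _ => 0) le_rfl mem_zero (fun x _ => le_rfl)
  simpa using h

lemma mono {γ ξ : ℝ → ℝ} (hγ : memScrC' T γ) (hξ : memScrC' T ξ)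
    (hγ0 : ∀ x ∈ Set.Ico (-T) (0:ℝ), 0 ≤ γ x)
    (hle : ∀ x ∈ Set.Ico (-T) (0:ℝ), γ x ≤ ξ x) : S.P γ ≤ S.P ξ := by
  have hd : memScrC' T (fun t => ξ t - γ t) := mem_sub hξ hγ
  have hξ0 : ∀ x ∈ Set.Ico (-T) (0:ℝ), 0 ≤ ξ x := fun x hx => (hγ0 x hx).trans (hle x hx)
  have h1 : S.P (fun t => γ t + (ξ t - γ t)) = S.P γ + S.P (fun t => ξ t - γ t) :=
    S.add _ _ hγ hd hγ0 (fun x hx => by linarith [hle x hx])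
  have h2 : S.P (fun t => γ t + (ξ t - γ t)) = S.P ξ := by
    congr 1; funext t; ring
  have h3 : 0 ≤ S.P (fun t => ξ t - γ t) :=
    S.nonneg _ hd (fun x hx => by linarith [hle x hx])
  linarith

lemma const (c : ℝ) (hc : 0 ≤ c) : S.P (fun _ => c) = c * S.P (fun _ => 1) := by
  have := S.smul c (fun _ => 1) hc (mem_const 1) (fun x _ => zero_le_one)
  simpa using this

lemma one_nonneg : 0 ≤ S.P (fun _ => 1) :=
  S.nonneg _ (mem_const 1) (fun x _ => zero_le_one)

/-- `P` is Lipschitz for the sup norm on nonnegative functions. -/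
lemma lipschitz (hT : 0 < T) {γ ξ : ℝ → ℝ} (e : ℝ) (hγ : memScrC' T γ) (hξ : memScrC' T ξ)
    (hγ0 : ∀ x ∈ Set.Ico (-T) (0:ℝ), 0 ≤ γ x)
    (hξ0 : ∀ x ∈ Set.Ico (-T) (0:ℝ), 0 ≤ ξ x)
    (he : ∀ x ∈ Set.Ico (-T) (0:ℝ), |γ x - ξ x| ≤ e) :
    |S.P γ - S.P ξ| ≤ e * S.P (fun _ => 1) := by
  have he0 : 0 ≤ e := by
    have hx : (-T) ∈ Set.Ico (-T) (0:ℝ) := ⟨le_rfl, by linarith⟩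
    exact (abs_nonneg _).trans (he _ hx)
  have key : ∀ (a b : ℝ → ℝ), memScrC' T a → memScrC' T b →
      (∀ x ∈ Set.Ico (-T) (0:ℝ), 0 ≤ a x) → (∀ x ∈ Set.Ico (-T) (0:ℝ), 0 ≤ b x) →
      (∀ x ∈ Set.Ico (-T) (0:ℝ), a x ≤ b x + e) →
      S.P a - S.P b ≤ e * S.P (fun _ => 1) := by
    intro a b ha hb ha0 hb0 hab
    have h1 : S.P a ≤ S.P (fun t => b t + e) := by
      apply S.mono ha (mem_add hb (mem_const e)) ha0 hab
    have h2 : S.P (fun t => b t + e) = S.P b + S.P (fun _ => e) :=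
      S.add _ _ hb (mem_const e) hb0 (fun x _ => he0)
    have h3 : S.P (fun _ => e) = e * S.P (fun _ => 1) := S.const e he0
    linarith
  have h1 := key γ ξ hγ hξ hγ0 hξ0 (fun x hx => by
    have := he x hx; rw [abs_le] at this; linarith [this.2])
  have h2 := key ξ γ hξ hγ hξ0 hγ0 (fun x hx => by
    have := he x hx; rw [abs_le] at this; linarith [this.1])
  rw [abs_le]; constructor <;> linarith

end PosLin

section LamP

variable {T : ℝ} (hT : 0 < T) {Λ : (ℝ → ℝ) → ℝ}
  (hadd : ∀ γ ξ, memScrC' T γ → memScrC' T ξ → Λ (γ + ξ) = Λ γ + Λ ξ)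
  (hsmul : ∀ (c : ℝ) γ, memScrC' T γ → Λ (c • γ) = c * Λ γ)
  (hcont : ∀ (γk : ℕ → ℝ → ℝ) (γ : ℝ → ℝ),
      (∀ k, memScrC' T (γk k)) → memScrC' T γ →
      (∃ C, ∀ k, ∀ x ∈ Set.Ico (-T) (0:ℝ), |γk k x| ≤ C) →
      (∀ K ⊆ Set.Ico (-T) (0:ℝ), IsCompact K → TendstoUniformlyOn γk γ atTop K) →
      Tendsto (fun k => Λ (γk k)) atTop (𝓝 (Λ γ)))

/-- The set of values `Λ ξ` for `0 ≤ ξ ≤ γ` on `[-T,0)`. -/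
def admSet (T : ℝ) (Λ : (ℝ → ℝ) → ℝ) (γ : ℝ → ℝ) : Set ℝ :=
  {r | ∃ ξ, memScrC' T ξ ∧ (∀ x ∈ Set.Ico (-T) (0:ℝ), 0 ≤ ξ x ∧ ξ x ≤ γ x) ∧ Λ ξ = r}

/-- The positive part of the functional `Λ`. -/
noncomputable def lamP (T : ℝ) (Λ : (ℝ → ℝ) → ℝ) (γ : ℝ → ℝ) : ℝ :=
  sSup (admSet T Λ γ)

include hT hadd hsmul hcont

lemma admSet_nonempty {γ : ℝ → ℝ} (hγ0 : ∀ x ∈ Set.Ico (-T) (0:ℝ), 0 ≤ γ x) :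
    (admSet T Λ γ).Nonempty :=
  ⟨0, ⟨(fun _ => 0), mem_zero, fun x hx => ⟨le_rfl, hγ0 x hx⟩, lam_zero hT hadd hsmul hcont⟩⟩

lemma admSet_bddAbove {γ : ℝ → ℝ} (hγ : memScrC' T γ) : BddAbove (admSet T Λ γ) := by
  obtain ⟨M, hM0, hM⟩ := lam_bounded hT hadd hsmul hcont
  obtain ⟨C, hC⟩ := hγ.1
  refine ⟨M * max C 0, fun r hr => ?_⟩
  obtain ⟨ξ, hξ, hbd, hr⟩ := hr
  have : |Λ ξ| ≤ M * max C 0 := by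
    apply hM ξ (max C 0) hξ
    intro x hx
    rw [abs_le]
    constructor
    · linarith [(hbd x hx).1, le_max_right C 0]
    · exact le_max_of_le_left (((hbd x hx).2.trans (le_abs_self _)).trans (hC x hx))
  rw [← hr]
  exact (le_abs_self _).trans this

lemma le_lamP {γ : ℝ → ℝ} (hγ : memScrC' T γ) (hγ0 : ∀ x ∈ Set.Ico (-T) (0:ℝ), 0 ≤ γ x) :
    Λ γ ≤ lamP T Λ γ :=
  le_csSup (admSet_bddAbove hT hadd hsmul hcont hγ)
    ⟨γ, hγ, fun x hx => ⟨hγ0 x hx, le_rfl⟩, rfl⟩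

lemma lamP_nonneg {γ : ℝ → ℝ} (hγ : memScrC' T γ) (hγ0 : ∀ x ∈ Set.Ico (-T) (0:ℝ), 0 ≤ γ x) :
    0 ≤ lamP T Λ γ :=
  le_csSup (admSet_bddAbove hT hadd hsmul hcont hγ)
    ⟨(fun _ => 0), mem_zero, fun x hx => ⟨le_rfl, hγ0 x hx⟩, lam_zero hT hadd hsmul hcont⟩

end LamP

end Stmt9
namespace Stmt9

set_option linter.unusedSectionVars false

section LamP2

variable {T : ℝ} (hT : 0 < T) {Λ : (ℝ → ℝ) → ℝ}
  (hadd : ∀ γ ξ, memScrC' T γ → memScrC' T ξ → Λ (γ + ξ) = Λ γ + Λ ξ)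
  (hsmul : ∀ (c : ℝ) γ, memScrC' T γ → Λ (c • γ) = c * Λ γ)
  (hcont : ∀ (γk : ℕ → ℝ → ℝ) (γ : ℝ → ℝ),
      (∀ k, memScrC' T (γk k)) → memScrC' T γ →
      (∃ C, ∀ k, ∀ x ∈ Set.Ico (-T) (0:ℝ), |γk k x| ≤ C) →
      (∀ K ⊆ Set.Ico (-T) (0:ℝ), IsCompact K → TendstoUniformlyOn γk γ atTop K) →
      Tendsto (fun k => Λ (γk k)) atTop (𝓝 (Λ γ)))

include hT hadd hsmul hcont

lemma lamP_congr {γ ξ : ℝ → ℝ} (hγ : memScrC' T γ) (hξ : memScrC' T ξ)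
    (h : ∀ x ∈ Set.Ico (-T) (0:ℝ), γ x = ξ x) : lamP T Λ γ = lamP T Λ ξ := by
  unfold lamP
  congr 1
  ext r
  constructor <;> rintro ⟨η, hη, hb, hr⟩
  · exact ⟨η, hη, fun x hx => ⟨(hb x hx).1, (hb x hx).2.trans_eq (h x hx)⟩, hr⟩
  · exact ⟨η, hη, fun x hx => ⟨(hb x hx).1, (hb x hx).2.trans_eq (h x hx).symm⟩, hr⟩

lemma lamP_add {γ ξ : ℝ → ℝ} (hγ : memScrC' T γ) (hξ : memScrC' T ξ)
    (hγ0 : ∀ x ∈ Set.Ico (-T) (0:ℝ), 0 ≤ γ x) (hξ0 : ∀ x ∈ Set.Ico (-T) (0:ℝ), 0 ≤ ξ x) :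
    lamP T Λ (fun t => γ t + ξ t) = lamP T Λ γ + lamP T Λ ξ := by
  have hsum : memScrC' T (fun t => γ t + ξ t) := mem_add hγ hξ
  have hsum0 : ∀ x ∈ Set.Ico (-T) (0:ℝ), 0 ≤ γ x + ξ x :=
    fun x hx => add_nonneg (hγ0 x hx) (hξ0 x hx)
  apply le_antisymm
  · -- split an admissible element
    apply csSup_le (admSet_nonempty hT hadd hsmul hcont hsum0)
    rintro r ⟨η, hη, hb, hr⟩
    set η₁ : ℝ → ℝ := fun t => min (η t) (γ t) with hη₁def
    set η₂ : ℝ → ℝ := fun t => η t - min (η t) (γ t) with hη₂def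
    have hη₁ : memScrC' T η₁ := mem_min hη hγ
    have hη₂ : memScrC' T η₂ := mem_sub hη hη₁
    have hb₁ : ∀ x ∈ Set.Ico (-T) (0:ℝ), 0 ≤ η₁ x ∧ η₁ x ≤ γ x := by
      intro x hx
      exact ⟨le_min (hb x hx).1 (hγ0 x hx), min_le_right _ _⟩
    have hb₂ : ∀ x ∈ Set.Ico (-T) (0:ℝ), 0 ≤ η₂ x ∧ η₂ x ≤ ξ x := by
      intro x hx
      constructor
      · simp only [hη₂def, sub_nonneg]; exact min_le_left _ _
      · simp only [hη₂def]
        have h2 : η x ≤ γ x + ξ x := (hb x hx).2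
        rcases le_total (η x) (γ x) with h | h
        · rw [min_eq_left h]; simpa using hξ0 x hx
        · rw [min_eq_right h]; linarith
    have hsplit : Λ η = Λ η₁ + Λ η₂ := by
      have : η = η₁ + η₂ := by funext t; simp [hη₁def, hη₂def]
      rw [show Λ η = Λ (η₁ + η₂) by rw [← this]]
      exact hadd _ _ hη₁ hη₂
    rw [← hr, hsplit]
    exact add_le_add
      (le_csSup (admSet_bddAbove hT hadd hsmul hcont hγ) ⟨η₁, hη₁, hb₁, rfl⟩)
      (le_csSup (admSet_bddAbove hT hadd hsmul hcont hξ) ⟨η₂, hη₂, hb₂, rfl⟩)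
  · -- sum of two admissibles is admissible
    have key : ∀ r ∈ admSet T Λ γ, ∀ s ∈ admSet T Λ ξ,
        r + s ≤ lamP T Λ (fun t => γ t + ξ t) := by
      rintro r ⟨η₁, hη₁, hb₁, hr⟩ s ⟨η₂, hη₂, hb₂, hs⟩
      rw [← hr, ← hs, ← hadd _ _ hη₁ hη₂]
      apply le_csSup (admSet_bddAbove hT hadd hsmul hcont hsum)
      exact ⟨η₁ + η₂, mem_add hη₁ hη₂, fun x hx =>
        ⟨add_nonneg (hb₁ x hx).1 (hb₂ x hx).1, add_le_add (hb₁ x hx).2 (hb₂ x hx).2⟩, rfl⟩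
    have h1 : lamP T Λ γ ≤ lamP T Λ (fun t => γ t + ξ t) - lamP T Λ ξ := by
      apply csSup_le (admSet_nonempty hT hadd hsmul hcont hγ0)
      intro r hr
      rw [le_sub_iff_add_le, add_comm, ← le_sub_iff_add_le]
      apply csSup_le (admSet_nonempty hT hadd hsmul hcont hξ0)
      intro s hs
      rw [le_sub_iff_add_le, add_comm]
      exact key r hr s hs
    linarith

lemma lamP_smul (c : ℝ) {γ : ℝ → ℝ} (hc : 0 ≤ c) (hγ : memScrC' T γ)
    (hγ0 : ∀ x ∈ Set.Ico (-T) (0:ℝ), 0 ≤ γ x) :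
    lamP T Λ (fun t => c * γ t) = c * lamP T Λ γ := by
  rcases eq_or_lt_of_le hc with h | h
  · subst h
    have h0 : ∀ x ∈ Set.Ico (-T) (0:ℝ), (fun t => (0:ℝ) * γ t) x = (fun _ => (0:ℝ)) x := by
      intro x _; simp
    rw [lamP_congr hT hadd hsmul hcont (mem_smul 0 hγ) mem_zero h0, zero_mul]
    apply le_antisymm
    · apply csSup_le (admSet_nonempty hT hadd hsmul hcont (fun x _ => le_rfl))
      rintro r ⟨η, hη, hb, hr⟩
      have hz : ∀ x ∈ Set.Ico (-T) (0:ℝ), η x = (fun _ => (0:ℝ)) x :=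
        fun x hx => le_antisymm (hb x hx).2 (hb x hx).1
      rw [← hr, lam_congr hT hadd hsmul hcont hη mem_zero hz,
        lam_zero hT hadd hsmul hcont]
    · exact lamP_nonneg hT hadd hsmul hcont mem_zero (fun x _ => le_rfl)
  · have hmc : memScrC' T (fun t => c * γ t) := mem_smul c hγ
    have hmc0 : ∀ x ∈ Set.Ico (-T) (0:ℝ), 0 ≤ c * γ x :=
      fun x hx => mul_nonneg hc (hγ0 x hx)
    apply le_antisymm
    · apply csSup_le (admSet_nonempty hT hadd hsmul hcont hmc0)
      rintro r ⟨η, hη, hb, hr⟩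
      have key : Λ η = c * Λ (fun t => (1/c) * η t) := by
        have h3 := hsmul c (fun t => (1/c) * η t) (mem_smul _ hη)
        have hfun : (c • fun t => (1/c) * η t) = η := by
          funext t; simp only [Pi.smul_apply, smul_eq_mul]
          field_simp
        rw [hfun] at h3
        exact h3
      rw [← hr, key]
      have hadm : Λ (fun t => (1/c) * η t) ≤ lamP T Λ γ := by
        apply le_csSup (admSet_bddAbove hT hadd hsmul hcont hγ)
        refine ⟨_, mem_smul (1/c) hη, fun x hx => ?_, rfl⟩
        constructor
        · exact mul_nonneg (by positivity) (hb x hx).1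
        · have h2 : η x ≤ c * γ x := (hb x hx).2
          calc 1/c * η x ≤ 1/c * (c * γ x) :=
                mul_le_mul_of_nonneg_left h2 (by positivity)
            _ = γ x := by field_simp
      exact mul_le_mul_of_nonneg_left hadm hc
    · have h4 : lamP T Λ γ ≤ lamP T Λ (fun t => c * γ t) / c := by
        apply csSup_le (admSet_nonempty hT hadd hsmul hcont hγ0)
        rintro r ⟨η, hη, hb, hr⟩
        rw [le_div_iff₀ h, ← hr, mul_comm]
        have hsΛ : c * Λ η = Λ (fun t => c * η t) := (hsmul c η hη).symm
        rw [hsΛ]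
        apply le_csSup (admSet_bddAbove hT hadd hsmul hcont hmc)
        refine ⟨_, mem_smul c hη, fun x hx => ⟨mul_nonneg hc (hb x hx).1, ?_⟩, rfl⟩
        exact mul_le_mul_of_nonneg_left (hb x hx).2 hc
      calc c * lamP T Λ γ ≤ c * (lamP T Λ (fun t => c * γ t) / c) :=
            mul_le_mul_of_nonneg_left h4 hc
        _ = lamP T Λ (fun t => c * γ t) := by field_simp

lemma lamP_tail : Tendsto (fun k => lamP T Λ (fun t => 1 - cutf T k t)) atTop (𝓝 0) := by
  have hmem : ∀ k, memScrC' T (fun t => 1 - cutf T k t) :=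
    fun k => mem_sub (mem_const 1) (cutf_mem hT k)
  have h0 : ∀ k, ∀ x ∈ Set.Ico (-T) (0:ℝ), 0 ≤ 1 - cutf T k x :=
    fun k x _ => by linarith [cutf_le_one hT k x]
  -- antitone sequence, bounded below by 0
  have hanti : Antitone (fun k => lamP T Λ (fun t => 1 - cutf T k t)) := by
    apply antitone_nat_of_succ_le
    intro k
    apply csSup_le (admSet_nonempty hT hadd hsmul hcont (h0 (k+1)))
    rintro r ⟨η, hη, hb, hr⟩
    rw [← hr]
    apply le_csSup (admSet_bddAbove hT hadd hsmul hcont (hmem k))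
    refine ⟨η, hη, fun x hx => ⟨(hb x hx).1, ?_⟩, rfl⟩
    show η x ≤ 1 - cutf T k x
    have h2 : η x ≤ 1 - cutf T (k+1) x := (hb x hx).2
    have := cutf_mono hT k x
    linarith
  have hbdd : ∀ k, 0 ≤ lamP T Λ (fun t => 1 - cutf T k t) :=
    fun k => lamP_nonneg hT hadd hsmul hcont (hmem k) (h0 k)
  -- converges to the infimum
  have hconv := tendsto_atTop_ciInf hanti ⟨0, fun a ⟨k, hk⟩ => hk ▸ hbdd k⟩
  set L := ⨅ k, lamP T Λ (fun t => 1 - cutf T k t) with hL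
  have hL0 : 0 ≤ L := le_ciInf hbdd
  rcases eq_or_lt_of_le hL0 with h | h
  · rwa [← h] at hconv
  · exfalso
    have hLle : ∀ k, L ≤ lamP T Λ (fun t => 1 - cutf T k t) :=
      fun k => ciInf_le ⟨0, fun a ⟨k, hk⟩ => hk ▸ hbdd k⟩ k
    -- choose admissible functions with value > L/2
    have hch : ∀ k, ∃ η, memScrC' T η ∧
        (∀ x ∈ Set.Ico (-T) (0:ℝ), 0 ≤ η x ∧ η x ≤ 1 - cutf T k x) ∧ L/2 < Λ η := by
      intro k
      have : L/2 < lamP T Λ (fun t => 1 - cutf T k t) := lt_of_lt_of_le (by linarith) (hLle k)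
      obtain ⟨r, hr, hlt⟩ := exists_lt_of_lt_csSup (admSet_nonempty hT hadd hsmul hcont (h0 k)) this
      obtain ⟨η, hη, hb, hrn⟩ := hr
      exact ⟨η, hη, hb, hrn ▸ hlt⟩
    choose η hηmem hηb hηlt using hch
    have hconv2 := hcont η (fun _ => 0) hηmem mem_zero
      ⟨1, fun k x hx => by
        have h1 := (hηb k x hx).1
        have h2 := (hηb k x hx).2
        have := cutf_nonneg hT k x
        rw [abs_le]; constructor <;> linarith⟩
      (fun K hK hKc => by
        rw [Metric.tendstoUniformlyOn_iff]
        intro ε hε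
        rcases K.eq_empty_or_nonempty with hKe | hKe
        · filter_upwards with k x hx
          rw [hKe] at hx
          exact absurd hx (notMem_empty x)
        · obtain ⟨m, hmK, hm⟩ := hKc.exists_isGreatest hKe
          have hm0 : m < 0 := (hK hmK).2
          have := (cutX_tendsto hT).eventually (eventually_gt_nhds hm0)
          filter_upwards [this] with k hk x hx
          have hxm : x ≤ m := hm hx
          have : cutf T k x = 1 := cutf_eq_one hT (by linarith)
          have h2 := (hηb k x (hK hx)).2
          have h1 := (hηb k x (hK hx)).1
          rw [Real.dist_eq]
          have : η k x = 0 := le_antisymm (by rw [this] at h2; linarith) h1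
          rw [this]
          simpa using hε)
    rw [lam_zero hT hadd hsmul hcont] at hconv2
    have := ge_of_tendsto hconv2 (Eventually.of_forall (fun k => (hηlt k).le))
    linarith

/-- The positive part of `Λ` as an abstract positive functional. -/
noncomputable def lamPosLin : PosLin T where
  P := lamP T Λ
  congrI := fun γ ξ hγ hξ h => lamP_congr hT hadd hsmul hcont hγ hξ h
  add := fun γ ξ hγ hξ hγ0 hξ0 => lamP_add hT hadd hsmul hcont hγ hξ hγ0 hξ0
  smul := fun c γ hc hγ hγ0 => lamP_smul hT hadd hsmul hcont c hc hγ hγ0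
  nonneg := fun γ hγ hγ0 => lamP_nonneg hT hadd hsmul hcont hγ hγ0
  tail := lamP_tail hT hadd hsmul hcont

/-- The negative part of `Λ` as an abstract positive functional. -/
noncomputable def lamNegLin : PosLin T where
  P := fun γ => lamP T Λ γ - Λ γ
  congrI := fun γ ξ hγ hξ h => by
    show lamP T Λ γ - Λ γ = lamP T Λ ξ - Λ ξ
    rw [lamP_congr hT hadd hsmul hcont hγ hξ h, lam_congr hT hadd hsmul hcont hγ hξ h]
  add := fun γ ξ hγ hξ hγ0 hξ0 => by
    show lamP T Λ (fun t => γ t + ξ t) - Λ (fun t => γ t + ξ t)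
      = (lamP T Λ γ - Λ γ) + (lamP T Λ ξ - Λ ξ)
    have h1 : Λ (fun t => γ t + ξ t) = Λ γ + Λ ξ := hadd γ ξ hγ hξ
    rw [lamP_add hT hadd hsmul hcont hγ hξ hγ0 hξ0, h1]; ring
  smul := fun c γ hc hγ hγ0 => by
    show lamP T Λ (fun t => c * γ t) - Λ (fun t => c * γ t) = c * (lamP T Λ γ - Λ γ)
    have h1 : Λ (fun t => c * γ t) = c * Λ γ := hsmul c γ hγ
    rw [lamP_smul hT hadd hsmul hcont c hc hγ hγ0, h1]; ring
  nonneg := fun γ hγ hγ0 => by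
    show 0 ≤ lamP T Λ γ - Λ γ
    have := le_lamP hT hadd hsmul hcont hγ hγ0
    linarith
  tail := by
    have h1 := lamP_tail hT hadd hsmul hcont
    have h2 : Tendsto (fun k => Λ (fun t => 1 - cutf T k t)) atTop (𝓝 0) := by
      have := hcont (fun k => fun t => 1 - cutf T k t) (fun _ => 0)
        (fun k => mem_sub (mem_const 1) (cutf_mem hT k)) mem_zero
        ⟨1, fun k x hx => by
          show |1 - cutf T k x| ≤ 1
          have h1 := cutf_le_one hT k x
          have h2 := cutf_nonneg hT k x
          rw [abs_le]; constructor <;> linarith⟩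
        (fun K hK hKc => by
          rw [Metric.tendstoUniformlyOn_iff]
          intro ε hε
          rcases K.eq_empty_or_nonempty with hKe | hKe
          · filter_upwards with k x hx
            rw [hKe] at hx
            exact absurd hx (notMem_empty x)
          · obtain ⟨m, hmK, hm⟩ := hKc.exists_isGreatest hKe
            have hm0 : m < 0 := (hK hmK).2
            have := (cutX_tendsto hT).eventually (eventually_gt_nhds hm0)
            filter_upwards [this] with k hk x hx
            have hc1 : cutf T k x = 1 := cutf_eq_one hT (by linarith [hm hx])
            rw [Real.dist_eq, hc1]
            simpa using hε)
      rwa [lam_zero hT hadd hsmul hcont] at this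
    show Tendsto (fun k => lamP T Λ (fun t => 1 - cutf T k t)
      - Λ (fun t => 1 - cutf T k t)) atTop (𝓝 0)
    simpa using h1.sub h2

lemma lam_eq_pos_sub_neg {γ : ℝ → ℝ} :
    Λ γ = (lamPosLin hT hadd hsmul hcont).P γ - (lamNegLin hT hadd hsmul hcont).P γ := by
  simp only [lamPosLin, lamNegLin]
  ring

end LamP2

end Stmt9
namespace Stmt9

namespace PosLin

set_option linter.unusedSectionVars false

variable {T : ℝ} (S : PosLin T) (hT : 0 < T)

/-- `G x δ = P (phi x δ)`. -/
noncomputable def Gf (x δ : ℝ) : ℝ := S.P (phi x δ)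

/-- The pre-distribution function. -/
noncomputable def F0 (x : ℝ) : ℝ := sInf (Gf S x '' Ioi 0)

lemma Gf_nonneg (x : ℝ) {δ : ℝ} : 0 ≤ Gf S x δ :=
  S.nonneg _ (phi_mem x δ) (fun t _ => phi_nonneg x δ t)

lemma Gf_le_P1 (x : ℝ) {δ : ℝ} : Gf S x δ ≤ S.P (fun _ => 1) :=
  S.mono (phi_mem x δ) (mem_const 1) (fun t _ => phi_nonneg x δ t)
    (fun t _ => phi_le_one x δ t)

lemma F0_nonneg (x : ℝ) : 0 ≤ F0 S x :=
  le_csInf ⟨Gf S x 1, ⟨1, mem_Ioi.2 one_pos, rfl⟩⟩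
    (by rintro b ⟨δ, hδ, rfl⟩; exact Gf_nonneg S x)

lemma F0_bddBelow (x : ℝ) : BddBelow (Gf S x '' Ioi 0) :=
  ⟨0, by rintro b ⟨δ, hδ, rfl⟩; exact Gf_nonneg S x⟩

lemma F0_le_Gf (x : ℝ) {δ : ℝ} (hδ : 0 < δ) : F0 S x ≤ Gf S x δ :=
  csInf_le (F0_bddBelow S x) ⟨δ, mem_Ioi.2 hδ, rfl⟩

lemma le_F0 (x : ℝ) {c : ℝ} (h : ∀ δ, 0 < δ → c ≤ Gf S x δ) : c ≤ F0 S x :=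
  le_csInf ⟨Gf S x 1, ⟨1, mem_Ioi.2 one_pos, rfl⟩⟩
    (by rintro b ⟨δ, hδ, rfl⟩; exact h δ (mem_Ioi.1 hδ))

lemma F0_mono : Monotone (F0 S) := by
  intro x y hxy
  apply le_F0
  intro δ hδ
  calc F0 S x ≤ Gf S x δ := F0_le_Gf S x hδ
    _ ≤ Gf S y δ := S.mono (phi_mem x δ) (phi_mem y δ)
        (fun t _ => phi_nonneg x δ t) (fun t _ => phi_mono_left δ hδ hxy t)

lemma F0_le_P1 (x : ℝ) : F0 S x ≤ S.P (fun _ => 1) :=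
  (F0_le_Gf S x one_pos).trans (Gf_le_P1 S x)

/-- Key upper bound: `Gf x δ ≤ F0 (x + δ)`. -/
lemma Gf_le_F0 (x : ℝ) {δ : ℝ} (hδ : 0 < δ) : Gf S x δ ≤ F0 S (x + δ) := by
  apply le_F0
  intro δ' hδ'
  exact S.mono (phi_mem x δ) (phi_mem (x+δ) δ') (fun t _ => phi_nonneg x δ t)
    (fun t _ => phi_le_of_le hδ hδ' le_rfl t)

lemma F0_eq_zero {x : ℝ} (h : x < -T) : F0 S x = 0 := by
  apply le_antisymm _ (F0_nonneg S x)
  have hδ : (0:ℝ) < -T - x := by linarith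
  have : Gf S x (-T - x) = 0 := by
    have hc : ∀ t ∈ Set.Ico (-T) (0:ℝ), phi x (-T - x) t = (fun _ => (0:ℝ)) t := by
      intro t ht
      exact phi_eq_zero hδ (by linarith [ht.1])
    rw [Gf, S.congrI _ _ (phi_mem _ _) mem_zero hc, S.zero]
  calc F0 S x ≤ Gf S x (-T - x) := F0_le_Gf S x hδ
    _ = 0 := this

lemma F0_eq_P1 {x : ℝ} (h : 0 ≤ x) : F0 S x = S.P (fun _ => 1) := by
  apply le_antisymm (F0_le_P1 S x)
  apply le_F0
  intro δ hδ
  have hc : ∀ t ∈ Set.Ico (-T) (0:ℝ), phi x δ t = (fun _ => (1:ℝ)) t := by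
    intro t ht
    exact phi_eq_one hδ (by linarith [ht.2])
  rw [Gf, S.congrI _ _ (phi_mem _ _) (mem_const 1) hc]

/-- The lower tail estimate near `0`. -/
lemma F0_lower_tail (hT : 0 < T) (k : ℕ) {y : ℝ} (h1 : cutX T (k+1) ≤ y) :
    S.P (fun _ => 1) - S.P (fun t => 1 - cutf T k t) ≤ F0 S y := by
  apply le_F0
  intro δ hδ
  have hsplit : S.P (fun _ => (1:ℝ)) = S.P (phi y δ) + S.P (fun t => 1 - phi y δ t) := by
    have hadd := S.add (phi y δ) (fun t => 1 - phi y δ t) (phi_mem _ _)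
      (mem_sub (mem_const 1) (phi_mem _ _))
      (fun t _ => phi_nonneg _ _ _)
      (fun t _ => by show (0:ℝ) ≤ 1 - phi y δ t; linarith [phi_le_one y δ t])
    rw [← hadd]
    apply S.congrI _ _ (mem_const 1) (mem_add (phi_mem _ _) (mem_sub (mem_const 1) (phi_mem _ _)))
    intro t _
    show (1:ℝ) = phi y δ t + (1 - phi y δ t)
    ring
  have hmono : S.P (fun t => 1 - phi y δ t) ≤ S.P (fun t => 1 - cutf T k t) := by
    apply S.mono (mem_sub (mem_const 1) (phi_mem _ _)) (mem_sub (mem_const 1) (cutf_mem hT k))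
      (fun t _ => by show (0:ℝ) ≤ 1 - phi y δ t; linarith [phi_le_one y δ t])
    intro t _
    show 1 - phi y δ t ≤ 1 - cutf T k t
    have : cutf T k t ≤ phi y δ t :=
      phi_le_of_le (cutδ_pos hT k) hδ (by
        have : cutX T k + (cutX T (k+1) - cutX T k) = cutX T (k+1) := by ring
        linarith) t
    linarith
  rw [Gf]
  linarith

/-- The distribution function: right limit of `F0`. -/
noncomputable def F : StieltjesFunction ℝ := (F0_mono S).stieltjesFunction

lemma F_eq (x : ℝ) : F S x = Function.rightLim (F0 S) x := rfl

lemma F0_le_F (x : ℝ) : F0 S x ≤ F S x := (F0_mono S).le_rightLim le_rfl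

lemma F_le_F0 {x y : ℝ} (h : x < y) : F S x ≤ F0 S y := (F0_mono S).rightLim_le h

lemma F_nonneg (x : ℝ) : 0 ≤ F S x := (F0_nonneg S x).trans (F0_le_F S x)

lemma F_le_P1 (x : ℝ) : F S x ≤ S.P (fun _ => 1) :=
  (F_le_F0 S (lt_add_one x)).trans (F0_le_P1 S _)

lemma F_eq_zero {x : ℝ} (h : x < -T) : F S x = 0 := by
  obtain ⟨y, hxy, hy⟩ := exists_between h
  exact le_antisymm ((F_le_F0 S hxy).trans_eq (F0_eq_zero S hy)) (F_nonneg S x)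

lemma F_eq_P1 {x : ℝ} (h : 0 ≤ x) : F S x = S.P (fun _ => 1) := by
  refine le_antisymm (F_le_P1 S x) ?_
  rw [← F0_eq_P1 S h]
  exact F0_le_F S x

lemma F_tendsto_atBot : Tendsto (F S) atBot (𝓝 0) := by
  apply Tendsto.congr' _ (tendsto_const_nhds (x := (0:ℝ)))
  filter_upwards [eventually_lt_atBot (-T)] with x hx
  exact (F_eq_zero S hx).symm

lemma F_tendsto_atTop : Tendsto (F S) atTop (𝓝 (S.P (fun _ => 1))) := by
  apply Tendsto.congr' _ (tendsto_const_nhds (x := S.P (fun _ => 1)))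
  filter_upwards [eventually_ge_atTop (0:ℝ)] with x hx
  exact (F_eq_P1 S hx).symm

/-- The measure associated with the positive functional. -/
noncomputable def nu : Measure ℝ := (F S).measure

instance : IsFiniteMeasure (nu S) := by
  constructor
  rw [nu, (F S).measure_univ (F_tendsto_atBot S) (F_tendsto_atTop S)]
  exact ENNReal.ofReal_lt_top

lemma nu_Iic (x : ℝ) : nu S (Iic x) = ENNReal.ofReal (F S x) := by
  rw [nu, (F S).measure_Iic (F_tendsto_atBot S)]
  simp

lemma nu_univ : nu S univ = ENNReal.ofReal (S.P (fun _ => 1)) := by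
  rw [nu]
  simpa using (F S).measure_univ (F_tendsto_atBot S) (F_tendsto_atTop S)

lemma nu_Iio_neg_T : nu S (Iio (-T)) = 0 := by
  have hcover : Iio (-T) ⊆ ⋃ n : ℕ, Iic (-T - 1/((n:ℝ)+1)) := by
    intro t ht
    rw [mem_Iio] at ht
    have : Tendsto (fun n : ℕ => -T - 1/((n:ℝ)+1)) atTop (𝓝 (-T - 0)) := by
      apply Tendsto.const_sub
      simpa using (tendsto_const_nhds (x := (1:ℝ))).div_atTop
        (tendsto_natCast_atTop_atTop.atTop_add tendsto_const_nhds)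
    rw [sub_zero] at this
    obtain ⟨n, hn⟩ := (this.eventually (eventually_gt_nhds ht)).exists
    exact mem_iUnion.2 ⟨n, mem_Iic.2 hn.le⟩
  apply measure_mono_null hcover
  apply measure_iUnion_null
  intro n
  have hpos : (0:ℝ) < 1/((n:ℝ)+1) := by positivity
  rw [nu_Iic, F_eq_zero S (by linarith)]
  simp

include hT

lemma F_tendsto_P1 : Tendsto (fun k => F S (cutX T (k+1))) atTop (𝓝 (S.P (fun _ => 1))) := by
  have hlow : ∀ k, S.P (fun _ => 1) - S.P (fun t => 1 - cutf T k t) ≤ F S (cutX T (k+1)) :=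
    fun k => (F0_lower_tail S hT k le_rfl).trans (F0_le_F S _)
  have hup : ∀ k, F S (cutX T (k+1)) ≤ S.P (fun _ => 1) := fun k => F_le_P1 S _
  have htail : Tendsto (fun k => S.P (fun _ => (1:ℝ)) - S.P (fun t => 1 - cutf T k t))
      atTop (𝓝 (S.P (fun _ => 1))) := by
    simpa using (tendsto_const_nhds (x := S.P (fun _ => (1:ℝ)))).sub S.tail
  exact tendsto_of_tendsto_of_tendsto_of_le_of_le htail tendsto_const_nhds hlow hup

lemma nu_Iio_zero : nu S (Iio 0) = ENNReal.ofReal (S.P (fun _ => 1)) := by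
  have hcover : Iio (0:ℝ) = ⋃ k : ℕ, Iic (cutX T (k+1)) := by
    ext t
    simp only [mem_Iio, mem_iUnion, mem_Iic]
    constructor
    · intro ht
      obtain ⟨k, hk⟩ := ((cutX_tendsto hT).eventually (eventually_gt_nhds ht)).exists
      rcases k with _ | k
      · exact ⟨0, by
          have := cutX_strictMono hT (Nat.zero_lt_succ 0)
          linarith⟩
      · exact ⟨k, hk.le⟩
    · rintro ⟨k, hk⟩
      exact lt_of_le_of_lt hk (cutX_neg hT (k+1))
  rw [hcover]
  have hmono : Monotone (fun k : ℕ => Iic (cutX T (k+1))) := by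
    intro k l hkl
    apply Iic_subset_Iic.2
    rcases eq_or_lt_of_le hkl with h | h
    · rw [h]
    · exact (cutX_strictMono hT (by omega)).le
  have := tendsto_measure_iUnion_atTop (μ := nu S) hmono
  have hval : Tendsto (fun k : ℕ => nu S (Iic (cutX T (k+1)))) atTop
      (𝓝 (ENNReal.ofReal (S.P (fun _ => 1)))) := by
    simp only [nu_Iic]
    exact (ENNReal.continuous_ofReal.tendsto _).comp (F_tendsto_P1 S hT)
  exact tendsto_nhds_unique this hval

lemma nu_Ici_zero : nu S (Ici (0:ℝ)) = 0 := by
  have h1 : nu S (Iio 0) + nu S (Ici 0) = nu S univ := by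
    rw [← measure_add_measure_compl (measurableSet_Iio (a := (0:ℝ)))]
    congr 1
    rw [compl_Iio]
  rw [nu_Iio_zero S hT, nu_univ] at h1
  have hne : ENNReal.ofReal (S.P (fun _ => 1)) ≠ ⊤ := ENNReal.ofReal_ne_top
  nth_rewrite 2 [← add_zero (ENNReal.ofReal (S.P (fun _ => 1)))] at h1
  exact (ENNReal.add_right_inj hne).1 h1

lemma nu_compl_I : nu S (Set.Ico (-T) (0:ℝ))ᶜ = 0 := by
  have hsub : (Set.Ico (-T) (0:ℝ))ᶜ ⊆ Iio (-T) ∪ Ici 0 := by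
    intro t ht
    simp only [mem_compl_iff, mem_Ico, not_and, not_lt] at ht
    rcases lt_or_ge t (-T) with h | h
    · exact Or.inl h
    · exact Or.inr (ht h)
  apply measure_mono_null hsub
  exact measure_union_null (nu_Iio_neg_T S) (nu_Ici_zero S hT)

end PosLin

end Stmt9
namespace Stmt9

set_option linter.unusedSectionVars false

lemma mem_finsum {T : ℝ} (n : ℕ) (g : ℕ → ℝ → ℝ) (h : ∀ i, memScrC' T (g i)) :
    memScrC' T (fun t => ∑ i ∈ Finset.range n, g i t) := by
  induction n with
  | zero => simpa using (mem_zero : memScrC' T _)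
  | succ k ih =>
      have := mem_add ih (h k)
      simpa [Finset.sum_range_succ] using this

lemma abel_sum (N : ℕ) (d e : ℕ → ℝ) :
    ∑ i ∈ Finset.range (N+1), d i * (e (i+1) - e i)
      = d N * e (N+1) - d 0 * e 0 + ∑ i ∈ Finset.range N, (d i - d (i+1)) * e (i+1) := by
  induction N with
  | zero => simp; ring
  | succ n ih => rw [Finset.sum_range_succ, ih, Finset.sum_range_succ]; ring

lemma tel2 (n : ℕ) (w : ℕ → ℝ) :
    ∑ i ∈ Finset.range n, (w (i+2) - w i) = w (n+1) + w n - w 1 - w 0 := by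
  induction n with
  | zero => simp
  | succ k ih => rw [Finset.sum_range_succ, ih]; ring

lemma integrable_of_bounded_continuous {f : ℝ → ℝ} (hf : Continuous f) (C : ℝ)
    (hC : ∀ t, |f t| ≤ C) (m : Measure ℝ) [IsFiniteMeasure m] : Integrable f m :=
  ⟨hf.aestronglyMeasurable, HasFiniteIntegral.of_bounded (C := C)
    (ae_of_all _ (fun t => by simpa [Real.norm_eq_abs] using hC t))⟩

lemma integrableOn_I {T : ℝ} {γ : ℝ → ℝ} (m : Measure ℝ) [IsFiniteMeasure m]
    (hγ : memScrC' T γ) : IntegrableOn γ (Set.Ico (-T) (0:ℝ)) m := by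
  obtain ⟨C, hC⟩ := hγ.1
  constructor
  · exact hγ.2.aestronglyMeasurable measurableSet_Ico
  · exact HasFiniteIntegral.of_bounded (C := C)
      ((ae_restrict_iff' measurableSet_Ico).2 (ae_of_all _ (fun x hx => by
        simpa [Real.norm_eq_abs] using hC x hx)))

namespace PosLin

variable {T : ℝ} (S : PosLin T) (hT : 0 < T)

lemma P_finsum (n : ℕ) (c : ℕ → ℝ) (g : ℕ → ℝ → ℝ)
    (hg : ∀ i, memScrC' T (g i)) (hg0 : ∀ i, ∀ x ∈ Set.Ico (-T) (0:ℝ), 0 ≤ g i x)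
    (hc : ∀ i, 0 ≤ c i) :
    S.P (fun t => ∑ i ∈ Finset.range n, c i * g i t)
      = ∑ i ∈ Finset.range n, c i * S.P (g i) := by
  induction n with
  | zero => simpa using S.zero
  | succ k ih =>
      have hmem : memScrC' T (fun t => ∑ i ∈ Finset.range k, c i * g i t) :=
        mem_finsum k _ (fun i => mem_smul (c i) (hg i))
      have hmem0 : ∀ x ∈ Set.Ico (-T) (0:ℝ), 0 ≤ ∑ i ∈ Finset.range k, c i * g i x :=
        fun x hx => Finset.sum_nonneg (fun i _ => mul_nonneg (hc i) (hg0 i x hx))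
      have hsplit : S.P (fun t => ∑ i ∈ Finset.range (k+1), c i * g i t)
          = S.P (fun t => ∑ i ∈ Finset.range k, c i * g i t)
            + S.P (fun t => c k * g k t) := by
        have := S.add (fun t => ∑ i ∈ Finset.range k, c i * g i t) (fun t => c k * g k t)
          hmem (mem_smul (c k) (hg k)) hmem0
          (fun x hx => mul_nonneg (hc k) (hg0 k x hx))
        rw [← this]
        apply S.congrI _ _ (mem_finsum (k+1) _ (fun i => mem_smul (c i) (hg i)))
          (mem_add hmem (mem_smul (c k) (hg k)))
        intro x _
        show ∑ i ∈ Finset.range (k+1), c i * g i x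
          = (∑ i ∈ Finset.range k, c i * g i x) + c k * g k x
        rw [Finset.sum_range_succ]
      rw [hsplit, ih, S.smul (c k) (g k) (hc k) (hg k) (hg0 k), Finset.sum_range_succ]

include hT in
lemma nu_restrict_I : (nu S).restrict (Set.Ico (-T) (0:ℝ)) = nu S := by
  apply Measure.restrict_eq_self_of_ae_mem
  rw [ae_iff]
  have : {x : ℝ | ¬ x ∈ Set.Ico (-T) (0:ℝ)} = (Set.Ico (-T) (0:ℝ))ᶜ := rfl
  rw [this]
  exact nu_compl_I S hT

lemma nuI_toReal (x : ℝ) : (nu S (Iic x)).toReal = F S x := by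
  rw [nu_Iic, ENNReal.toReal_ofReal (F_nonneg S x)]

lemma integral_phi_le {x δ : ℝ} (hδ : 0 < δ) :
    ∫ t, phi x δ t ∂(nu S) ≤ F S (x + δ) := by
  rw [← nuI_toReal S (x + δ)]
  have hind : ∀ t, phi x δ t ≤ (Iic (x+δ)).indicator (fun _ => (1:ℝ)) t := by
    intro t
    rcases le_or_gt t (x+δ) with h | h
    · rw [indicator_of_mem (mem_Iic.2 h)]; exact phi_le_one _ _ _
    · rw [indicator_of_notMem (by simpa using h), phi_eq_zero hδ h.le]
  calc ∫ t, phi x δ t ∂(nu S) ≤ ∫ t, (Iic (x+δ)).indicator (fun _ => (1:ℝ)) t ∂(nu S) := by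
        apply integral_mono
        · exact integrable_of_bounded_continuous (phi_continuous x δ) 1
            (fun t => abs_le.2 ⟨by linarith [phi_nonneg x δ t], phi_le_one x δ t⟩) _
        · exact (integrable_indicator_iff measurableSet_Iic).2
            (integrableOn_const (measure_ne_top _ _))
        · exact hind
    _ = (nu S (Iic (x+δ))).toReal := by
        rw [integral_indicator_const _ measurableSet_Iic]; simp; rfl

lemma le_integral_phi {x δ : ℝ} (hδ : 0 < δ) :
    F S x ≤ ∫ t, phi x δ t ∂(nu S) := by
  rw [← nuI_toReal S x]
  have hind : ∀ t, (Iic x).indicator (fun _ => (1:ℝ)) t ≤ phi x δ t := by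
    intro t
    rcases le_or_gt t x with h | h
    · rw [indicator_of_mem (mem_Iic.2 h), phi_eq_one hδ h]
    · rw [indicator_of_notMem (by simpa using h)]; exact phi_nonneg _ _ _
  calc (nu S (Iic x)).toReal
      = ∫ t, (Iic x).indicator (fun _ => (1:ℝ)) t ∂(nu S) := by
        rw [integral_indicator_const _ measurableSet_Iic]; simp; rfl
    _ ≤ ∫ t, phi x δ t ∂(nu S) := by
        apply integral_mono
        · exact (integrable_indicator_iff measurableSet_Iic).2
            (integrableOn_const (measure_ne_top _ _))
        · exact integrable_of_bounded_continuous (phi_continuous x δ) 1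
            (fun t => abs_le.2 ⟨by linarith [phi_nonneg x δ t], phi_le_one x δ t⟩) _
        · exact hind

lemma nuI_le_P1 : (nu S (Set.Ico (-T) (0:ℝ))).toReal ≤ S.P (fun _ => 1) := by
  have h1 : nu S (Set.Ico (-T) (0:ℝ)) ≤ nu S univ := measure_mono (subset_univ _)
  rw [nu_univ] at h1
  calc (nu S (Set.Ico (-T) (0:ℝ))).toReal ≤ (ENNReal.ofReal (S.P (fun _ => 1))).toReal :=
        ENNReal.toReal_mono ENNReal.ofReal_ne_top h1
    _ = S.P (fun _ => 1) := ENNReal.toReal_ofReal (S.one_nonneg)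

end PosLin

end Stmt9
namespace Stmt9

namespace PosLin

set_option linter.unusedSectionVars false

variable {T : ℝ} (S : PosLin T) (hT : 0 < T)

include hT in
set_option maxHeartbeats 3000000 in
/-- Stage 1: representation for nonnegative functions vanishing near `0`. -/
lemma repr_vanish {γ : ℝ → ℝ} {a : ℝ} (hγ : memScrC' T γ)
    (hγ0 : ∀ x ∈ Set.Ico (-T) (0:ℝ), 0 ≤ γ x) (haT : -T < a) (ha0 : a < 0)
    (hvan : ∀ x, a ≤ x → γ x = 0) :
    S.P γ = ∫ x in Set.Ico (-T) (0:ℝ), γ x ∂(nu S) := by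
  set P1 := S.P (fun _ => 1) with hP1
  have hP1nn : 0 ≤ P1 := S.one_nonneg
  -- reduce to an ε-estimate
  suffices hsuf : ∀ ε, 0 < ε → |S.P γ - ∫ x in Set.Ico (-T) (0:ℝ), γ x ∂(nu S)| ≤ ε * (4*P1 + 4) by
    by_contra hne
    have habs : 0 < |S.P γ - ∫ x in Set.Ico (-T) (0:ℝ), γ x ∂(nu S)| := by
      rcases eq_or_lt_of_le (abs_nonneg (S.P γ - ∫ x in Set.Ico (-T) (0:ℝ), γ x ∂(nu S))) with h | h
      · exact absurd (by linarith [abs_eq_zero.1 h.symm] : S.P γ = ∫ x in Set.Ico (-T) (0:ℝ), γ x ∂(nu S)) hne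
      · exact h
    set D := |S.P γ - ∫ x in Set.Ico (-T) (0:ℝ), γ x ∂(nu S)|
    have h4 : (0:ℝ) < 4*P1 + 4 := by linarith
    have := hsuf (D / (2*(4*P1+4))) (by positivity)
    have heq : D / (2*(4*P1+4)) * (4*P1 + 4) = D/2 := by field_simp
    rw [heq] at this
    linarith
  intro ε hε
  -- uniform continuity
  have hIccsub : Icc (-T) a ⊆ Set.Ico (-T) (0:ℝ) := fun x hx => ⟨hx.1, lt_of_le_of_lt hx.2 ha0⟩
  have hucont := isCompact_Icc.uniformContinuousOn_of_continuous (hγ.2.mono hIccsub)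
  rw [Metric.uniformContinuousOn_iff] at hucont
  obtain ⟨δ₀, hδ₀, hδ₀'⟩ := hucont ε hε
  -- choose the mesh
  have haT' : 0 < a + T := by linarith
  obtain ⟨m, hm⟩ := exists_nat_gt ((a+T)/(δ₀/2))
  set h := (a+T)/((m:ℝ)+1) with hhdef
  have hh0 : 0 < h := by positivity
  have hhδ : 2*h < δ₀ := by
    have hm1 : (a+T)/(δ₀/2) < (m:ℝ)+1 := hm.trans (by linarith)
    rw [div_lt_iff₀ (by positivity)] at hm1
    have h2 : (a+T)/((m:ℝ)+1) < δ₀/2 := by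
      rw [div_lt_iff₀ (by positivity)]
      nlinarith
    rw [hhdef]
    linarith
  -- the grid
  set pt : ℕ → ℝ := fun i => -T + (i:ℝ)*h - h with hptdef
  have hptsucc : ∀ i, pt (i+1) = pt i + h := by
    intro i; simp only [hptdef]; push_cast; ring
  have hpt1 : pt 1 = -T := by simp [hptdef]
  have hptm2 : pt (m+2) = a := by
    have : ((m:ℝ)+1) * h = a + T := by
      rw [hhdef]; field_simp
    simp only [hptdef]; push_cast; linarith
  have hptmono : Monotone pt :=
    monotone_nat_of_le_succ (fun i => by rw [hptsucc i]; linarith)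
  have hptIcc : ∀ i, 1 ≤ i → i ≤ m+2 → pt i ∈ Icc (-T) a := by
    intro i h1 h2
    exact ⟨hpt1 ▸ hptmono h1, hptm2 ▸ hptmono h2⟩
  set Φ : ℕ → ℝ → ℝ := fun i => phi (pt i) h with hΦdef
  set u : ℕ → ℝ := fun i => S.P (Φ i) with hudef
  set v : ℕ → ℝ := fun i => ∫ t, Φ i t ∂(nu S) with hvdef
  set d : ℕ → ℝ := fun i => γ (pt (i+1)) with hddef
  set γI : ℝ → ℝ := fun t => ∑ i ∈ Finset.range (m+2), d i * (Φ (i+1) t - Φ i t) with hγIdef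
  -- basic facts
  have hΦmem : ∀ i, memScrC' T (Φ i) := fun i => phi_mem _ _
  have hΔΦ0 : ∀ i t, 0 ≤ Φ (i+1) t - Φ i t := by
    intro i t
    have := phi_mono_left h hh0 (by rw [hptsucc i]; linarith : pt i ≤ pt (i+1)) t
    simp only [hΦdef]; linarith
  have hd0 : ∀ i, i < m+2 → 0 ≤ d i := by
    intro i hi
    exact hγ0 _ (hIccsub (hptIcc (i+1) (by omega) (by omega)))
  have hγImem : memScrC' T γI :=
    mem_finsum (m+2) _ (fun i => mem_smul (d i) (mem_sub (hΦmem (i+1)) (hΦmem i)))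
  have hγI0 : ∀ x ∈ Set.Ico (-T) (0:ℝ), 0 ≤ γI x := by
    intro x hx
    apply Finset.sum_nonneg
    intro i hi
    exact mul_nonneg (hd0 i (Finset.mem_range.1 hi)) (hΔΦ0 i x)
  -- (c1) sup estimate
  have hsup : ∀ t ∈ Set.Ico (-T) (0:ℝ), |γI t - γ t| ≤ ε := by
    intro t ht
    rcases le_or_gt t a with hta | hta
    · have htel : ∑ i ∈ Finset.range (m+2), (Φ (i+1) t - Φ i t) = 1 := by
        rw [Finset.sum_range_sub (fun i => Φ i t)]
        have h1 : Φ (m+2) t = 1 := phi_eq_one hh0 (hptm2 ▸ hta)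
        have h2 : Φ 0 t = 0 := phi_eq_zero hh0 (by
          have : pt 0 + h = pt 1 := (hptsucc 0).symm
          rw [this, hpt1]; exact ht.1)
        rw [h1, h2]; ring
      have heq : γI t - γ t = ∑ i ∈ Finset.range (m+2), (d i - γ t) * (Φ (i+1) t - Φ i t) := by
        simp only [sub_mul]
        rw [Finset.sum_sub_distrib, ← Finset.mul_sum, htel, mul_one]
      rw [heq]
      apply (Finset.abs_sum_le_sum_abs _ _).trans
      have hbound : ∀ i ∈ Finset.range (m+2),
          |(d i - γ t) * (Φ (i+1) t - Φ i t)| ≤ ε * (Φ (i+1) t - Φ i t) := by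
        intro i hi
        rw [abs_mul, abs_of_nonneg (hΔΦ0 i t)]
        rcases eq_or_lt_of_le (hΔΦ0 i t) with h0 | h0
        · rw [← h0]; simp
        · apply mul_le_mul_of_nonneg_right _ (hΔΦ0 i t)
          -- derive the position of t
          have hupper : t < pt (i+1) + h := by
            by_contra hcon
            push_neg at hcon
            have h1 : Φ (i+1) t = 0 := phi_eq_zero hh0 hcon
            have h2 : Φ i t = 0 := phi_eq_zero hh0 (by
              have e1 := hptsucc i
              linarith)
            rw [h1, h2] at h0; linarith
          have hlower : pt i < t := by
            by_contra hcon
            push_neg at hcon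
            have h1 : Φ i t = 1 := phi_eq_one hh0 hcon
            have h2 : Φ (i+1) t = 1 := phi_eq_one hh0 (by
              have e1 := hptsucc i
              linarith)
            rw [h1, h2] at h0; linarith
          have hdist : dist t (pt (i+1)) < δ₀ := by
            have e1 := hptsucc i
            rw [Real.dist_eq, abs_lt]
            constructor
            · linarith
            · linarith
          have hmem1 : t ∈ Icc (-T) a := ⟨ht.1, hta⟩
          have hmem2 : pt (i+1) ∈ Icc (-T) a :=
            hptIcc (i+1) (by omega) (by have := Finset.mem_range.1 hi; omega)
          have := hδ₀' t hmem1 (pt (i+1)) hmem2 hdist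
          rw [Real.dist_eq] at this
          rw [abs_sub_comm]
          exact this.le
      apply (Finset.sum_le_sum hbound).trans
      rw [← Finset.mul_sum, htel, mul_one]
    · have hγt : γ t = 0 := hvan t hta.le
      have hγIt : γI t = 0 := by
        apply Finset.sum_eq_zero
        intro i hi
        have hi2 := Finset.mem_range.1 hi
        rcases Nat.lt_or_ge i (m+1) with hcase | hcase
        · have h1 : Φ (i+1) t = 0 := phi_eq_zero hh0 (by
            calc pt (i+1) + h = pt (i+2) := (hptsucc (i+1)).symm
              _ ≤ pt (m+2) := hptmono (by omega)
              _ = a := hptm2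
              _ ≤ t := hta.le)
          have h2 : Φ i t = 0 := phi_eq_zero hh0 (by
            calc pt i + h = pt (i+1) := (hptsucc i).symm
              _ ≤ pt (m+2) := hptmono (by omega)
              _ = a := hptm2
              _ ≤ t := hta.le)
          rw [h1, h2]; ring
        · have : i = m+1 := by omega
          have hdz : d i = 0 := by
            rw [hddef]
            simp only [this]
            show γ (pt (m+2)) = 0
            rw [hptm2]
            exact hvan a le_rfl
          rw [hdz]; ring
      rw [hγIt, hγt]; simpa using hε.le
  -- (c5) P-side Lipschitz
  have hPdiff : |S.P γ - S.P γI| ≤ ε * P1 := by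
    apply S.lipschitz hT ε hγ hγImem hγ0 hγI0
    intro x hx
    rw [abs_sub_comm]
    exact hsup x hx
  -- (c2) value of P γI
  have hPγI : S.P γI = ∑ i ∈ Finset.range (m+2), d i * (u (i+1) - u i) := by
    have hd0' : ∀ i, 0 ≤ (fun j => if j < m+2 then d j else 0) i := by
      intro i; dsimp only; split
      · exact hd0 i (by assumption)
      · exact le_rfl
    -- use P_finsum with coefficients d (restricted nonneg on range)
    have hcongr : S.P γI = S.P (fun t => ∑ i ∈ Finset.range (m+2),
        (if i < m+2 then d i else 0) * (Φ (i+1) t - Φ i t)) := by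
      apply congrArg
      funext t
      apply Finset.sum_congr rfl
      intro i hi
      rw [if_pos (Finset.mem_range.1 hi)]
    rw [hcongr, P_finsum S (m+2) _ _ (fun i => mem_sub (hΦmem (i+1)) (hΦmem i))
      (fun i x _ => hΔΦ0 i x) hd0']
    apply Finset.sum_congr rfl
    intro i hi
    rw [if_pos (Finset.mem_range.1 hi)]
    congr 1
    -- S.P (Φ(i+1) - Φ i) = u (i+1) - u i
    have hadd := S.add (Φ i) (fun t => Φ (i+1) t - Φ i t) (hΦmem i)
      (mem_sub (hΦmem (i+1)) (hΦmem i)) (fun t _ => phi_nonneg _ _ _)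
      (fun t _ => hΔΦ0 i t)
    have hfun : S.P (fun t => Φ i t + (Φ (i+1) t - Φ i t)) = S.P (Φ (i+1)) := by
      apply congrArg; funext t; ring
    rw [hfun] at hadd
    rw [hudef]
    linarith
  -- integrability facts
  have hΦint : ∀ i, Integrable (Φ i) (nu S) := fun i =>
    integrable_of_bounded_continuous (phi_continuous _ _) 1
      (fun t => abs_le.2 ⟨by linarith [phi_nonneg (pt i) h t], phi_le_one _ _ t⟩) _
  have htermint : ∀ i, Integrable (fun t => d i * (Φ (i+1) t - Φ i t)) (nu S) :=
    fun i => (((hΦint (i+1)).sub (hΦint i)).const_mul (d i))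
  -- (c3) value of ∫ γI
  have hIγI : ∫ x in Set.Ico (-T) (0:ℝ), γI x ∂(nu S)
      = ∑ i ∈ Finset.range (m+2), d i * (v (i+1) - v i) := by
    rw [nu_restrict_I S hT]
    rw [hγIdef]
    rw [integral_finset_sum _ (fun i _ => htermint i)]
    apply Finset.sum_congr rfl
    intro i _
    rw [integral_const_mul, integral_sub (hΦint (i+1)) (hΦint i)]
  -- (c4) the Abel estimate
  set e : ℕ → ℝ := fun i => u i - v i with hedef
  have hulb : ∀ i, F0 S (pt i) ≤ u i := fun i => F0_le_Gf S (pt i) hh0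
  have huub : ∀ i, u i ≤ F0 S (pt (i+1)) := by
    intro i
    have := Gf_le_F0 S (pt i) hh0
    rw [← hptsucc i] at this
    exact this
  have hvlb : ∀ i, F0 S (pt i) ≤ v i :=
    fun i => (F0_le_F S (pt i)).trans (le_integral_phi S hh0)
  have hvub : ∀ i, v i ≤ F0 S (pt (i+2)) := by
    intro i
    apply (integral_phi_le S hh0).trans
    rw [← hptsucc i]
    exact F_le_F0 S (by rw [hptsucc (i+1)]; linarith)
  have hebound : ∀ i, |e i| ≤ F0 S (pt (i+2)) - F0 S (pt i) := by
    intro i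
    have h1 := hulb i; have h2 := huub i; have h3 := hvlb i; have h4 := hvub i
    have h5 : F0 S (pt (i+1)) ≤ F0 S (pt (i+2)) := F0_mono S (hptmono (by omega))
    rw [hedef, abs_le]
    constructor <;> simp only <;> nlinarith
  have he0 : e 0 = 0 := by
    have hu0 : u 0 = 0 := by
      have hcz : ∀ t ∈ Set.Ico (-T) (0:ℝ), Φ 0 t = (fun _ => (0:ℝ)) t := by
        intro t ht
        apply phi_eq_zero hh0
        have : pt 0 + h = pt 1 := (hptsucc 0).symm
        rw [this, hpt1]; exact ht.1
      rw [hudef]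
      simp only
      rw [S.congrI _ _ (hΦmem 0) mem_zero hcz, S.zero]
    have hv0 : v 0 = 0 := by
      rw [hvdef]
      simp only
      rw [← nu_restrict_I S hT]
      rw [setIntegral_congr_fun measurableSet_Ico (fun t ht => by
        show Φ 0 t = (fun _ => (0:ℝ)) t
        apply phi_eq_zero hh0
        have : pt 0 + h = pt 1 := (hptsucc 0).symm
        rw [this, hpt1]; exact ht.1)]
      simp
    rw [hedef]; simp [hu0, hv0]
  have hdm1 : d (m+1) = 0 := by
    rw [hddef]
    show γ (pt (m+2)) = 0
    rw [hptm2]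
    exact hvan a le_rfl
  -- the difference of the two sums
  have hmain : |∑ i ∈ Finset.range (m+2), d i * (u (i+1) - u i)
      - ∑ i ∈ Finset.range (m+2), d i * (v (i+1) - v i)| ≤ 2 * ε * P1 := by
    have hsum : ∑ i ∈ Finset.range (m+2), d i * (u (i+1) - u i)
        - ∑ i ∈ Finset.range (m+2), d i * (v (i+1) - v i)
        = ∑ i ∈ Finset.range (m+2), d i * (e (i+1) - e i) := by
      rw [← Finset.sum_sub_distrib]
      apply Finset.sum_congr rfl
      intro i _
      rw [hedef]; ring
    rw [hsum, abel_sum (m+1) d e, hdm1, he0]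
    simp only [zero_mul, mul_zero, sub_zero, zero_add]
    apply (Finset.abs_sum_le_sum_abs _ _).trans
    have hterm : ∀ i ∈ Finset.range (m+1), |(d i - d (i+1)) * e (i+1)|
        ≤ ε * (F0 S (pt (i+3)) - F0 S (pt (i+1))) := by
      intro i hi
      have hi2 := Finset.mem_range.1 hi
      rw [abs_mul]
      have hd : |d i - d (i+1)| ≤ ε := by
        have hm1 : pt (i+1) ∈ Icc (-T) a := hptIcc (i+1) (by omega) (by omega)
        have hm2 : pt (i+2) ∈ Icc (-T) a := hptIcc (i+2) (by omega) (by omega)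
        have hdist : dist (pt (i+1)) (pt (i+2)) < δ₀ := by
          rw [Real.dist_eq, hptsucc (i+1), abs_lt]
          constructor <;> linarith
        have := hδ₀' (pt (i+1)) hm1 (pt (i+2)) hm2 hdist
        rw [Real.dist_eq] at this
        exact this.le
      have he := hebound (i+1)
      have heF : (0:ℝ) ≤ F0 S (pt (i+3)) - F0 S (pt (i+1)) := by
        have := F0_mono S (hptmono (by omega : i+1 ≤ i+3))
        linarith
      calc |d i - d (i+1)| * |e (i+1)| ≤ ε * |e (i+1)| :=
            mul_le_mul_of_nonneg_right hd (abs_nonneg _)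
        _ ≤ ε * (F0 S (pt (i+3)) - F0 S (pt (i+1))) := by
            apply mul_le_mul_of_nonneg_left _ hε.le
            simpa using he
    apply (Finset.sum_le_sum hterm).trans
    have : ∑ i ∈ Finset.range (m+1), ε * (F0 S (pt (i+3)) - F0 S (pt (i+1)))
        = ε * ∑ i ∈ Finset.range (m+1), ((fun j => F0 S (pt (j+1))) (i+2)
          - (fun j => F0 S (pt (j+1))) i) := by
      rw [Finset.mul_sum]
    rw [this, tel2 (m+1) (fun j => F0 S (pt (j+1)))]
    beta_reduce
    have hb1 : F0 S (pt (m+3)) ≤ P1 := F0_le_P1 S _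
    have hb2 : F0 S (pt (m+2)) ≤ P1 := F0_le_P1 S _
    have hb3 : 0 ≤ F0 S (pt 2) := F0_nonneg S _
    have hb4 : 0 ≤ F0 S (pt 1) := F0_nonneg S _
    have : F0 S (pt (m+1+1+1)) + F0 S (pt (m+1+1)) - F0 S (pt 2) - F0 S (pt 1) ≤ 2 * P1 := by
      have e1 : m+1+1+1 = m+3 := by omega
      have e2 : m+1+1 = m+2 := by omega
      rw [e1, e2]
      linarith
    nlinarith [hε.le]
  -- (c6) integral-side estimate
  have hIdiff : |(∫ x in Set.Ico (-T) (0:ℝ), γ x ∂(nu S))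
      - ∫ x in Set.Ico (-T) (0:ℝ), γI x ∂(nu S)| ≤ ε * P1 := by
    have hint1 : IntegrableOn γ (Set.Ico (-T) (0:ℝ)) (nu S) := integrableOn_I _ hγ
    have hint2 : IntegrableOn γI (Set.Ico (-T) (0:ℝ)) (nu S) := integrableOn_I _ hγImem
    rw [← integral_sub hint1 hint2]
    have hb : ∀ᵐ x ∂((nu S).restrict (Set.Ico (-T) (0:ℝ))), ‖γ x - γI x‖ ≤ ε := by
      apply (ae_restrict_iff' measurableSet_Ico).2
      apply ae_of_all
      intro x hx
      rw [Real.norm_eq_abs, abs_sub_comm]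
      exact hsup x hx
    have := norm_integral_le_of_norm_le_const (C := ε) hb
    rw [Real.norm_eq_abs] at this
    apply this.trans
    calc ε * ((nu S).restrict (Set.Ico (-T) (0:ℝ)) univ).toReal
        = ε * (nu S (Set.Ico (-T) (0:ℝ))).toReal := by
          rw [Measure.restrict_apply_univ]
      _ ≤ ε * P1 := mul_le_mul_of_nonneg_left (nuI_le_P1 S) hε.le
  -- final combination
  have hfin : S.P γ - ∫ x in Set.Ico (-T) (0:ℝ), γ x ∂(nu S)
      = (S.P γ - S.P γI) + (S.P γI - ∫ x in Set.Ico (-T) (0:ℝ), γI x ∂(nu S))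
        + ((∫ x in Set.Ico (-T) (0:ℝ), γI x ∂(nu S)) - ∫ x in Set.Ico (-T) (0:ℝ), γ x ∂(nu S)) := by
    ring
  rw [hfin]
  have h2 : |S.P γI - ∫ x in Set.Ico (-T) (0:ℝ), γI x ∂(nu S)| ≤ 2 * ε * P1 := by
    rw [hPγI, hIγI]; exact hmain
  calc |(S.P γ - S.P γI) + (S.P γI - ∫ x in Set.Ico (-T) (0:ℝ), γI x ∂(nu S))
        + ((∫ x in Set.Ico (-T) (0:ℝ), γI x ∂(nu S)) - ∫ x in Set.Ico (-T) (0:ℝ), γ x ∂(nu S))|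
      ≤ |S.P γ - S.P γI| + |S.P γI - ∫ x in Set.Ico (-T) (0:ℝ), γI x ∂(nu S)|
        + |(∫ x in Set.Ico (-T) (0:ℝ), γI x ∂(nu S)) - ∫ x in Set.Ico (-T) (0:ℝ), γ x ∂(nu S)| :=
        abs_add_three _ _ _
    _ ≤ ε * P1 + 2 * ε * P1 + ε * P1 := by
        have h3 : |(∫ x in Set.Ico (-T) (0:ℝ), γI x ∂(nu S))
            - ∫ x in Set.Ico (-T) (0:ℝ), γ x ∂(nu S)| ≤ ε * P1 := by
          rw [abs_sub_comm]; exact hIdiff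
        exact add_le_add (add_le_add hPdiff h2) h3
    _ ≤ ε * (4*P1 + 4) := by nlinarith
end PosLin

end Stmt9
namespace Stmt9

namespace PosLin

set_option linter.unusedSectionVars false

variable {T : ℝ} (S : PosLin T) (hT : 0 < T)

include hT in
/-- The representation theorem for nonnegative elements of `𝒞([-T,0[)`. -/
lemma repr {γ : ℝ → ℝ} (hγ : memScrC' T γ)
    (hγ0 : ∀ x ∈ Set.Ico (-T) (0:ℝ), 0 ≤ γ x) :
    S.P γ = ∫ x in Set.Ico (-T) (0:ℝ), γ x ∂(nu S) := by
  obtain ⟨C, hC⟩ := hγ.1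
  set C' := max C 0 with hC'def
  have hC'0 : 0 ≤ C' := le_max_right _ _
  have hC' : ∀ x ∈ Set.Ico (-T) (0:ℝ), |γ x| ≤ C' := fun x hx => (hC x hx).trans (le_max_left _ _)
  set g : ℕ → ℝ → ℝ := fun k t => γ t * cutf T k t with hgdef
  have hgmem : ∀ k, memScrC' T (g k) := fun k => mem_mul hγ (cutf_mem hT k)
  have hg0 : ∀ k, ∀ x ∈ Set.Ico (-T) (0:ℝ), 0 ≤ g k x :=
    fun k x hx => mul_nonneg (hγ0 x hx) (cutf_nonneg hT k x)
  have hbT : 0 < min T 1 := minT1_pos hT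
  -- stage 1 for each k
  have hrep : ∀ k, S.P (g k) = ∫ x in Set.Ico (-T) (0:ℝ), g k x ∂(nu S) := by
    intro k
    apply repr_vanish S hT (hgmem k) (hg0 k) (a := cutX T (k+1))
    · -- -T < cutX T (k+1)
      rw [cutX, neg_div, neg_lt_neg_iff, div_lt_iff₀ (by positivity)]
      have h1 : min T 1 ≤ T := min_le_left _ _
      have h2 : (2:ℝ) ≤ ((k+1:ℕ):ℝ)+1 := by
        push_cast
        linarith [Nat.cast_nonneg (α := ℝ) k]
      nlinarith
    · exact cutX_neg hT (k+1)
    · intro x hx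
      show γ x * cutf T k x = 0
      rw [cutf_eq_zero hT hx, mul_zero]
  -- P-side convergence
  have hsplit : ∀ k, S.P γ = S.P (g k) + S.P (fun t => γ t * (1 - cutf T k t)) := by
    intro k
    have hmem2 : memScrC' T (fun t => γ t * (1 - cutf T k t)) :=
      mem_mul hγ (mem_sub (mem_const 1) (cutf_mem hT k))
    have h2 : ∀ x ∈ Set.Ico (-T) (0:ℝ), 0 ≤ γ x * (1 - cutf T k x) :=
      fun x hx => mul_nonneg (hγ0 x hx) (by linarith [cutf_le_one hT k x])
    have hadd := S.add (g k) (fun t => γ t * (1 - cutf T k t)) (hgmem k) hmem2 (hg0 k) h2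
    rw [← hadd]
    apply S.congrI _ _ hγ (mem_add (hgmem k) hmem2)
    intro x _
    show γ x = γ x * cutf T k x + γ x * (1 - cutf T k x)
    ring
  have htailP : Tendsto (fun k => S.P (fun t => γ t * (1 - cutf T k t))) atTop (𝓝 0) := by
    have hub : ∀ k, S.P (fun t => γ t * (1 - cutf T k t))
        ≤ C' * S.P (fun t => 1 - cutf T k t) := by
      intro k
      have hmem2 : memScrC' T (fun t => γ t * (1 - cutf T k t)) :=
        mem_mul hγ (mem_sub (mem_const 1) (cutf_mem hT k))
      have hmem3 : memScrC' T (fun t => C' * (1 - cutf T k t)) :=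
        mem_smul _ (mem_sub (mem_const 1) (cutf_mem hT k))
      have hmono := S.mono hmem2 hmem3
        (fun x hx => mul_nonneg (hγ0 x hx) (by linarith [cutf_le_one hT k x]))
        (fun x hx => by
          show γ x * (1 - cutf T k x) ≤ C' * (1 - cutf T k x)
          apply mul_le_mul_of_nonneg_right _ (by linarith [cutf_le_one hT k x])
          exact (le_abs_self _).trans (hC' x hx))
      have hsm := S.smul C' (fun t => 1 - cutf T k t) hC'0
        (mem_sub (mem_const 1) (cutf_mem hT k))
        (fun x hx => by
          show (0:ℝ) ≤ 1 - cutf T k x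
          linarith [cutf_le_one hT k x])
      rw [hsm] at hmono
      exact hmono
    have hlb : ∀ k, 0 ≤ S.P (fun t => γ t * (1 - cutf T k t)) := by
      intro k
      exact S.nonneg _ (mem_mul hγ (mem_sub (mem_const 1) (cutf_mem hT k)))
        (fun x hx => mul_nonneg (hγ0 x hx) (by linarith [cutf_le_one hT k x]))
    have hCt : Tendsto (fun k => C' * S.P (fun t => 1 - cutf T k t)) atTop (𝓝 0) := by
      simpa using S.tail.const_mul C'
    exact tendsto_of_tendsto_of_tendsto_of_le_of_le tendsto_const_nhds hCt hlb hub
  have hPg : Tendsto (fun k => S.P (g k)) atTop (𝓝 (S.P γ)) := by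
    have : (fun k => S.P (g k)) = fun k => S.P γ - S.P (fun t => γ t * (1 - cutf T k t)) := by
      funext k
      have := hsplit k
      linarith
    rw [this]
    simpa using (tendsto_const_nhds (x := S.P γ)).sub htailP
  -- integral-side convergence
  have hIg : Tendsto (fun k => ∫ x in Set.Ico (-T) (0:ℝ), g k x ∂(nu S)) atTop
      (𝓝 (∫ x in Set.Ico (-T) (0:ℝ), γ x ∂(nu S))) := by
    apply tendsto_integral_of_dominated_convergence (bound := fun _ => C')
    · intro k
      exact ((hγ.2.mul ((phi_continuous _ _).continuousOn)).aestronglyMeasurable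
        measurableSet_Ico)
    · exact integrable_const C'
    · intro k
      apply (ae_restrict_iff' measurableSet_Ico).2
      apply ae_of_all
      intro x hx
      rw [Real.norm_eq_abs]
      show |γ x * cutf T k x| ≤ C'
      rw [abs_mul]
      calc |γ x| * |cutf T k x| ≤ C' * 1 := by
            apply mul_le_mul (hC' x hx) _ (abs_nonneg _) hC'0
            rw [abs_of_nonneg (cutf_nonneg hT k x)]
            exact cutf_le_one hT k x
        _ = C' := mul_one C'
    · apply (ae_restrict_iff' measurableSet_Ico).2
      apply ae_of_all
      intro x hx
      apply Tendsto.congr' _ (tendsto_const_nhds (x := γ x))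
      filter_upwards [(cutX_tendsto hT).eventually (eventually_gt_nhds hx.2)] with k hk
      show γ x = γ x * cutf T k x
      rw [cutf_eq_one hT hk.le, mul_one]
  -- conclude
  have hPg' : Tendsto (fun k => S.P (g k)) atTop
      (𝓝 (∫ x in Set.Ico (-T) (0:ℝ), γ x ∂(nu S))) := by
    apply hIg.congr
    intro k
    exact (hrep k).symm
  exact tendsto_nhds_unique hPg hPg'

end PosLin

end Stmt9
namespace Stmt9

set_option linter.unusedSectionVars false
set_option maxHeartbeats 1000000

lemma mem_neg {T : ℝ} {γ : ℝ → ℝ} (hγ : memScrC' T γ) : memScrC' T (fun t => -γ t) := by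
  obtain ⟨⟨C, hC⟩, hc⟩ := hγ
  exact ⟨⟨C, fun x hx => by rw [abs_neg]; exact hC x hx⟩, hc.neg⟩

lemma lint_eq {T : ℝ} (m : Measure ℝ) [IsFiniteMeasure m]
    (hm : m (Set.Ico (-T) (0:ℝ))ᶜ = 0) (f : BoundedContinuousFunction ℝ NNReal) :
    ∫⁻ x, f x ∂m = ENNReal.ofReal (∫ x in Set.Ico (-T) (0:ℝ), (f x : ℝ) ∂m) := by
  have hcontγ : Continuous (fun t => (f t : ℝ)) := NNReal.continuous_coe.comp f.continuous
  have hγ0 : ∀ x : ℝ, 0 ≤ (f x : ℝ) := fun x => (f x).coe_nonneg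
  obtain ⟨Cf, hCf⟩ := f.bounded
  have hbd : ∀ t, |(f t : ℝ)| ≤ Cf + (f 0 : ℝ) := by
    intro t
    rw [abs_of_nonneg (hγ0 t)]
    have h1 := hCf t 0
    rw [NNReal.dist_eq] at h1
    have h2 : (f t : ℝ) - (f 0 : ℝ) ≤ Cf := (le_abs_self _).trans h1
    linarith
  have hrm : m.restrict (Set.Ico (-T) (0:ℝ)) = m := by
    apply Measure.restrict_eq_self_of_ae_mem
    rw [ae_iff]
    exact hm
  have hfi : Integrable (fun x => (f x : ℝ)) m :=
    integrable_of_bounded_continuous hcontγ _ hbd m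
  rw [lintegral_coe_eq_integral f hfi]
  congr 1
  conv_lhs => rw [← hrm]

lemma carried_eq {T : ℝ} (hT : 0 < T) (p n : Measure ℝ) [IsFiniteMeasure p] [IsFiniteMeasure n]
    (hp : p (Set.Ico (-T) (0:ℝ))ᶜ = 0) (hn : n (Set.Ico (-T) (0:ℝ))ᶜ = 0)
    (hint : ∀ γ : ℝ → ℝ, memScrC' T γ → (∀ x, 0 ≤ γ x) →
      ∫ x in Set.Ico (-T) (0:ℝ), γ x ∂p = ∫ x in Set.Ico (-T) (0:ℝ), γ x ∂n) :
    p = n := by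
  apply ext_of_forall_lintegral_eq_of_IsFiniteMeasure
  intro f
  rw [lint_eq p hp f, lint_eq n hn f]
  congr 1
  exact hint _ (mem_of_continuous (NNReal.continuous_coe.comp f.continuous))
    (fun x => (f x).coe_nonneg)

end Stmt9

open Stmt9 in
/-- Riesz-type representation for `𝒞([-T,0[)`: every linear functional `Λ`, sequentially
continuous for the convergence of `𝒞([-T,0[)`, is represented by a unique finite signed
Borel measure `μ` on `[-T,0]` with `μ({0}) = 0` (i.e. carried by `[-T,0[`):
`Λγ = ∫_{[-T,0[} γ dμ`. -/
theorem stmt9 (T : ℝ) (hT : 0 < T) (Λ : (ℝ → ℝ) → ℝ)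
    (hadd : ∀ γ ξ, memScrC' T γ → memScrC' T ξ → Λ (γ + ξ) = Λ γ + Λ ξ)
    (hsmul : ∀ (c : ℝ) γ, memScrC' T γ → Λ (c • γ) = c * Λ γ)
    (hcont : ∀ (γk : ℕ → ℝ → ℝ) (γ : ℝ → ℝ),
      (∀ k, memScrC' T (γk k)) → memScrC' T γ →
      (∃ C, ∀ k, ∀ x ∈ Set.Ico (-T) (0:ℝ), |γk k x| ≤ C) →
      (∀ K ⊆ Set.Ico (-T) (0:ℝ), IsCompact K → TendstoUniformlyOn γk γ atTop K) →
      Tendsto (fun k => Λ (γk k)) atTop (𝓝 (Λ γ))) :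
    ∃! μ : MeasureTheory.SignedMeasure ℝ,
      μ.toJordanDecomposition.posPart (Set.Ico (-T) 0)ᶜ = 0 ∧
      μ.toJordanDecomposition.negPart (Set.Ico (-T) 0)ᶜ = 0 ∧
      ∀ γ, memScrC' T γ →
        Λ γ = (∫ x in Set.Ico (-T) 0, γ x ∂μ.toJordanDecomposition.posPart) -
              ∫ x in Set.Ico (-T) 0, γ x ∂μ.toJordanDecomposition.negPart := by
  classical
  set Sp := lamPosLin hT hadd hsmul hcont with hSpdef
  set Sn := lamNegLin hT hadd hsmul hcont with hSndef
  set νp := PosLin.nu Sp with hνpdef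
  set νn := PosLin.nu Sn with hνndef
  set μ : SignedMeasure ℝ := νp.toSignedMeasure - νn.toSignedMeasure with hμdef
  set I := Set.Ico (-T) (0:ℝ) with hIdef
  have hImeas : MeasurableSet I := measurableSet_Ico
  have hIcmeas : MeasurableSet Iᶜ := hImeas.compl
  set p := μ.toJordanDecomposition.posPart with hpdef
  set n := μ.toJordanDecomposition.negPart with hndef
  haveI hfp : IsFiniteMeasure p := μ.toJordanDecomposition.posPart_finite
  haveI hfn : IsFiniteMeasure n := μ.toJordanDecomposition.negPart_finite
  have hνpc : νp Iᶜ = 0 := PosLin.nu_compl_I Sp hT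
  have hνnc : νn Iᶜ = 0 := PosLin.nu_compl_I Sn hT
  -- the signed measure value on measurable sets
  have hμval : ∀ s, MeasurableSet s → μ s = (νp s).toReal - (νn s).toReal := by
    intro s hs
    rw [hμdef]
    exact Measure.toSignedMeasure_sub_apply hs
  have hjval : ∀ s, MeasurableSet s → μ s = (p s).toReal - (n s).toReal := by
    intro s hs
    conv_lhs => rw [← μ.toSignedMeasure_toJordanDecomposition]
    have : μ.toJordanDecomposition.toSignedMeasure
        = p.toSignedMeasure - n.toSignedMeasure := rfl
    rw [this]
    exact Measure.toSignedMeasure_sub_apply hs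
  -- the measure identity p + νn = n + νp
  have hmeq : p + νn = n + νp := by
    apply Measure.ext
    intro s hs
    have h1 := hμval s hs
    have h2 := hjval s hs
    rw [Measure.add_apply, Measure.add_apply]
    have e1 : ((p s) + (νn s)).toReal = ((n s) + (νp s)).toReal := by
      rw [ENNReal.toReal_add (measure_ne_top _ _) (measure_ne_top _ _),
        ENNReal.toReal_add (measure_ne_top _ _) (measure_ne_top _ _)]
      linarith
    exact (ENNReal.toReal_eq_toReal_iff'
      (by exact ENNReal.add_ne_top.2 ⟨measure_ne_top _ _, measure_ne_top _ _⟩)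
      (by exact ENNReal.add_ne_top.2 ⟨measure_ne_top _ _, measure_ne_top _ _⟩)).1 e1
  -- equality of p and n on measurable subsets of Iᶜ
  have hsub_eq : ∀ A, MeasurableSet A → A ⊆ Iᶜ → p A = n A := by
    intro A hA hAsub
    have h1 : p A + νn A = n A + νp A := by
      have := congrArg (fun m => m A) hmeq
      simpa [Measure.add_apply] using this
    have h2 : νn A = 0 := measure_mono_null hAsub hνnc
    have h3 : νp A = 0 := measure_mono_null hAsub hνpc
    rw [h2, h3, add_zero, add_zero] at h1
    exact h1
  -- Jordan parts vanish outside I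
  obtain ⟨W, hWmeas, hpW, hnW⟩ := μ.toJordanDecomposition.mutuallySingular
  have hpcompl : p Iᶜ = 0 := by
    have hdecomp : p (Iᶜ ∩ W) + p (Iᶜ \ W) = p Iᶜ := measure_inter_add_diff Iᶜ hWmeas
    have e1 : p (Iᶜ ∩ W) = 0 := measure_mono_null inter_subset_right hpW
    have e2 : p (Iᶜ \ W) = 0 := by
      rw [hsub_eq _ (hIcmeas.diff hWmeas) diff_subset]
      exact measure_mono_null (fun x hx => hx.2) hnW
    rw [← hdecomp, e1, e2, add_zero]
  have hncompl : n Iᶜ = 0 := by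
    have hdecomp : n (Iᶜ ∩ W) + n (Iᶜ \ W) = n Iᶜ := measure_inter_add_diff Iᶜ hWmeas
    have e1 : n (Iᶜ ∩ W) = 0 := by
      rw [← hsub_eq _ (hIcmeas.inter hWmeas) inter_subset_left]
      exact measure_mono_null inter_subset_right hpW
    have e2 : n (Iᶜ \ W) = 0 := measure_mono_null (fun x hx => hx.2) hnW
    rw [← hdecomp, e1, e2, add_zero]
  -- representation with νp, νn
  have hrepν : ∀ γ, memScrC' T γ →
      Λ γ = (∫ x in I, γ x ∂νp) - ∫ x in I, γ x ∂νn := by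
    intro γ hγ
    set γp : ℝ → ℝ := fun t => max (γ t) 0 with hγpdef
    set γm : ℝ → ℝ := fun t => max (-γ t) 0 with hγmdef
    have hγpmem : memScrC' T γp := mem_max0 hγ
    have hγmmem : memScrC' T γm := mem_max0 (mem_neg hγ)
    have hγp0 : ∀ x ∈ I, 0 ≤ γp x := fun x _ => le_max_right _ _
    have hγm0 : ∀ x ∈ I, 0 ≤ γm x := fun x _ => le_max_right _ _
    have hdiff : ∀ t, γp t - γm t = γ t := by
      intro t
      rcases le_total (γ t) 0 with h | h
      · rw [hγpdef, hγmdef]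
        simp only
        rw [max_eq_right h, max_eq_left (by linarith)]
        ring
      · rw [hγpdef, hγmdef]
        simp only
        rw [max_eq_left h, max_eq_right (by linarith)]
        ring
    -- Λ γ = Λ γp - Λ γm
    have hΛsplit : Λ γ = Λ γp - Λ γm := by
      have hfun : (γp + (-1:ℝ) • γm) = γ := by
        funext t
        simp only [Pi.add_apply, Pi.smul_apply, smul_eq_mul]
        have := hdiff t
        linarith
      have h1 : Λ (γp + (-1:ℝ) • γm) = Λ γp + Λ ((-1:ℝ) • γm) :=
        hadd _ _ hγpmem (mem_smul (-1) hγmmem)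
      have h2 : Λ ((-1:ℝ) • γm) = -1 * Λ γm := hsmul (-1) γm hγmmem
      rw [hfun] at h1
      rw [h1, h2]
      ring
    -- representation on the nonneg parts
    have hreppart : ∀ ξ (hξ : memScrC' T ξ) (hξ0 : ∀ x ∈ I, 0 ≤ ξ x),
        Λ ξ = (∫ x in I, ξ x ∂νp) - ∫ x in I, ξ x ∂νn := by
      intro ξ hξ hξ0
      have h1 : Λ ξ = Sp.P ξ - Sn.P ξ := lam_eq_pos_sub_neg hT hadd hsmul hcont
      rw [h1, PosLin.repr Sp hT hξ hξ0, PosLin.repr Sn hT hξ hξ0]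
    have hp1 := hreppart γp hγpmem hγp0
    have hp2 := hreppart γm hγmmem hγm0
    -- combine using integral linearity
    have hcomb : ∀ (m : Measure ℝ) [IsFiniteMeasure m],
        (∫ x in I, γp x ∂m) - ∫ x in I, γm x ∂m = ∫ x in I, γ x ∂m := by
      intro m _
      rw [← integral_sub (integrableOn_I m hγpmem) (integrableOn_I m hγmmem)]
      apply integral_congr_ae
      apply ae_of_all
      intro x
      exact hdiff x
    have hcp := hcomb νp
    have hcn := hcomb νn
    rw [hΛsplit, hp1, hp2]
    linarith
  -- representation with p, n
  have hrep : ∀ γ, memScrC' T γ →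
      Λ γ = (∫ x in I, γ x ∂p) - ∫ x in I, γ x ∂n := by
    intro γ hγ
    have h1 : (∫ x in I, γ x ∂p) + ∫ x in I, γ x ∂νn
        = (∫ x in I, γ x ∂n) + ∫ x in I, γ x ∂νp := by
      have h2 : ∫ x in I, γ x ∂(p + νn) = ∫ x in I, γ x ∂(n + νp) := by
        rw [hmeq]
      rw [Measure.restrict_add, Measure.restrict_add,
        integral_add_measure (integrableOn_I p hγ) (integrableOn_I νn hγ),
        integral_add_measure (integrableOn_I n hγ) (integrableOn_I νp hγ)] at h2
      exact h2
    have h3 := hrepν γ hγ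
    linarith
  -- the unique existence
  refine ⟨μ, ⟨hpcompl, hncompl, hrep⟩, ?_⟩
  rintro μ₂ ⟨h2p, h2n, h2rep⟩
  set p₂ := μ₂.toJordanDecomposition.posPart with hp2def
  set n₂ := μ₂.toJordanDecomposition.negPart with hn2def
  haveI hfp2 : IsFiniteMeasure p₂ := μ₂.toJordanDecomposition.posPart_finite
  haveI hfn2 : IsFiniteMeasure n₂ := μ₂.toJordanDecomposition.negPart_finite
  -- p₂ + n = p + n₂
  have hkey : p₂ + n = p + n₂ := by
    apply carried_eq hT
    · rw [Measure.add_apply, h2p, hncompl, add_zero]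
    · rw [Measure.add_apply, hpcompl, h2n, add_zero]
    · intro γ hγ hγ0
      have h1 := hrep γ hγ
      have h2 := h2rep γ hγ
      rw [Measure.restrict_add, Measure.restrict_add,
        integral_add_measure (integrableOn_I p₂ hγ) (integrableOn_I n hγ),
        integral_add_measure (integrableOn_I p hγ) (integrableOn_I n₂ hγ)]
      linarith
  -- conclude μ₂ = μ
  apply VectorMeasure.ext
  intro s hs
  have hj2 : μ₂ s = (p₂ s).toReal - (n₂ s).toReal := by
    conv_lhs => rw [← μ₂.toSignedMeasure_toJordanDecomposition]
    have : μ₂.toJordanDecomposition.toSignedMeasure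
        = p₂.toSignedMeasure - n₂.toSignedMeasure := rfl
    rw [this]
    exact Measure.toSignedMeasure_sub_apply hs
  have hj1 := hjval s hs
  have hkey2 : p₂ s + n s = p s + n₂ s := by
    have := congrArg (fun m => m s) hkey
    simpa [Measure.add_apply] using this
  have e1 : (p₂ s).toReal + (n s).toReal = (p s).toReal + (n₂ s).toReal := by
    rw [← ENNReal.toReal_add (measure_ne_top _ _) (measure_ne_top _ _),
      ← ENNReal.toReal_add (measure_ne_top _ _) (measure_ne_top _ _), hkey2]
  rw [hj1, hj2]
  linarith
end

section
/- Let η : [-T,0] → ℝ be a continuous function whose deterministic quadratic variation [η] on [-T,0] exists, i.e., (1/ε)∫₀^x (η(s+ε) − η(s))² ds converges for every x ∈ [-T,0] to a (continuous) function [η](x). Then for every ε > 0 define the bounded linear operator T_ε : L²([-T,0]²) → ℝ by T_ε g = ∫_{[-T,0]²} g(x,y) (η(x)−η(x−ε))(η(y)−η(y−ε))/ε dx dy. Then sup_{0<ε<1} ‖T_ε‖ < ∞ and T_ε g → 0 as ε → 0⁺ for every g ∈ L²([-T,0]²). -/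
open MeasureTheory Filter Topology Set RealInnerProductSpace
open scoped NNReal ENNReal

namespace Stmt13Aux

lemma bm_intervalIntegrable {f : ℝ → ℝ} (hf : Measurable f) {C : ℝ} (hC : ∀ x, |f x| ≤ C)
    (a b : ℝ) : IntervalIntegrable f volume a b := by
  rw [intervalIntegrable_iff]
  exact ⟨hf.aestronglyMeasurable.restrict,
    HasFiniteIntegral.restrict_of_bounded C measure_Ioc_lt_top (ae_of_all _ hC)⟩

lemma bm_integrableOn {E : Type*} [MeasurableSpace E] {μ : Measure E} {s : Set E}
    (hs : μ s < ∞) {f : E → ℝ} (hf : Measurable f) {C : ℝ} (hC : ∀ x, |f x| ≤ C) :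
    IntegrableOn f s μ :=
  ⟨hf.aestronglyMeasurable.restrict, HasFiniteIntegral.restrict_of_bounded C hs (ae_of_all _ hC)⟩

lemma bm_memℒp {E : Type*} [MeasurableSpace E] {μ : Measure E} [IsFiniteMeasure μ]
    {f : E → ℝ} (hf : AEStronglyMeasurable f μ) {C : ℝ} (hC : ∀ x, |f x| ≤ C) :
    MemLp f 2 μ :=
  MemLp.of_bound hf C (ae_of_all _ hC)

lemma memℒp_mul_integrable {E : Type*} [MeasurableSpace E] {μ : Measure E}
    {u v : E → ℝ} (hu : MemLp u 2 μ) (hv : MemLp v 2 μ) :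
    Integrable (fun a => u a * v a) μ := by
  have h := L2.integrable_inner (𝕜 := ℝ) (hu.toLp u) (hv.toLp v)
  refine h.congr ?_
  filter_upwards [hu.coeFn_toLp, hv.coeFn_toLp] with x h1 h2
  simp [RCLike.inner_apply, h1, h2, mul_comm]

lemma inner_toLp_eq {E : Type*} [MeasurableSpace E] {μ : Measure E}
    {u v : E → ℝ} (hu : MemLp u 2 μ) (hv : MemLp v 2 μ) :
    ⟪hu.toLp u, hv.toLp v⟫ = ∫ a, u a * v a ∂μ := by
  rw [L2.inner_def]
  refine integral_congr_ae ?_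
  filter_upwards [hu.coeFn_toLp, hv.coeFn_toLp] with x h1 h2
  simp [RCLike.inner_apply, h1, h2, mul_comm]

lemma integral_mul_le_cs {E : Type*} [MeasurableSpace E] {μ : Measure E}
    {u v : E → ℝ} (hu : MemLp u 2 μ) (hv : MemLp v 2 μ) :
    |∫ a, u a * v a ∂μ| ≤ (eLpNorm u 2 μ).toReal * (eLpNorm v 2 μ).toReal := by
  calc |∫ a, u a * v a ∂μ| = |⟪hu.toLp u, hv.toLp v⟫| := by rw [inner_toLp_eq hu hv]
    _ ≤ ‖hu.toLp u‖ * ‖hv.toLp v‖ := abs_real_inner_le_norm _ _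
    _ = _ := by rw [Lp.norm_toLp, Lp.norm_toLp]

lemma eLpNorm_sq {E : Type*} [MeasurableSpace E] {μ : Measure E}
    {u : E → ℝ} (hu : MemLp u 2 μ) :
    ((eLpNorm u 2 μ).toReal) ^ 2 = ∫ a, u a * u a ∂μ := by
  rw [← inner_toLp_eq hu hu, real_inner_self_eq_norm_sq, Lp.norm_toLp]

lemma eta_meas {T : ℝ} (hT : 0 < T) {η : ℝ → ℝ} (hηc : ContinuousOn η (Icc (-T) 0))
    (hext1 : ∀ x < -T, η x = 0) (hext2 : ∀ x ≥ (0:ℝ), η x = η 0) :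
    Measurable η ∧ ∃ B : ℝ, 0 ≤ B ∧ ∀ x, |η x| ≤ B := by
  have hTle : -T ≤ (0:ℝ) := by linarith
  set c : ℝ → ℝ := fun x => max (-T) (min x 0) with hc
  have hcmem : ∀ x, c x ∈ Icc (-T) 0 := fun x =>
    ⟨le_max_left _ _, max_le hTle (min_le_right _ _)⟩
  have hccont : Continuous c := continuous_const.max (continuous_id.min continuous_const)
  have hgc : Continuous (η ∘ c) := hηc.comp_continuous hccont hcmem
  have hfun : η = fun x => if x < -T then 0 else η (c x) := by
    funext x
    by_cases h1 : x < -T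
    · simp [h1, hext1 x h1]
    · push_neg at h1
      simp only [not_lt.mpr h1, if_false]
      by_cases h2 : (0:ℝ) ≤ x
      · have hcx : c x = 0 := by
          simp [hc, min_eq_right h2, max_eq_right hTle]
        rw [hcx, hext2 x h2]
      · push_neg at h2
        have hcx : c x = x := by
          simp [hc, min_eq_left h2.le, max_eq_right h1]
        rw [hcx]
  obtain ⟨B, hB⟩ := isCompact_Icc.exists_bound_of_continuousOn hηc
  refine ⟨?_, max B 0, le_max_right _ _, ?_⟩
  · rw [hfun]
    exact Measurable.ite measurableSet_Iio measurable_const hgc.measurable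
  · intro x
    rw [hfun]
    by_cases h1 : x < -T
    · simp [h1]
    · simp only [h1, if_false]
      calc |η (c x)| ≤ B := by simpa [Real.norm_eq_abs] using hB _ (hcmem x)
        _ ≤ max B 0 := le_max_left _ _


lemma key2 {T : ℝ} (hT : 0 < T) {η : ℝ → ℝ} (mη : Measurable η) {B : ℝ} (hB0 : 0 ≤ B)
    (hB : ∀ x, |η x| ≤ B) {q : ℝ}
    (hqv : Tendsto (fun ε : ℝ => (1/ε) * ∫ s in (0:ℝ)..(-T), (η (s + ε) - η s) ^ 2)
      (𝓝[>] 0) (𝓝 q)) :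
    ∃ M₀ : ℝ, 0 < M₀ ∧ ∀ ε ∈ Ioo (0:ℝ) 1,
      ∫ x in Icc (-T) 0, (η x - η (x - ε)) ^ 2 ≤ M₀ * ε := by
  obtain ⟨δ, hδ0, hδ⟩ := Metric.tendsto_nhdsWithin_nhds.mp hqv 1 one_pos
  set Q := |q| + 1 with hQ
  have hQ0 : 0 < Q := by positivity
  set δ' := min δ T with hδ'def
  have hδ'0 : 0 < δ' := lt_min hδ0 hT
  refine ⟨max (4*B^2 + Q) ((4*B^2*T + 1)/δ'), lt_max_of_lt_right (by positivity), ?_⟩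
  rintro ε ⟨hε0, hε1⟩
  -- pointwise bounds
  have hdiffb : ∀ a b : ℝ, |η a - η b| ≤ 2*B := by
    intro a b
    calc |η a - η b| ≤ |η a| + |η b| := abs_sub _ _
      _ ≤ 2*B := by linarith [hB a, hB b]
  have hsqb : ∀ a b : ℝ, (η a - η b)^2 ≤ 4*B^2 := by
    intro a b
    have h1 : (η a - η b)^2 = |η a - η b|^2 := (sq_abs _).symm
    rw [h1]
    calc |η a - η b|^2 ≤ (2*B)^2 := by
          apply pow_le_pow_left₀ (abs_nonneg _) (hdiffb a b)
      _ = 4*B^2 := by ring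
  have habs : ∀ a b : ℝ, |(η a - η b)^2| ≤ 4*B^2 := fun a b => by
    rw [abs_of_nonneg (sq_nonneg _)]; exact hsqb a b
  set f : ℝ → ℝ := fun s => (η (s + ε) - η s)^2 with hf
  have mf : Measurable f := ((mη.comp (measurable_add_const ε)).sub mη).pow_const 2
  have hbm : ∀ a b : ℝ, IntervalIntegrable f volume a b :=
    fun a b => bm_intervalIntegrable mf (fun x => habs _ _) a b
  have base : ∫ x in Icc (-T) 0, (η x - η (x - ε)) ^ 2
      = ∫ x in (-T)..(0:ℝ), (η x - η (x - ε)) ^ 2 := by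
    rw [intervalIntegral.integral_of_le (by linarith), ← integral_Icc_eq_integral_Ioc]
  rw [base]
  by_cases hcase : ε < δ'
  · -- substitution
    have hsub0 := intervalIntegral.integral_comp_sub_right (a := -T) (b := 0) f ε
    have hsub : ∫ x in (-T)..(0:ℝ), (η x - η (x - ε)) ^ 2 = ∫ x in (-T - ε)..(0 - ε), f x := by
      rw [← hsub0]
      apply intervalIntegral.integral_congr
      intro x _
      simp [hf, sub_add_cancel]
    have chasles := intervalIntegral.integral_add_adjacent_intervals
      (hbm (-T - ε) (-T)) (hbm (-T) (0 - ε))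
    have piece1 : ∫ x in (-T - ε)..(-T), f x ≤ 4*B^2 * ε := by
      have h1 := intervalIntegral.norm_integral_le_of_norm_le_const
        (C := 4*B^2) (f := f) (a := -T - ε) (b := -T)
        (fun x _ => by simpa [hf, Real.norm_eq_abs] using habs (x+ε) x)
      have h2 : |(-T) - (-T - ε)| = ε := by rw [abs_of_nonneg (by linarith)]; ring
      rw [Real.norm_eq_abs, h2] at h1
      exact (le_abs_self _).trans h1
    have piece2 : ∫ x in (-T)..(0 - ε), f x ≤ Q * ε := by
      have chasles2 := intervalIntegral.integral_add_adjacent_intervals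
        (hbm (-T) (0 - ε)) (hbm (0 - ε) 0)
      have hnn : 0 ≤ ∫ x in (0 - ε)..(0:ℝ), f x :=
        intervalIntegral.integral_nonneg (by linarith) (fun x _ => sq_nonneg _)
      have hsymm : ∫ x in (-T)..(0:ℝ), f x = -(∫ s in (0:ℝ)..(-T), f s) := by
        rw [← intervalIntegral.integral_symm]
      have hεδ : ε < δ := lt_of_lt_of_le hcase (min_le_left _ _)
      have hdist := hδ (mem_Ioi.mpr hε0) (by rw [Real.dist_eq]; rw [sub_zero, abs_of_pos hε0]; exact hεδ)
      rw [Real.dist_eq] at hdist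
      have hψ : |(1/ε) * ∫ s in (0:ℝ)..(-T), f s| ≤ Q := by
        have := abs_sub_abs_le_abs_sub ((1/ε) * ∫ s in (0:ℝ)..(-T), f s) q
        rw [hQ]; linarith
      have hI : |∫ s in (0:ℝ)..(-T), f s| ≤ Q * ε := by
        rw [abs_mul, abs_of_pos (by positivity : (0:ℝ) < 1/ε)] at hψ
        rw [← mul_le_mul_iff_right₀ (by positivity : (0:ℝ) < 1/ε)]
        calc (1/ε) * |∫ s in (0:ℝ)..(-T), f s| ≤ Q := hψ
          _ = (1/ε) * (Q * ε) := by field_simp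
      have h5 : ∫ x in (-T)..(0:ℝ), f x ≤ Q * ε := by
        rw [hsymm]
        calc -(∫ s in (0:ℝ)..(-T), f s) ≤ |∫ s in (0:ℝ)..(-T), f s| := neg_le_abs _
          _ ≤ Q * ε := hI
      linarith [chasles2, h5, hnn]
    calc ∫ x in (-T)..(0:ℝ), (η x - η (x - ε)) ^ 2
        = (∫ x in (-T - ε)..(-T), f x) + ∫ x in (-T)..(0 - ε), f x := by
          rw [hsub, ← chasles]
      _ ≤ 4*B^2 * ε + Q * ε := add_le_add piece1 piece2
      _ = (4*B^2 + Q) * ε := by ring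
      _ ≤ max (4*B^2 + Q) ((4*B^2*T + 1)/δ') * ε := by
          apply mul_le_mul_of_nonneg_right (le_max_left _ _) hε0.le
  · push_neg at hcase
    have h1 := intervalIntegral.norm_integral_le_of_norm_le_const
      (C := 4*B^2) (f := fun x => (η x - η (x - ε))^2) (a := -T) (b := 0)
      (fun x _ => by simpa [Real.norm_eq_abs] using habs x (x - ε))
    have h2 : |(0:ℝ) - (-T)| = T := by rw [abs_of_nonneg (by linarith)]; ring
    rw [Real.norm_eq_abs, h2] at h1
    have h3 : ∫ x in (-T)..(0:ℝ), (η x - η (x - ε))^2 ≤ 4*B^2*T := (le_abs_self _).trans h1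
    have h4 : 4*B^2*T + 1 ≤ (4*B^2*T + 1)/δ' * ε := by
      rw [div_mul_eq_mul_div, le_div_iff₀ hδ'0]
      have : 0 ≤ 4*B^2*T + 1 := by positivity
      nlinarith
    calc ∫ x in (-T)..(0:ℝ), (η x - η (x - ε))^2 ≤ 4*B^2*T := h3
      _ ≤ (4*B^2*T + 1)/δ' * ε := by linarith
      _ ≤ max (4*B^2 + Q) ((4*B^2*T + 1)/δ') * ε :=
          mul_le_mul_of_nonneg_right (le_max_right _ _) hε0.le


lemma key3 {T : ℝ} (hT : 0 < T) {η : ℝ → ℝ} (mη : Measurable η) {B : ℝ} (hB0 : 0 ≤ B)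
    (hB : ∀ x, |η x| ≤ B) {ε : ℝ} (hε : 0 < ε) {c : ℝ} (hc0 : 0 ≤ c)
    (hc : ∫ x in Icc (-T) 0, (η x - η (x - ε)) ^ 2 ≤ c * ε)
    {g : ℝ × ℝ → ℝ} (hg : MemLp g 2 (volume.restrict (Icc (-T) 0 ×ˢ Icc (-T) (0:ℝ)))) :
    |∫ p in Icc (-T) 0 ×ˢ Icc (-T) (0:ℝ),
        g p * (η p.1 - η (p.1 - ε)) * (η p.2 - η (p.2 - ε)) / ε| ≤
      c * (eLpNorm g 2 (volume.restrict (Icc (-T) 0 ×ˢ Icc (-T) (0:ℝ)))).toReal := by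
  have hS : volume (Icc (-T) 0 ×ˢ Icc (-T) (0:ℝ)) < ∞ :=
    (isCompact_Icc.prod isCompact_Icc).measure_lt_top
  haveI : IsFiniteMeasure (volume.restrict (Icc (-T) 0 ×ˢ Icc (-T) (0:ℝ))) :=
    ⟨by rwa [Measure.restrict_apply_univ]⟩
  set φ : ℝ → ℝ := fun x => η x - η (x - ε) with hφ
  have mφ : Measurable φ := mη.sub (mη.comp (measurable_id.sub_const ε))
  have bφ : ∀ x, |φ x| ≤ 2*B := by
    intro x
    calc |φ x| ≤ |η x| + |η (x - ε)| := abs_sub _ _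
      _ ≤ 2*B := by linarith [hB x, hB (x - ε)]
  set h : ℝ × ℝ → ℝ := fun p => φ p.1 * φ p.2 / ε with hh
  have mh : Measurable h := ((mφ.comp measurable_fst).mul (mφ.comp measurable_snd)).div_const ε
  have bh : ∀ p, |h p| ≤ (2*B) * (2*B) / ε := by
    intro p
    rw [hh]
    simp only [abs_div, abs_of_pos hε, abs_mul]
    gcongr
    · exact bφ _
    · exact bφ _
  have hmemh : MemLp h 2 (volume.restrict (Icc (-T) 0 ×ˢ Icc (-T) (0:ℝ))) :=
    bm_memℒp mh.aestronglyMeasurable bh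
  have hid : ∫ p in Icc (-T) 0 ×ˢ Icc (-T) (0:ℝ),
      g p * (η p.1 - η (p.1 - ε)) * (η p.2 - η (p.2 - ε)) / ε
      = ∫ p in Icc (-T) 0 ×ˢ Icc (-T) (0:ℝ), g p * h p := by
    apply integral_congr_ae
    apply ae_of_all
    intro p
    rw [hh, hφ]
    ring
  rw [hid]
  have hcs := integral_mul_le_cs hg hmemh
  refine hcs.trans ?_
  rw [mul_comm c _]
  apply mul_le_mul_of_nonneg_left ?_ ENNReal.toReal_nonneg
  -- show (eLpNorm h).toReal ≤ c
  set A := ∫ x in Icc (-T) 0, (η x - η (x - ε)) ^ 2 with hA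
  have hA0 : 0 ≤ A := setIntegral_nonneg measurableSet_Icc (fun x _ => sq_nonneg _)
  have hφA : ∀ D : Set ℝ, D = Icc (-T) 0 → ∫ x in D, φ x * φ x = A := by
    intro D hD
    rw [hD, hA]
    apply integral_congr_ae
    apply ae_of_all
    intro x
    rw [hφ]; ring
  have hsq : ((eLpNorm h 2 (volume.restrict (Icc (-T) 0 ×ˢ Icc (-T) (0:ℝ)))).toReal) ^ 2
      = A * A / ε ^ 2 := by
    rw [eLpNorm_sq hmemh]
    have hint : IntegrableOn (fun p => h p * h p) (Icc (-T) 0 ×ˢ Icc (-T) (0:ℝ)) volume :=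
      bm_integrableOn hS (mh.mul mh)
        (C := ((2*B)*(2*B)/ε) * ((2*B)*(2*B)/ε))
        (fun p => by rw [abs_mul]; exact mul_le_mul (bh p) (bh p) (abs_nonneg _) (by positivity))
    have fub : ∫ p in Icc (-T) 0 ×ˢ Icc (-T) (0:ℝ), h p * h p
        = ∫ x in Icc (-T) 0, ∫ y in Icc (-T) (0:ℝ), h (x, y) * h (x, y) := by
      rw [Measure.volume_eq_prod] at hint ⊢
      exact setIntegral_prod _ hint
    rw [fub]
    have hinner : ∀ x, ∫ y in Icc (-T) (0:ℝ), h (x, y) * h (x, y)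
        = (φ x * φ x / ε ^ 2) * A := by
      intro x
      rw [← hφA _ rfl, ← integral_const_mul]
      apply integral_congr_ae
      apply ae_of_all
      intro y
      rw [hh]
      simp only
      ring
    rw [integral_congr_ae (ae_of_all _ (fun x => hinner x))]
    have : ∀ x : ℝ, (φ x * φ x / ε ^ 2) * A = (φ x * φ x) * (A / ε ^ 2) := by
      intro x; ring
    rw [integral_congr_ae (ae_of_all _ (fun x => this x)), integral_mul_const,
      hφA _ rfl]
    ring
  have ht0 : 0 ≤ (eLpNorm h 2 (volume.restrict (Icc (-T) 0 ×ˢ Icc (-T) (0:ℝ)))).toReal :=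
    ENNReal.toReal_nonneg
  have hsq' : ((eLpNorm h 2 (volume.restrict (Icc (-T) 0 ×ˢ Icc (-T) (0:ℝ)))).toReal) ^ 2 ≤ c ^ 2 := by
    rw [hsq]
    have h1 : A / ε ≤ c := by rw [div_le_iff₀ hε]; exact hc
    have h2 : A * A / ε ^ 2 = (A / ε) ^ 2 := by ring
    rw [h2]
    exact pow_le_pow_left₀ (by positivity) h1 2
  calc (eLpNorm h 2 (volume.restrict (Icc (-T) 0 ×ˢ Icc (-T) (0:ℝ)))).toReal
      = Real.sqrt (((eLpNorm h 2 (volume.restrict (Icc (-T) 0 ×ˢ Icc (-T) (0:ℝ)))).toReal) ^ 2) :=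
        (Real.sqrt_sq ht0).symm
    _ ≤ Real.sqrt (c ^ 2) := Real.sqrt_le_sqrt hsq'
    _ = c := Real.sqrt_sq hc0


lemma key4 {T : ℝ} (hT : 0 < T) {η : ℝ → ℝ} (mη : Measurable η) {B : ℝ} (hB0 : 0 ≤ B)
    (hB : ∀ x, |η x| ≤ B) (hext1 : ∀ x < -T, η x = 0)
    {M₀ : ℝ} (hM₀ : 0 < M₀)
    (hM : ∀ ε ∈ Ioo (0:ℝ) 1, ∫ x in Icc (-T) 0, (η x - η (x - ε)) ^ 2 ≤ M₀ * ε)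
    {g₀ : ℝ × ℝ → ℝ} {L : ℝ≥0} (hL : LipschitzWith L g₀) {Kg : ℝ} (hKg0 : 0 ≤ Kg)
    (hKg : ∀ p, |g₀ p| ≤ Kg) :
    Tendsto (fun ε : ℝ => ∫ p in Icc (-T) 0 ×ˢ Icc (-T) (0:ℝ),
      g₀ p * (η p.1 - η (p.1 - ε)) * (η p.2 - η (p.2 - ε)) / ε) (𝓝[>] 0) (𝓝 0) := by
  have hS : volume (Icc (-T) 0 ×ˢ Icc (-T) (0:ℝ)) < ∞ :=
    (isCompact_Icc.prod isCompact_Icc).measure_lt_top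
  have hIfin : volume (Icc (-T) (0:ℝ)) < ∞ := isCompact_Icc.measure_lt_top
  haveI : IsFiniteMeasure (volume.restrict (Icc (-T) (0:ℝ))) :=
    ⟨by rwa [Measure.restrict_apply_univ]⟩
  have mg₀ : Measurable g₀ := hL.continuous.measurable
  set K : ℝ := (L:ℝ)*B*(T+1) + Kg*B with hKdef
  have hK0 : 0 ≤ K := by positivity
  have hmain : ∀ ε ∈ Ioo (0:ℝ) 1,
      |∫ p in Icc (-T) 0 ×ˢ Icc (-T) (0:ℝ),
        g₀ p * (η p.1 - η (p.1 - ε)) * (η p.2 - η (p.2 - ε)) / ε|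
      ≤ K * (Real.sqrt (M₀ * ε) * Real.sqrt T) := by
    rintro ε ⟨hε0, hε1⟩
    set φ : ℝ → ℝ := fun x => η x - η (x - ε) with hφ
    have mφ : Measurable φ := mη.sub (mη.comp (measurable_id.sub_const ε))
    have bφ : ∀ x, |φ x| ≤ 2*B := by
      intro x
      calc |φ x| ≤ |η x| + |η (x - ε)| := abs_sub _ _
        _ ≤ 2*B := by linarith [hB x, hB (x - ε)]
    set G : ℝ → ℝ := fun x => ∫ y in Icc (-T) (0:ℝ), g₀ (x, y) * φ y with hG
    -- the summation-by-parts estimate on the inner integral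
    have claimG : ∀ x, |G x| ≤ K * ε := by
      intro x
      have m1 : Measurable fun y => g₀ (x, y) * η y :=
        ((hL.continuous.comp (continuous_const.prodMk continuous_id)).measurable).mul mη
      have b1 : ∀ y, |g₀ (x, y) * η y| ≤ Kg * B := fun y => by
        rw [abs_mul]; exact mul_le_mul (hKg _) (hB _) (abs_nonneg _) hKg0
      have m2 : Measurable fun y => g₀ (x, y) * η (y - ε) :=
        ((hL.continuous.comp (continuous_const.prodMk continuous_id)).measurable).mul
          (mη.comp (measurable_id.sub_const ε))
      have b2 : ∀ y, |g₀ (x, y) * η (y - ε)| ≤ Kg * B := fun y => by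
        rw [abs_mul]; exact mul_le_mul (hKg _) (hB _) (abs_nonneg _) hKg0
      have m3 : Measurable fun s => g₀ (x, s + ε) * η s :=
        ((hL.continuous.comp
          (continuous_const.prodMk (continuous_id.add continuous_const))).measurable).mul mη
      have b3 : ∀ s, |g₀ (x, s + ε) * η s| ≤ Kg * B := fun s => by
        rw [abs_mul]; exact mul_le_mul (hKg _) (hB _) (abs_nonneg _) hKg0
      have m4 : Measurable fun y => g₀ (x, y) * η y - g₀ (x, y + ε) * η y :=
        m1.sub (((hL.continuous.comp
          (continuous_const.prodMk (continuous_id.add continuous_const))).measurable).mul mη)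
      have b4 : ∀ y, |g₀ (x, y) * η y - g₀ (x, y + ε) * η y| ≤ ((L:ℝ)*ε) * B := by
        intro y
        have hd : |g₀ (x, y) - g₀ (x, y + ε)| ≤ (L:ℝ) * ε := by
          have := hL.dist_le_mul (x, y) (x, y + ε)
          rw [Real.dist_eq] at this
          refine this.trans ?_
          have hdd : dist (x, y) (x, y + ε) = ε := by
            rw [Prod.dist_eq]
            simp only [dist_self, Real.dist_eq]
            rw [show y - (y + ε) = -ε by ring, abs_neg, abs_of_nonneg hε0.le]
            exact max_eq_right hε0.le
          rw [hdd]
        calc |g₀ (x, y) * η y - g₀ (x, y + ε) * η y|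
            = |g₀ (x, y) - g₀ (x, y + ε)| * |η y| := by rw [← abs_mul]; ring_nf
          _ ≤ ((L:ℝ)*ε) * B :=
            mul_le_mul hd (hB _) (abs_nonneg _) (by positivity)
      have hGint : G x = ∫ y in (-T)..(0:ℝ), g₀ (x, y) * φ y := by
        rw [hG, intervalIntegral.integral_of_le (by linarith : -T ≤ (0:ℝ)),
          ← integral_Icc_eq_integral_Ioc]
      have hA1 : ∫ y in (-T)..(0:ℝ), g₀ (x, y) * φ y
          = (∫ y in (-T)..(0:ℝ), g₀ (x, y) * η y)
            - ∫ y in (-T)..(0:ℝ), g₀ (x, y) * η (y - ε) := by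
        have he : EqOn (fun y => g₀ (x, y) * φ y)
            (fun y => g₀ (x, y) * η y - g₀ (x, y) * η (y - ε)) (uIcc (-T) 0) := by
          intro y _
          simp only [hφ]; ring
        rw [intervalIntegral.integral_congr he,
          intervalIntegral.integral_sub (bm_intervalIntegrable m1 b1 _ _)
            (bm_intervalIntegrable m2 b2 _ _)]
      have hA2 : ∫ y in (-T)..(0:ℝ), g₀ (x, y) * η (y - ε)
          = ∫ s in (-T - ε)..(0 - ε), g₀ (x, s + ε) * η s := by
        have h0 := intervalIntegral.integral_comp_sub_right (a := -T) (b := 0)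
          (fun s => g₀ (x, s + ε) * η s) ε
        rw [← h0]
        apply intervalIntegral.integral_congr
        intro y _
        simp [sub_add_cancel]
      have hA3 : ∫ s in (-T - ε)..(0 - ε), g₀ (x, s + ε) * η s
          = (∫ s in (-T - ε)..(-T), g₀ (x, s + ε) * η s)
            + ∫ s in (-T)..(0 - ε), g₀ (x, s + ε) * η s := by
        rw [intervalIntegral.integral_add_adjacent_intervals
          (bm_intervalIntegrable m3 b3 _ _) (bm_intervalIntegrable m3 b3 _ _)]
      have hA4 : ∫ s in (-T - ε)..(-T), g₀ (x, s + ε) * η s = 0 := by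
        have hae : ∀ᵐ s : ℝ, s ∈ Set.uIoc (-T - ε) (-T) → g₀ (x, s + ε) * η s = 0 := by
          have h0 : ∀ᵐ s : ℝ, s ≠ -T := by simp [ae_iff]
          filter_upwards [h0] with s hs hmem
          rw [uIoc_of_le (by linarith : -T - ε ≤ -T)] at hmem
          have : s < -T := lt_of_le_of_ne hmem.2 hs
          rw [hext1 s this, mul_zero]
        rw [intervalIntegral.integral_congr_ae hae]
        simp
      have hA5 : ∫ y in (-T)..(0:ℝ), g₀ (x, y) * η y
          = (∫ y in (-T)..(0 - ε), g₀ (x, y) * η y)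
            + ∫ y in (0 - ε)..(0:ℝ), g₀ (x, y) * η y := by
        rw [intervalIntegral.integral_add_adjacent_intervals
          (bm_intervalIntegrable m1 b1 _ _) (bm_intervalIntegrable m1 b1 _ _)]
      have hcomb : G x = (∫ y in (-T)..(0 - ε),
            (g₀ (x, y) * η y - g₀ (x, y + ε) * η y))
          + ∫ y in (0 - ε)..(0:ℝ), g₀ (x, y) * η y := by
        rw [hGint, hA1, hA2, hA3, hA4, hA5, zero_add,
          intervalIntegral.integral_sub (bm_intervalIntegrable m1 b1 _ _)
            (bm_intervalIntegrable m3 b3 _ _)]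
        ring
      have hb1 : ‖∫ y in (-T)..(0 - ε), (g₀ (x, y) * η y - g₀ (x, y + ε) * η y)‖
          ≤ ((L:ℝ)*ε*B) * |(0 - ε) - (-T)| :=
        intervalIntegral.norm_integral_le_of_norm_le_const
          (fun y _ => by rw [Real.norm_eq_abs]; exact b4 y)
      have hb2 : ‖∫ y in (0 - ε)..(0:ℝ), g₀ (x, y) * η y‖ ≤ (Kg*B) * |(0:ℝ) - (0 - ε)| :=
        intervalIntegral.norm_integral_le_of_norm_le_const
          (fun y _ => by rw [Real.norm_eq_abs]; exact b1 y)
      have habs1 : |(0 - ε) - (-T)| ≤ T + 1 := by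
        rw [abs_le]; constructor <;> linarith
      have habs2 : |(0:ℝ) - (0 - ε)| = ε := by
        rw [abs_of_nonneg (by linarith)]; ring
      rw [hcomb]
      calc |(∫ y in (-T)..(0 - ε), (g₀ (x, y) * η y - g₀ (x, y + ε) * η y))
            + ∫ y in (0 - ε)..(0:ℝ), g₀ (x, y) * η y|
          ≤ |∫ y in (-T)..(0 - ε), (g₀ (x, y) * η y - g₀ (x, y + ε) * η y)|
            + |∫ y in (0 - ε)..(0:ℝ), g₀ (x, y) * η y| := abs_add_le _ _
        _ ≤ ((L:ℝ)*ε*B) * (T + 1) + (Kg*B) * ε := by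
            rw [Real.norm_eq_abs] at hb1 hb2
            rw [habs2] at hb2
            have h1 : ((L:ℝ)*ε*B) * |(0 - ε) - (-T)| ≤ ((L:ℝ)*ε*B) * (T + 1) :=
              mul_le_mul_of_nonneg_left habs1 (by positivity)
            exact add_le_add (hb1.trans h1) hb2
        _ = K * ε := by rw [hKdef]; ring
    -- Fubini
    have mfull : Measurable fun p : ℝ × ℝ => g₀ p * φ p.1 * φ p.2 / ε :=
      ((mg₀.mul (mφ.comp measurable_fst)).mul (mφ.comp measurable_snd)).div_const ε
    have bfull : ∀ p : ℝ × ℝ, |g₀ p * φ p.1 * φ p.2 / ε| ≤ Kg * (2*B) * (2*B) / ε := by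
      intro p
      rw [abs_div, abs_of_pos hε0, abs_mul, abs_mul]
      gcongr
      · exact hKg _
      · exact bφ _
      · exact bφ _
    have hint : IntegrableOn (fun p : ℝ × ℝ => g₀ p * φ p.1 * φ p.2 / ε)
        (Icc (-T) 0 ×ˢ Icc (-T) (0:ℝ)) volume := bm_integrableOn hS mfull bfull
    have fub : ∫ p in Icc (-T) 0 ×ˢ Icc (-T) (0:ℝ), g₀ p * φ p.1 * φ p.2 / ε
        = ∫ x in Icc (-T) 0, ∫ y in Icc (-T) (0:ℝ), g₀ (x, y) * φ x * φ y / ε := by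
      rw [Measure.volume_eq_prod] at hint ⊢
      exact setIntegral_prod _ hint
    have hinner : ∀ x : ℝ, ∫ y in Icc (-T) (0:ℝ), g₀ (x, y) * φ x * φ y / ε
        = G x * (φ x / ε) := by
      intro x
      rw [hG]
      simp only
      rw [← integral_mul_const]
      apply integral_congr_ae
      apply ae_of_all
      intro y
      ring
    have hTe : ∫ p in Icc (-T) 0 ×ˢ Icc (-T) (0:ℝ),
        g₀ p * (η p.1 - η (p.1 - ε)) * (η p.2 - η (p.2 - ε)) / ε
        = ∫ x in Icc (-T) 0, G x * (φ x / ε) := by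
      rw [← integral_congr_ae (ae_of_all _ hinner), ← fub]
    rw [hTe]
    -- bound the outer integral
    have hKφint : Integrable (fun x => K * |φ x|) (volume.restrict (Icc (-T) (0:ℝ))) :=
      bm_integrableOn hIfin (measurable_const.mul mφ.abs)
        (C := K * (2*B)) (fun x => by
          rw [abs_mul, abs_abs, abs_of_nonneg hK0]
          exact mul_le_mul_of_nonneg_left (bφ x) hK0)
    have houter : ‖∫ x in Icc (-T) 0, G x * (φ x / ε)‖ ≤ ∫ x in Icc (-T) 0, K * |φ x| := by
      apply norm_integral_le_of_norm_le hKφint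
      apply ae_of_all
      intro x
      rw [Real.norm_eq_abs, abs_mul, abs_div, abs_of_pos hε0]
      calc |G x| * (|φ x| / ε) ≤ (K * ε) * (|φ x| / ε) := by
            apply mul_le_mul_of_nonneg_right (claimG x) (by positivity)
        _ = K * |φ x| := by field_simp
    -- Cauchy-Schwarz for ∫ |φ|
    have hone : MemLp (fun _ : ℝ => (1:ℝ)) 2 (volume.restrict (Icc (-T) (0:ℝ))) :=
      bm_memℒp aestronglyMeasurable_const (C := 1) (fun x => by norm_num)
    have hphi : MemLp (fun x => |φ x|) 2 (volume.restrict (Icc (-T) (0:ℝ))) :=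
      bm_memℒp mφ.abs.aestronglyMeasurable (C := 2*B) (fun x => by rw [abs_abs]; exact bφ x)
    have hcs := integral_mul_le_cs hphi hone
    have ht1 : (eLpNorm (fun x => |φ x|) 2 (volume.restrict (Icc (-T) (0:ℝ)))).toReal
        ≤ Real.sqrt (M₀ * ε) := by
      have hsq : ((eLpNorm (fun x => |φ x|) 2 (volume.restrict (Icc (-T) (0:ℝ)))).toReal) ^ 2
          ≤ M₀ * ε := by
        rw [eLpNorm_sq hphi]
        calc ∫ x in Icc (-T) 0, |φ x| * |φ x|
            = ∫ x in Icc (-T) 0, (η x - η (x - ε)) ^ 2 := by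
              apply integral_congr_ae; apply ae_of_all; intro x
              show |φ x| * |φ x| = (η x - η (x - ε)) ^ 2
              rw [abs_mul_abs_self]
              simp only [hφ]; ring
          _ ≤ M₀ * ε := hM ε ⟨hε0, hε1⟩
      calc (eLpNorm (fun x => |φ x|) 2 (volume.restrict (Icc (-T) (0:ℝ)))).toReal
          = Real.sqrt (((eLpNorm (fun x => |φ x|) 2
              (volume.restrict (Icc (-T) (0:ℝ)))).toReal) ^ 2) :=
            (Real.sqrt_sq ENNReal.toReal_nonneg).symm
        _ ≤ Real.sqrt (M₀ * ε) := Real.sqrt_le_sqrt hsq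
    have ht2 : (eLpNorm (fun _ : ℝ => (1:ℝ)) 2 (volume.restrict (Icc (-T) (0:ℝ)))).toReal
        ≤ Real.sqrt T := by
      have hsq : ((eLpNorm (fun _ : ℝ => (1:ℝ)) 2
          (volume.restrict (Icc (-T) (0:ℝ)))).toReal) ^ 2 ≤ T := by
        rw [eLpNorm_sq hone]
        have : ∫ (_ : ℝ) in Icc (-T) 0, (1:ℝ) * 1 = (volume (Icc (-T) (0:ℝ))).toReal := by
          simp
          rw [ENNReal.toReal_ofReal hT.le, max_eq_left hT.le]
        rw [this, Real.volume_Icc]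
        rw [ENNReal.toReal_ofReal (by linarith)]
        linarith
      calc (eLpNorm (fun _ : ℝ => (1:ℝ)) 2 (volume.restrict (Icc (-T) (0:ℝ)))).toReal
          = Real.sqrt (((eLpNorm (fun _ : ℝ => (1:ℝ)) 2
              (volume.restrict (Icc (-T) (0:ℝ)))).toReal) ^ 2) :=
            (Real.sqrt_sq ENNReal.toReal_nonneg).symm
        _ ≤ Real.sqrt T := Real.sqrt_le_sqrt hsq
    have hphiint : ∫ x in Icc (-T) 0, |φ x| ≤ Real.sqrt (M₀ * ε) * Real.sqrt T := by
      have h1 : ∫ x in Icc (-T) 0, |φ x| = ∫ x in Icc (-T) 0, |φ x| * 1 := by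
        simp
      rw [h1]
      calc ∫ x in Icc (-T) 0, |φ x| * 1
          ≤ |∫ x in Icc (-T) 0, |φ x| * 1| := le_abs_self _
        _ ≤ _ * _ := hcs
        _ ≤ Real.sqrt (M₀ * ε) * Real.sqrt T :=
            mul_le_mul ht1 ht2 ENNReal.toReal_nonneg (Real.sqrt_nonneg _)
    calc |∫ x in Icc (-T) 0, G x * (φ x / ε)|
        ≤ ∫ x in Icc (-T) 0, K * |φ x| := by
          simpa using houter
      _ = K * ∫ x in Icc (-T) 0, |φ x| := integral_const_mul K _
      _ ≤ K * (Real.sqrt (M₀ * ε) * Real.sqrt T) :=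
          mul_le_mul_of_nonneg_left hphiint hK0
  -- squeeze
  have hcont : Continuous fun ε : ℝ => K * (Real.sqrt (M₀ * ε) * Real.sqrt T) := by
    fun_prop
  have htend : Tendsto (fun ε : ℝ => K * (Real.sqrt (M₀ * ε) * Real.sqrt T)) (𝓝[>] 0) (𝓝 0) := by
    have := (hcont.tendsto 0).mono_left (nhdsWithin_le_nhds (s := Ioi (0:ℝ)))
    simpa using this
  have hIoo : Ioo (0:ℝ) 1 ∈ 𝓝[>] (0:ℝ) := Ioo_mem_nhdsGT zero_lt_one
  have hbound : ∀ᶠ ε in 𝓝[>] (0:ℝ),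
      |∫ p in Icc (-T) 0 ×ˢ Icc (-T) (0:ℝ),
        g₀ p * (η p.1 - η (p.1 - ε)) * (η p.2 - η (p.2 - ε)) / ε|
      ≤ K * (Real.sqrt (M₀ * ε) * Real.sqrt T) := by
    filter_upwards [hIoo] with ε hε
    exact hmain ε hε
  have hneg : Tendsto (fun ε : ℝ => -(K * (Real.sqrt (M₀ * ε) * Real.sqrt T))) (𝓝[>] 0) (𝓝 0) := by
    simpa using htend.neg
  refine tendsto_of_tendsto_of_tendsto_of_le_of_le' hneg htend ?_ ?_
  · filter_upwards [hbound] with ε hε; linarith [(abs_le.mp hε).1]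
  · filter_upwards [hbound] with ε hε; exact (abs_le.mp hε).2


lemma lip_approx (f : ℝ × ℝ → ℝ) (hf : Continuous f) (hcs : HasCompactSupport f)
    {θ : ℝ} (hθ : 0 < θ) :
    ∃ (g₀ : ℝ × ℝ → ℝ) (L : ℝ≥0) (Kg : ℝ), LipschitzWith L g₀ ∧ 0 ≤ Kg ∧
      (∀ p, |g₀ p| ≤ Kg) ∧ ∀ p, |f p - g₀ p| ≤ θ := by
  obtain ⟨Kf, hKf⟩ := hf.bounded_above_of_compact_support hcs
  have hKf' : ∀ p, |f p| ≤ Kf := fun p => by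
    rw [← Real.norm_eq_abs]; exact hKf p
  have hKf0 : 0 ≤ Kf := (abs_nonneg (f (0,0))).trans (hKf' (0,0))
  have huc : UniformContinuous f := hcs.uniformContinuous_of_continuous hf
  obtain ⟨δ, hδ0, hδ⟩ := Metric.uniformContinuous_iff.mp huc θ hθ
  set ℓ : ℝ := 2 * Kf / δ + 1 with hℓdef
  have hℓ0 : 0 < ℓ := by positivity
  have hℓδ : 2 * Kf + δ ≤ ℓ * δ := by
    rw [hℓdef, add_mul, div_mul_cancel₀ _ (ne_of_gt hδ0), one_mul]
  set g₀ : ℝ × ℝ → ℝ := fun p => ⨅ q : ℝ × ℝ, (f q + ℓ * dist p q) with hg₀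
  have hbdd : ∀ p : ℝ × ℝ, BddBelow (range fun q : ℝ × ℝ => f q + ℓ * dist p q) := by
    intro p
    refine ⟨-Kf, ?_⟩
    rintro z ⟨q, rfl⟩
    simp only
    have h2 : 0 ≤ ℓ * dist p q := by positivity
    linarith [(abs_le.mp (hKf' q)).1]
  have hle : ∀ p, g₀ p ≤ f p := by
    intro p
    have := ciInf_le (hbdd p) p
    simpa using this
  have hge : ∀ p, f p - θ ≤ g₀ p := by
    intro p
    apply le_ciInf
    intro q
    by_cases hd : dist p q < δ
    · have := hδ hd
      rw [Real.dist_eq] at this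
      have h1 := (abs_lt.mp this).2
      have h2 : 0 ≤ ℓ * dist p q := by positivity
      linarith
    · push_neg at hd
      have h1 : ℓ * δ ≤ ℓ * dist p q := mul_le_mul_of_nonneg_left hd hℓ0.le
      have h2 := (abs_le.mp (hKf' q)).1
      have h3 := (abs_le.mp (hKf' p)).2
      linarith
  have hlb : ∀ p, -Kf ≤ g₀ p := by
    intro p
    apply le_ciInf
    intro q
    have h2 := (abs_le.mp (hKf' q)).1
    have : 0 ≤ ℓ * dist p q := by positivity
    linarith
  have hlip : ∀ p p', g₀ p ≤ g₀ p' + ℓ * dist p p' := by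
    intro p p'
    rw [← sub_le_iff_le_add]
    apply le_ciInf
    intro q
    rw [sub_le_iff_le_add]
    calc g₀ p ≤ f q + ℓ * dist p q := ciInf_le (hbdd p) q
      _ ≤ f q + ℓ * (dist p p' + dist p' q) := by
          have := dist_triangle p p' q
          have h2 : ℓ * dist p q ≤ ℓ * (dist p p' + dist p' q) :=
            mul_le_mul_of_nonneg_left this hℓ0.le
          linarith
      _ = f q + ℓ * dist p' q + ℓ * dist p p' := by ring
  refine ⟨g₀, ⟨ℓ, hℓ0.le⟩, Kf, ?_, hKf0, ?_, ?_⟩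
  · apply LipschitzWith.of_dist_le_mul
    intro p p'
    rw [Real.dist_eq, abs_le]
    constructor
    · have := hlip p' p
      rw [dist_comm p' p] at this
      show -(ℓ * dist p p') ≤ g₀ p - g₀ p'
      linarith
    · have := hlip p p'
      show g₀ p - g₀ p' ≤ ℓ * dist p p'
      linarith
  · intro p
    rw [abs_le]
    exact ⟨hlb p, (hle p).trans ((abs_le.mp (hKf' p)).2)⟩
  · intro p
    rw [abs_le]
    constructor
    · linarith [hle p]
    · linarith [hge p]


lemma key5 {T : ℝ} (hT : 0 < T) {g : ℝ × ℝ → ℝ}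
    (hg : MemLp g 2 (volume.restrict (Icc (-T) 0 ×ˢ Icc (-T) (0:ℝ))))
    {θ : ℝ} (hθ : 0 < θ) :
    ∃ (g₀ : ℝ × ℝ → ℝ) (L : ℝ≥0) (Kg : ℝ), LipschitzWith L g₀ ∧ 0 ≤ Kg ∧
      (∀ p, |g₀ p| ≤ Kg) ∧
      MemLp g₀ 2 (volume.restrict (Icc (-T) 0 ×ˢ Icc (-T) (0:ℝ))) ∧
      (eLpNorm (fun p => g p - g₀ p) 2
        (volume.restrict (Icc (-T) 0 ×ˢ Icc (-T) (0:ℝ)))).toReal ≤ θ := by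
  set S : Set (ℝ × ℝ) := Icc (-T) 0 ×ˢ Icc (-T) (0:ℝ) with hSdef
  have hSm : MeasurableSet S := (measurableSet_Icc.prod measurableSet_Icc)
  have hSfin : volume S < ∞ := (isCompact_Icc.prod isCompact_Icc).measure_lt_top
  haveI : IsFiniteMeasure (volume.restrict S) := ⟨by rwa [Measure.restrict_apply_univ]⟩
  -- extend to the whole plane
  set g' : ℝ × ℝ → ℝ := S.indicator g with hg'def
  have hg' : MemLp g' 2 volume := (memLp_indicator_iff_restrict hSm).mpr hg
  -- continuous compactly supported approximation
  obtain ⟨f, fcs, hfg', fcont, _⟩ := hg'.exists_hasCompactSupport_eLpNorm_sub_le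
    (by norm_num : (2:ℝ≥0∞) ≠ ∞)
    (ε := ENNReal.ofReal (θ/2)) ((ENNReal.ofReal_pos.mpr (by positivity)).ne')
  -- Lipschitz approximation of f
  set V : ℝ≥0∞ := (volume.restrict S) Set.univ ^ ((2:ℝ≥0∞).toReal)⁻¹ with hVdef
  have hVne : V ≠ ∞ := by
    rw [hVdef]
    apply ENNReal.rpow_ne_top_of_nonneg (by norm_num)
    rw [Measure.restrict_apply_univ]
    exact hSfin.ne
  set θ₂ : ℝ := (θ/2) / (V.toReal + 1) with hθ₂def
  have hθ₂0 : 0 < θ₂ := by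
    rw [hθ₂def]
    have : 0 ≤ V.toReal := ENNReal.toReal_nonneg
    positivity
  obtain ⟨g₀, L, Kg, hlip, hKg0, hKgb, happ⟩ := lip_approx f fcont fcs hθ₂0
  refine ⟨g₀, L, Kg, hlip, hKg0, hKgb, bm_memℒp hlip.continuous.measurable.aestronglyMeasurable hKgb, ?_⟩
  -- assemble the estimate
  have step1 : (fun p => g p - g₀ p) =ᵐ[volume.restrict S] (fun p => g' p - g₀ p) := by
    filter_upwards [indicator_ae_eq_restrict (f := g) hSm] with p hp
    rw [hg'def, hp]
  have meas_gf : AEStronglyMeasurable (fun p => g' p - f p) (volume.restrict S) :=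
    ((hg'.aestronglyMeasurable).sub fcont.aestronglyMeasurable).restrict
  have meas_fg₀ : AEStronglyMeasurable (fun p => f p - g₀ p) (volume.restrict S) :=
    (fcont.sub hlip.continuous).aestronglyMeasurable.restrict
  have htri : eLpNorm (fun p => g' p - g₀ p) 2 (volume.restrict S)
      ≤ eLpNorm (fun p => g' p - f p) 2 (volume.restrict S)
        + eLpNorm (fun p => f p - g₀ p) 2 (volume.restrict S) := by
    have hsum : (fun p => g' p - g₀ p) = (fun p => g' p - f p) + fun p => f p - g₀ p := by
      funext p; simp [Pi.add_apply]
    rw [hsum]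
    exact eLpNorm_add_le meas_gf meas_fg₀ (by norm_num)
  have hterm1 : eLpNorm (fun p => g' p - f p) 2 (volume.restrict S)
      ≤ ENNReal.ofReal (θ/2) := by
    refine le_trans (eLpNorm_restrict_le _ _ _ _) ?_
    have : (fun p => g' p - f p) = g' - f := rfl
    rw [this]
    exact hfg'
  have hterm2 : eLpNorm (fun p => f p - g₀ p) 2 (volume.restrict S)
      ≤ ENNReal.ofReal (θ/2) := by
    have hb := eLpNorm_le_of_ae_bound (μ := volume.restrict S) (p := 2)
      (f := fun p => f p - g₀ p) (C := θ₂)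
      (ae_of_all _ (fun p => by rw [Real.norm_eq_abs]; exact happ p))
    refine hb.trans ?_
    rw [← hVdef]
    have h1 : V ≤ ENNReal.ofReal (V.toReal + 1) := by
      conv_lhs => rw [← ENNReal.ofReal_toReal hVne]
      exact ENNReal.ofReal_le_ofReal (by linarith)
    calc V * ENNReal.ofReal θ₂ ≤ ENNReal.ofReal (V.toReal + 1) * ENNReal.ofReal θ₂ :=
          mul_le_mul_left h1 _
      _ = ENNReal.ofReal ((V.toReal + 1) * θ₂) :=
          (ENNReal.ofReal_mul (by positivity)).symm
      _ = ENNReal.ofReal (θ/2) := by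
          congr 1
          rw [hθ₂def]
          field_simp
  have htotal : eLpNorm (fun p => g p - g₀ p) 2 (volume.restrict S) ≤ ENNReal.ofReal θ := by
    rw [eLpNorm_congr_ae step1]
    refine htri.trans ?_
    calc eLpNorm (fun p => g' p - f p) 2 (volume.restrict S)
          + eLpNorm (fun p => f p - g₀ p) 2 (volume.restrict S)
        ≤ ENNReal.ofReal (θ/2) + ENNReal.ofReal (θ/2) := add_le_add hterm1 hterm2
      _ = ENNReal.ofReal θ := by
          rw [← ENNReal.ofReal_add (by positivity) (by positivity)]
          norm_num
  exact ENNReal.toReal_le_of_le_ofReal hθ.le htotal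


end Stmt13Aux

open Stmt13Aux in
/-- Banach–Steinhaus argument in the proof of the representation of the horizontal
derivative: if `η` is continuous on `[-T,0]` (extended by `0` left of `-T` and by `η(0)`
right of `0`) and has finite deterministic quadratic variation on `[-T,0]`, then the
operators `T_ε g = ∫∫ g(x,y)(η(x)−η(x−ε))(η(y)−η(y−ε))/ε dx dy` on `L²([-T,0]²)` are
uniformly bounded for `0 < ε < 1`, and `T_ε g → 0` as `ε → 0⁺` for every `g ∈ L²`. -/
theorem stmt13 (T : ℝ) (hT : 0 < T) (η : ℝ → ℝ)
    (hηc : ContinuousOn η (Set.Icc (-T) 0))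
    (hext1 : ∀ x < -T, η x = 0)
    (hext2 : ∀ x ≥ (0:ℝ), η x = η 0)
    (qv : ℝ → ℝ)
    (hqv : ∀ x ∈ Set.Icc (-T) (0:ℝ),
      Tendsto (fun ε : ℝ => (1 / ε) * ∫ s in (0:ℝ)..x, (η (s + ε) - η s) ^ 2)
        (𝓝[>] 0) (𝓝 (qv x))) :
    (∃ M, ∀ ε ∈ Set.Ioo (0:ℝ) 1, ∀ g : ℝ × ℝ → ℝ,
      MeasureTheory.MemLp g 2
        (MeasureTheory.volume.restrict (Set.Icc (-T) 0 ×ˢ Set.Icc (-T) (0:ℝ))) →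
      |∫ p in Set.Icc (-T) 0 ×ˢ Set.Icc (-T) (0:ℝ),
          g p * (η p.1 - η (p.1 - ε)) * (η p.2 - η (p.2 - ε)) / ε| ≤
        M * (MeasureTheory.eLpNorm g 2
          (MeasureTheory.volume.restrict (Set.Icc (-T) 0 ×ˢ Set.Icc (-T) (0:ℝ)))).toReal) ∧
    ∀ g : ℝ × ℝ → ℝ,
      MeasureTheory.MemLp g 2
        (MeasureTheory.volume.restrict (Set.Icc (-T) 0 ×ˢ Set.Icc (-T) (0:ℝ))) →
      Tendsto (fun ε : ℝ => ∫ p in Set.Icc (-T) 0 ×ˢ Set.Icc (-T) (0:ℝ),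
          g p * (η p.1 - η (p.1 - ε)) * (η p.2 - η (p.2 - ε)) / ε)
        (𝓝[>] 0) (𝓝 0) := by
  obtain ⟨mη, B, hB0, hB⟩ := eta_meas hT hηc hext1 hext2
  have hqvT := hqv (-T) ⟨le_refl _, by linarith⟩
  obtain ⟨M₀, hM₀, hM⟩ := key2 hT mη hB0 hB hqvT
  have hSfin : volume (Set.Icc (-T) 0 ×ˢ Set.Icc (-T) (0:ℝ)) < ∞ :=
    (isCompact_Icc.prod isCompact_Icc).measure_lt_top
  haveI : IsFiniteMeasure (volume.restrict (Set.Icc (-T) 0 ×ˢ Set.Icc (-T) (0:ℝ))) :=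
    ⟨by rwa [Measure.restrict_apply_univ]⟩
  constructor
  · exact ⟨M₀, fun ε hε g hg => key3 hT mη hB0 hB hε.1 hM₀.le (hM ε hε) hg⟩
  · intro g hg
    rw [Metric.tendsto_nhds]
    intro θ hθ
    set θ' : ℝ := θ / (2 * (M₀ + 1)) with hθ'def
    have hθ'0 : 0 < θ' := by rw [hθ'def]; positivity
    obtain ⟨g₀, L, Kg, hlip, hKg0, hKgb, hmem₀, hsmall⟩ := key5 hT hg hθ'0
    have htend₀ := key4 hT mη hB0 hB hext1 hM₀ hM hlip hKg0 hKgb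
    have hev1 := Metric.tendsto_nhds.mp htend₀ (θ/2) (by positivity)
    have hIoo : Set.Ioo (0:ℝ) 1 ∈ 𝓝[>] (0:ℝ) := Ioo_mem_nhdsGT zero_lt_one
    filter_upwards [hev1, hIoo] with ε h2 hεI
    obtain ⟨hε0, hε1⟩ := hεI
    -- split the operator
    set φ : ℝ → ℝ := fun x => η x - η (x - ε) with hφ
    have mφ : Measurable φ := mη.sub (mη.comp (measurable_id.sub_const ε))
    have bφ : ∀ x, |φ x| ≤ 2*B := by
      intro x
      calc |φ x| ≤ |η x| + |η (x - ε)| := abs_sub _ _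
        _ ≤ 2*B := by linarith [hB x, hB (x - ε)]
    set h : ℝ × ℝ → ℝ := fun p => φ p.1 * φ p.2 / ε with hh
    have mh : Measurable h := ((mφ.comp measurable_fst).mul (mφ.comp measurable_snd)).div_const ε
    have bh : ∀ p, |h p| ≤ (2*B) * (2*B) / ε := by
      intro p
      rw [hh]
      simp only [abs_div, abs_of_pos hε0, abs_mul]
      gcongr
      · exact bφ _
      · exact bφ _
    have hmemh : MemLp h 2 (volume.restrict (Set.Icc (-T) 0 ×ˢ Set.Icc (-T) (0:ℝ))) :=
      bm_memℒp mh.aestronglyMeasurable bh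
    have int_d : Integrable (fun p => (g p - g₀ p) * h p)
        (volume.restrict (Set.Icc (-T) 0 ×ˢ Set.Icc (-T) (0:ℝ))) :=
      memℒp_mul_integrable (hg.sub hmem₀) hmemh
    have int_g₀ : Integrable (fun p => g₀ p * h p)
        (volume.restrict (Set.Icc (-T) 0 ×ˢ Set.Icc (-T) (0:ℝ))) :=
      memℒp_mul_integrable hmem₀ hmemh
    have hsplit : ∫ p in Set.Icc (-T) 0 ×ˢ Set.Icc (-T) (0:ℝ),
        g p * (η p.1 - η (p.1 - ε)) * (η p.2 - η (p.2 - ε)) / ε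
        = (∫ p in Set.Icc (-T) 0 ×ˢ Set.Icc (-T) (0:ℝ),
            (g p - g₀ p) * (η p.1 - η (p.1 - ε)) * (η p.2 - η (p.2 - ε)) / ε)
          + ∫ p in Set.Icc (-T) 0 ×ˢ Set.Icc (-T) (0:ℝ),
            g₀ p * (η p.1 - η (p.1 - ε)) * (η p.2 - η (p.2 - ε)) / ε := by
      have e1 : ∫ p in Set.Icc (-T) 0 ×ˢ Set.Icc (-T) (0:ℝ),
          g p * (η p.1 - η (p.1 - ε)) * (η p.2 - η (p.2 - ε)) / ε
          = ∫ p in Set.Icc (-T) 0 ×ˢ Set.Icc (-T) (0:ℝ),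
            ((g p - g₀ p) * h p + g₀ p * h p) := by
        apply integral_congr_ae
        apply ae_of_all
        intro p
        rw [hh, hφ]
        simp only
        ring
      have e2 : ∫ p in Set.Icc (-T) 0 ×ˢ Set.Icc (-T) (0:ℝ),
          (g p - g₀ p) * (η p.1 - η (p.1 - ε)) * (η p.2 - η (p.2 - ε)) / ε
          = ∫ p in Set.Icc (-T) 0 ×ˢ Set.Icc (-T) (0:ℝ), (g p - g₀ p) * h p := by
        apply integral_congr_ae
        apply ae_of_all
        intro p
        rw [hh, hφ]
        simp only
        ring
      have e3 : ∫ p in Set.Icc (-T) 0 ×ˢ Set.Icc (-T) (0:ℝ),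
          g₀ p * (η p.1 - η (p.1 - ε)) * (η p.2 - η (p.2 - ε)) / ε
          = ∫ p in Set.Icc (-T) 0 ×ˢ Set.Icc (-T) (0:ℝ), g₀ p * h p := by
        apply integral_congr_ae
        apply ae_of_all
        intro p
        rw [hh, hφ]
        simp only
        ring
      rw [e1, e2, e3, integral_add int_d int_g₀]
    have hd : |∫ p in Set.Icc (-T) 0 ×ˢ Set.Icc (-T) (0:ℝ),
        (g p - g₀ p) * (η p.1 - η (p.1 - ε)) * (η p.2 - η (p.2 - ε)) / ε| ≤ M₀ * θ' := by
      have := key3 hT mη hB0 hB hε0 hM₀.le (hM ε ⟨hε0, hε1⟩) (hg.sub hmem₀)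
      refine this.trans ?_
      exact mul_le_mul_of_nonneg_left hsmall hM₀.le
    have hM₀θ' : M₀ * θ' ≤ θ / 2 := by
      have key : (M₀ + 1) * θ' = θ / 2 := by
        rw [hθ'def]
        field_simp
      nlinarith [hθ'0.le]
    rw [Real.dist_eq, sub_zero] at h2 ⊢
    rw [hsplit]
    calc |(∫ p in Set.Icc (-T) 0 ×ˢ Set.Icc (-T) (0:ℝ),
            (g p - g₀ p) * (η p.1 - η (p.1 - ε)) * (η p.2 - η (p.2 - ε)) / ε)
          + ∫ p in Set.Icc (-T) 0 ×ˢ Set.Icc (-T) (0:ℝ),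
            g₀ p * (η p.1 - η (p.1 - ε)) * (η p.2 - η (p.2 - ε)) / ε|
        ≤ |∫ p in Set.Icc (-T) 0 ×ˢ Set.Icc (-T) (0:ℝ),
            (g p - g₀ p) * (η p.1 - η (p.1 - ε)) * (η p.2 - η (p.2 - ε)) / ε|
          + |∫ p in Set.Icc (-T) 0 ×ˢ Set.Icc (-T) (0:ℝ),
            g₀ p * (η p.1 - η (p.1 - ε)) * (η p.2 - η (p.2 - ε)) / ε| := abs_add_le _ _
      _ < θ/2 + θ/2 := by
          apply add_lt_add_of_le_of_lt (hd.trans hM₀θ') h2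
      _ = θ := by ring
end

section
/- Let η : [-T,0] → ℝ be continuous (extended by η(x)=0 for x<−T, η(x)=η(0) for x≥0) and e ∈ C¹([-T,0]). Then |∫_{[-T,0]} e(x)(η(x) − η(x−ε)) dx| ≤ ε (∫_{[-T,0]} |e'(x)| dx + 2‖e‖_∞) ‖η‖_∞ for every ε > 0. -/
open MeasureTheory Set

/-- Estimate used in the proof of `T_ε g → 0`: for `η` continuous on `[-T,0]` (extended by
`0` left of `-T` and `η(0)` right of `0`) and `e ∈ C¹([-T,0])`,
`|∫_{[-T,0]} e(x)(η(x) − η(x−ε)) dx| ≤ ε (∫_{[-T,0]} |e'| + 2‖e‖_∞)‖η‖_∞`. -/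
theorem stmt14 (T : ℝ) (hT : 0 < T) (η e e' : ℝ → ℝ)
    (hηc : ContinuousOn η (Set.Icc (-T) 0))
    (hext1 : ∀ x < -T, η x = 0)
    (hext2 : ∀ x ≥ (0:ℝ), η x = η 0)
    (he : ∀ x ∈ Set.Icc (-T) (0:ℝ), HasDerivWithinAt e (e' x) (Set.Icc (-T) 0) x)
    (he' : ContinuousOn e' (Set.Icc (-T) 0))
    (ε : ℝ) (hε : 0 < ε) :
    |∫ x in Set.Icc (-T) (0:ℝ), e x * (η x - η (x - ε))| ≤
      ε * ((∫ x in Set.Icc (-T) (0:ℝ), |e' x|) +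
          2 * sSup ((fun x => |e x|) '' Set.Icc (-T) 0)) *
        sSup ((fun x => |η x|) '' Set.Icc (-T) 0) := by
  -- basic setup
  set M := sSup ((fun x => |η x|) '' Set.Icc (-T) 0) with hMdef
  set K := sSup ((fun x => |e x|) '' Set.Icc (-T) 0) with hKdef
  have hTmem : (-T) ∈ Icc (-T) (0:ℝ) := ⟨le_refl _, by linarith⟩
  have he_cont : ContinuousOn e (Icc (-T) 0) := fun x hx => (he x hx).continuousWithinAt
  have hMbdd : BddAbove ((fun x => |η x|) '' Icc (-T) 0) :=
    (isCompact_Icc.image_of_continuousOn hηc.abs).bddAbove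
  have hKbdd : BddAbove ((fun x => |e x|) '' Icc (-T) 0) :=
    (isCompact_Icc.image_of_continuousOn he_cont.abs).bddAbove
  have hM : ∀ x ∈ Icc (-T) (0:ℝ), |η x| ≤ M := fun x hx => le_csSup hMbdd ⟨x, hx, rfl⟩
  have hK : ∀ x ∈ Icc (-T) (0:ℝ), |e x| ≤ K := fun x hx => le_csSup hKbdd ⟨x, hx, rfl⟩
  have hM0 : 0 ≤ M := (abs_nonneg _).trans (hM _ hTmem)
  have hK0 : 0 ≤ K := (abs_nonneg _).trans (hK _ hTmem)
  have hMall : ∀ x : ℝ, |η x| ≤ M := by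
    intro x
    rcases lt_or_ge x (-T) with h | h
    · rw [hext1 x h]; simpa using hM0
    · rcases le_or_gt x 0 with h2 | h2
      · exact hM x ⟨h, h2⟩
      · rw [hext2 x h2.le]; exact hM 0 ⟨by linarith, le_refl _⟩
  -- measurability of η
  have hmemproj : ∀ x : ℝ, max (-T) (min x 0) ∈ Icc (-T) (0:ℝ) := fun x =>
    ⟨le_max_left _ _, max_le (by linarith) (min_le_right _ _)⟩
  have hcont_h : Continuous (fun x : ℝ => η (max (-T) (min x 0))) :=
    hηc.comp_continuous (continuous_const.max (continuous_id.min continuous_const)) hmemproj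
  have hη_eq : η = (Ici (-T)).indicator (fun x => η (max (-T) (min x 0))) := by
    funext x
    rcases lt_or_ge x (-T) with h | h
    · rw [indicator_of_notMem (by simpa using h), hext1 x h]
    · rw [indicator_of_mem (by simpa using h)]
      rcases le_or_gt x 0 with h2 | h2
      · rw [min_eq_left h2, max_eq_right h]
      · rw [min_eq_right h2.le, max_eq_right (by linarith), hext2 x h2.le]
  have ηm : Measurable η := by
    rw [hη_eq]; exact hcont_h.measurable.indicator measurableSet_Ici
  -- integral over Icc vs interval integral
  have hIcc_eq : ∀ (f : ℝ → ℝ) (a b : ℝ), a ≤ b →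
      ∫ x in Icc a b, f x = ∫ x in a..b, f x := by
    intro f a b hab
    rw [MeasureTheory.integral_Icc_eq_integral_Ioc, intervalIntegral.integral_of_le hab]
  have hI0 : 0 ≤ ∫ x in Icc (-T) (0:ℝ), |e' x| :=
    integral_nonneg fun x => abs_nonneg _
  set I := ∫ x in Icc (-T) (0:ℝ), |e' x| with hIdef
  rcases lt_or_ge T ε with hcase | hcase
  · -- trivial case ε > T
    have heq : EqOn (fun x => e x * (η x - η (x - ε))) (fun x => e x * η x) (Icc (-T) 0) := by
      intro x hx
      have : η (x - ε) = 0 := hext1 _ (by rcases hx with ⟨h1, h2⟩; linarith)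
      simp [this]
    rw [setIntegral_congr_fun measurableSet_Icc heq]
    have hb : ‖∫ x in Icc (-T) (0:ℝ), e x * η x‖ ≤ K * M * (volume (Icc (-T) (0:ℝ))).toReal := by
      apply MeasureTheory.norm_setIntegral_le_of_norm_le_const (by exact measure_Icc_lt_top)
      intro x hx
      rw [Real.norm_eq_abs, abs_mul]
      exact mul_le_mul (hK x hx) (hM x hx) (abs_nonneg _) hK0
    rw [Real.norm_eq_abs] at hb
    have hvol : (volume (Icc (-T) (0:ℝ))).toReal = T := by
      rw [Real.volume_Icc]; rw [ENNReal.toReal_ofReal (by linarith)]; ring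
    rw [hvol] at hb
    refine hb.trans ?_
    nlinarith [mul_nonneg hK0 hM0, mul_nonneg hI0 hM0]
  · -- main case ε ≤ T
    have hεT : -T ≤ -ε := by linarith
    have hε0 : -ε ≤ (0:ℝ) := by linarith
    -- interval integrability of |e'| on subintervals
    have hIe' : ∀ s t : ℝ, -T ≤ s → s ≤ t → t ≤ 0 →
        IntervalIntegrable (fun x => |e' x|) volume s t := by
      intro s t h1 h2 h3
      apply ContinuousOn.intervalIntegrable
      exact he'.abs.mono (by rw [uIcc_of_le h2]; exact Icc_subset_Icc h1 h3)
    set φ : ℝ → ℝ := fun t => ∫ x in (-T)..t, |e' x| with hφdef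
    have hφadd : ∀ s t : ℝ, -T ≤ s → s ≤ t → t ≤ 0 →
        φ s + ∫ x in s..t, |e' x| = φ t := fun s t h1 h2 h3 =>
      intervalIntegral.integral_add_adjacent_intervals
        (hIe' (-T) s (le_refl _) h1 (by linarith)) (hIe' s t h1 h2 h3)
    have hφmono : MonotoneOn φ (Icc (-T) 0) := by
      intro s hs t ht hst
      have h1 := hφadd s t hs.1 hst ht.2
      have h2 : 0 ≤ ∫ x in s..t, |e' x| :=
        intervalIntegral.integral_nonneg hst fun x _ => abs_nonneg _
      linarith
    have hφ0 : ∀ t ∈ Icc (-T) (0:ℝ), 0 ≤ φ t := fun t ht =>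
      intervalIntegral.integral_nonneg ht.1 fun x _ => abs_nonneg _
    have hIφ : I = φ 0 := hIcc_eq _ _ _ (by linarith)
    have hφI : ∀ t ∈ Icc (-T) (0:ℝ), φ t ≤ I := by
      intro t ht
      have h1 := hφadd t 0 ht.1 ht.2 (le_refl _)
      have h2 : 0 ≤ ∫ x in t..0, |e' x| :=
        intervalIntegral.integral_nonneg ht.2 fun x _ => abs_nonneg _
      rw [hIφ]; linarith
    have hφint : ∀ s t : ℝ, s ∈ Icc (-T) (0:ℝ) → t ∈ Icc (-T) (0:ℝ) →
        IntervalIntegrable φ volume s t := fun s t hs ht =>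
      (hφmono.mono (uIcc_subset_Icc hs ht)).intervalIntegrable
    -- FTC
    have hFTC : ∀ x : ℝ, -T ≤ x → x ≤ -ε → e (x + ε) - e x = ∫ t in x..(x + ε), e' t := by
      intro x h1 h2
      symm
      apply intervalIntegral.integral_eq_sub_of_hasDeriv_right_of_le (by linarith)
      · exact he_cont.mono (Icc_subset_Icc h1 (by linarith))
      · intro t ht
        have hd : HasDerivAt e (e' t) t :=
          (he t ⟨by linarith [ht.1], by linarith [ht.2]⟩).hasDerivAt
            (Icc_mem_nhds (by linarith [ht.1]) (by linarith [ht.2]))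
        exact hd.hasDerivWithinAt
      · apply ContinuousOn.intervalIntegrable
        rw [uIcc_of_le (by linarith : x ≤ x + ε)]
        exact he'.mono (Icc_subset_Icc h1 (by linarith))
    have hkey : ∀ x ∈ Icc (-T) (-ε), |e x * η x - e (x + ε) * η x| ≤ (φ (x + ε) - φ x) * M := by
      intro x hx
      have h2 : |e (x + ε) - e x| ≤ φ (x + ε) - φ x := by
        rw [hFTC x hx.1 hx.2]
        have hadd := hφadd x (x + ε) hx.1 (by linarith) (by linarith [hx.2])
        have habs := intervalIntegral.abs_integral_le_integral_abs
          (μ := volume) (f := e') (a := x) (b := x + ε) (by linarith)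
        linarith
      have h3 : 0 ≤ φ (x + ε) - φ x := (abs_nonneg _).trans h2
      calc |e x * η x - e (x + ε) * η x| = |e x - e (x + ε)| * |η x| := by
            rw [← sub_mul, abs_mul]
        _ ≤ (φ (x + ε) - φ x) * M := by
            rw [abs_sub_comm]
            exact mul_le_mul h2 (hMall x) (abs_nonneg _) h3
    -- continuity pieces and integrabilities
    have hηcont' : ContinuousOn η (Icc (-T) (-ε)) := hηc.mono (Icc_subset_Icc (le_refl _) hε0)
    have hcont_shift : ContinuousOn (fun y => e (y + ε)) (Icc (-T) (-ε)) :=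
      he_cont.comp ((continuous_id.add continuous_const).continuousOn)
        (fun y hy => ⟨by linarith [hy.1], by linarith [hy.2]⟩)
    have hint_f1 : IntervalIntegrable (fun x => e x * η x) volume (-T) (-ε) := by
      apply ContinuousOn.intervalIntegrable
      rw [uIcc_of_le hεT]
      exact (he_cont.mono (Icc_subset_Icc (le_refl _) hε0)).mul hηcont'
    have hint_f1b : IntervalIntegrable (fun x => e x * η x) volume (-ε) 0 := by
      apply ContinuousOn.intervalIntegrable
      rw [uIcc_of_le hε0]
      exact (he_cont.mono (Icc_subset_Icc (by linarith) (le_refl _))).mul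
        (hηc.mono (Icc_subset_Icc (by linarith) (le_refl _)))
    have hint_f2 : IntervalIntegrable (fun x => e (x + ε) * η x) volume (-T) (-ε) := by
      apply ContinuousOn.intervalIntegrable
      rw [uIcc_of_le hεT]
      exact hcont_shift.mul hηcont'
    have hint_φshift : IntervalIntegrable (fun x => φ (x + ε)) volume (-T) (-ε) := by
      apply MonotoneOn.intervalIntegrable
      rw [uIcc_of_le hεT]
      intro s hs t ht hst
      exact hφmono ⟨by linarith [hs.1], by linarith [hs.2]⟩
        ⟨by linarith [ht.1], by linarith [ht.2]⟩ (by linarith)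
    have hint_φ' : IntervalIntegrable φ volume (-T) (-ε) :=
      hφint _ _ ⟨le_refl _, by linarith⟩ ⟨hεT, hε0⟩
    -- decomposition of the integral
    have h0ae : (fun y => e (y + ε) * η y) =ᵐ[volume.restrict (Ioc (-T - ε) (-T))]
        (fun _ => (0 : ℝ)) := by
      refine (ae_restrict_iff' measurableSet_Ioc).2 ?_
      have hne : ∀ᵐ y : ℝ, y ≠ -T := by
        refine ae_iff.2 ?_
        have : {y : ℝ | ¬y ≠ -T} = {-T} := by ext y; simp
        rw [this, Real.volume_singleton]
      filter_upwards [hne] with y hy hyIoc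
      rw [hext1 y (lt_of_le_of_ne hyIoc.2 hy), mul_zero]
    have hsplit : ∫ x in Icc (-T) (0:ℝ), e x * (η x - η (x - ε)) =
        (∫ x in (-T)..(-ε), (e x * η x - e (x + ε) * η x)) + ∫ x in (-ε)..0, e x * η x := by
      have hInt1 : IntegrableOn (fun x => e x * η x) (Icc (-T) 0) volume :=
        (he_cont.mul hηc).integrableOn_compact isCompact_Icc
      have hInt2 : IntegrableOn (fun x => e x * η (x - ε)) (Icc (-T) 0) volume := by
        refine ⟨(he_cont.aestronglyMeasurable measurableSet_Icc).mul
          ((ηm.comp (measurable_id.sub_const ε)).aestronglyMeasurable.restrict), ?_⟩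
        apply HasFiniteIntegral.restrict_of_bounded (C := K * M) measure_Icc_lt_top
        refine (ae_restrict_iff' measurableSet_Icc).2 (Filter.Eventually.of_forall fun x hx => ?_)
        rw [Real.norm_eq_abs, abs_mul]
        exact mul_le_mul (hK x hx) (hMall _) (abs_nonneg _) hK0
      have h1 : ∫ x in Icc (-T) (0:ℝ), e x * (η x - η (x - ε))
          = (∫ x in Icc (-T) (0:ℝ), e x * η x) - ∫ x in Icc (-T) (0:ℝ), e x * η (x - ε) := by
        rw [← integral_sub hInt1 hInt2]
        simp only [mul_sub]
      have h2 : ∫ x in Icc (-T) (0:ℝ), e x * η (x - ε) = ∫ y in (-T - ε)..(-ε), e (y + ε) * η y := by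
        rw [hIcc_eq _ _ _ (by linarith)]
        have hcv := intervalIntegral.integral_comp_sub_right
          (a := -T) (b := 0) (fun y => e (y + ε) * η y) ε
        simp only [sub_add_cancel, zero_sub] at hcv
        exact hcv
      have h3 : ∫ y in (-T - ε)..(-T), e (y + ε) * η y = 0 := by
        rw [intervalIntegral.integral_of_le (by linarith)]
        rw [integral_congr_ae h0ae, integral_zero]
      have h4 : IntervalIntegrable (fun y => e (y + ε) * η y) volume (-T - ε) (-T) := by
        rw [intervalIntegrable_iff_integrableOn_Ioc_of_le (by linarith)]
        exact (integrable_zero _ _ _).congr h0ae.symm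
      have h5 : ∫ y in (-T - ε)..(-ε), e (y + ε) * η y = ∫ y in (-T)..(-ε), e (y + ε) * η y := by
        rw [← intervalIntegral.integral_add_adjacent_intervals h4 hint_f2, h3, zero_add]
      have h6 : ∫ x in Icc (-T) (0:ℝ), e x * η x
          = (∫ x in (-T)..(-ε), e x * η x) + ∫ x in (-ε)..0, e x * η x := by
        rw [hIcc_eq _ _ _ (by linarith),
          ← intervalIntegral.integral_add_adjacent_intervals hint_f1 hint_f1b]
      rw [h1, h2, h5, h6, intervalIntegral.integral_sub hint_f1 hint_f2]
      ring
    rw [hsplit]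
    -- bound on the second term
    have hterm2 : |∫ x in (-ε)..0, e x * η x| ≤ K * M * ε := by
      have hb := intervalIntegral.norm_integral_le_of_norm_le_const (C := K * M)
        (a := -ε) (b := 0) (f := fun x => e x * η x) ?_
      · rw [Real.norm_eq_abs] at hb
        calc |∫ x in (-ε)..0, e x * η x| ≤ K * M * |0 - (-ε)| := hb
          _ = K * M * ε := by rw [show (0:ℝ) - (-ε) = ε by ring, abs_of_nonneg hε.le]
      · intro x hx
        rw [uIoc_of_le hε0] at hx
        rw [Real.norm_eq_abs, abs_mul]
        exact mul_le_mul (hK x ⟨by linarith [hx.1], hx.2⟩) (hMall x) (abs_nonneg _) hK0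
    -- bound on the first term
    have hterm1 : |∫ x in (-T)..(-ε), (e x * η x - e (x + ε) * η x)| ≤ ε * I * M := by
      have hb1 : |∫ x in (-T)..(-ε), (e x * η x - e (x + ε) * η x)| ≤
          ∫ x in (-T)..(-ε), |e x * η x - e (x + ε) * η x| :=
        intervalIntegral.abs_integral_le_integral_abs hεT
      have hb2 : (∫ x in (-T)..(-ε), |e x * η x - e (x + ε) * η x|) ≤
          ∫ x in (-T)..(-ε), (φ (x + ε) - φ x) * M := by
        apply intervalIntegral.integral_mono_on hεT _ _ hkey
        · exact (hint_f1.sub hint_f2).abs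
        · exact ((hint_φshift.sub hint_φ').mul_const M)
      have hb3 : (∫ x in (-T)..(-ε), (φ (x + ε) - φ x) * M) =
          ((∫ x in (-T)..(-ε), φ (x + ε)) - ∫ x in (-T)..(-ε), φ x) * M := by
        rw [← intervalIntegral.integral_sub hint_φshift hint_φ',
          ← intervalIntegral.integral_mul_const]
      have hb4 : (∫ x in (-T)..(-ε), φ (x + ε)) = ∫ x in (-T + ε)..0, φ x := by
        have := intervalIntegral.integral_comp_add_right (a := -T) (b := -ε) φ ε
        rw [this, show -ε + ε = (0:ℝ) by ring]
      have hmemTε : (-T + ε) ∈ Icc (-T) (0:ℝ) := ⟨by linarith, by linarith⟩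
      have he1 : (∫ x in (-T)..(-T + ε), φ x) + ∫ x in (-T + ε)..0, φ x = ∫ x in (-T)..0, φ x :=
        intervalIntegral.integral_add_adjacent_intervals
          (hφint _ _ ⟨le_refl _, by linarith⟩ hmemTε) (hφint _ _ hmemTε ⟨by linarith, le_refl _⟩)
      have he2 : (∫ x in (-T)..(-ε), φ x) + ∫ x in (-ε)..0, φ x = ∫ x in (-T)..0, φ x :=
        intervalIntegral.integral_add_adjacent_intervals hint_φ'
          (hφint _ _ ⟨hεT, hε0⟩ ⟨by linarith, le_refl _⟩)
      have hf1 : (∫ x in (-ε)..0, φ x) ≤ ε * I := by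
        have hmono := intervalIntegral.integral_mono_on hε0
          (hφint _ _ ⟨hεT, hε0⟩ ⟨by linarith, le_refl _⟩) (intervalIntegrable_const (c := I))
          (fun t ht => hφI t ⟨by linarith [ht.1], ht.2⟩)
        rw [intervalIntegral.integral_const, smul_eq_mul] at hmono
        calc (∫ x in (-ε)..0, φ x) ≤ (0 - (-ε)) * I := hmono
          _ = ε * I := by ring
      have hg1 : 0 ≤ ∫ x in (-T)..(-T + ε), φ x :=
        intervalIntegral.integral_nonneg (by linarith)
          (fun t ht => hφ0 t ⟨ht.1, by linarith [ht.2]⟩)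
      have hfinal : ((∫ x in (-T)..(-ε), φ (x + ε)) - ∫ x in (-T)..(-ε), φ x) * M ≤ ε * I * M := by
        rw [hb4]
        have : (∫ x in (-T + ε)..0, φ x) - ∫ x in (-T)..(-ε), φ x ≤ ε * I := by linarith
        nlinarith
      calc |∫ x in (-T)..(-ε), (e x * η x - e (x + ε) * η x)| ≤
          ∫ x in (-T)..(-ε), (φ (x + ε) - φ x) * M := hb1.trans hb2
        _ = ((∫ x in (-T)..(-ε), φ (x + ε)) - ∫ x in (-T)..(-ε), φ x) * M := hb3
        _ ≤ ε * I * M := hfinal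
    calc |(∫ x in (-T)..(-ε), (e x * η x - e (x + ε) * η x)) + ∫ x in (-ε)..0, e x * η x|
        ≤ |∫ x in (-T)..(-ε), (e x * η x - e (x + ε) * η x)| + |∫ x in (-ε)..0, e x * η x| :=
          abs_add_le _ _
      _ ≤ ε * I * M + K * M * ε := add_le_add hterm1 hterm2
      _ ≤ ε * (I + 2 * K) * M := by nlinarith [mul_nonneg (mul_nonneg hε.le hK0) hM0]
end

section
/- Let Ψ ∈ C^{1,2}([0,T] × ℝ^N), φ₁,…,φ_N ∈ C²([0,T]), and define u : [0,T] × 𝒞([-T,0]) → ℝ by u(t,η) = Ψ(t, x₁(t,η),…,x_N(t,η)) with x_i(t,η) = η(0)φ_i(t) − ∫_{−t}^0 η(x)φ_i'(x+t)dx. Then the horizontal derivative of u exists at every (t,η) ∈ [0,T[ × C([-T,0]) and equals D^H u(t,η) = −∑_{i=1}^N D_{x_i}Ψ(t, x₁(t,η),…,x_N(t,η)) · (η(0)φ_i'(t) − η(−t)φ_i'(0) − ∫_{−t}^0 η(x)φ_i''(x+t)dx). -/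
open MeasureTheory Filter Topology Set


lemma slope_aux (f f' : ℝ → ℝ) (hf : ∀ s, HasDerivAt f (f' s) s) (a b : ℝ) :
    ∃ ξ, |ξ - a| ≤ |b - a| ∧ f b - f a = f' ξ * (b - a) := by
  rcases lt_trichotomy a b with h | h | h
  · obtain ⟨c, hc, hc2⟩ := exists_hasDerivAt_eq_slope f f' h
      (fun x _ => (hf x).continuousAt.continuousWithinAt) (fun x _ => hf x)
    refine ⟨c, ?_, ?_⟩
    · rw [abs_of_pos (sub_pos.2 hc.1), abs_of_pos (sub_pos.2 h)]
      linarith [hc.2]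
    · rw [hc2, div_mul_cancel₀]
      exact sub_ne_zero.2 (ne_of_gt h)
  · exact ⟨a, by simp [h], by simp [h]⟩
  · obtain ⟨c, hc, hc2⟩ := exists_hasDerivAt_eq_slope f f' h
      (fun x _ => (hf x).continuousAt.continuousWithinAt) (fun x _ => hf x)
    refine ⟨c, ?_, ?_⟩
    · rw [abs_of_neg (sub_neg.2 hc.2), abs_of_neg (sub_neg.2 h)]
      linarith [hc.1]
    · have hba : b - a ≠ 0 := sub_ne_zero.2 (ne_of_lt h)
      rw [hc2, show (f a - f b)/(a-b) = (f b - f a)/(b-a) by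
        rw [← neg_sub (f b), ← neg_sub b a, neg_div_neg_eq], div_mul_cancel₀]
      exact sub_ne_zero.2 (ne_of_gt h).symm



lemma chain_aux (N : ℕ) (F : (Fin N → ℝ) → ℝ) (D : (Fin N → ℝ) → Fin N → ℝ)
    (hD : ∀ x i, HasDerivAt (fun s => F (Function.update x i s)) (D x i) (x i))
    (hDc : ∀ i, Continuous fun x => D x i)
    (x L : Fin N → ℝ) (c : ℝ → Fin N → ℝ)
    (hc : ∀ i, Tendsto (fun ε => (c ε i - x i) / ε) (𝓝[>] (0:ℝ)) (𝓝 (L i))) :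
    Tendsto (fun ε => (F (c ε) - F x) / ε) (𝓝[>] (0:ℝ)) (𝓝 (∑ i, D x i * L i)) := by
  have hid : Tendsto (fun ε : ℝ => ε) (𝓝[>] (0:ℝ)) (𝓝 0) :=
    tendsto_id.mono_right nhdsWithin_le_nhds
  have hc0 : ∀ i, Tendsto (fun ε => c ε i - x i) (𝓝[>] (0:ℝ)) (𝓝 0) := by
    intro i
    have h1 := (hc i).mul hid
    rw [mul_zero] at h1
    refine h1.congr' ?_
    filter_upwards [self_mem_nhdsWithin] with ε hε
    exact div_mul_cancel₀ _ (ne_of_gt hε)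
  have hDat : ∀ (v : Fin N → ℝ) (i : Fin N) (s : ℝ),
      HasDerivAt (fun s' => F (Function.update v i s')) (D (Function.update v i s) i) s := by
    intro v i s
    have h := hD (Function.update v i s) i
    simpa [Function.update_idem] using h
  have key : ∀ ε, ∃ m : Fin N → Fin N → ℝ,
      (∀ k i, |m k i - x i| ≤ |c ε i - x i|) ∧
      F (c ε) - F x = ∑ k : Fin N, D (m k) k * (c ε k - x k) := by
    intro ε
    set w : ℕ → Fin N → ℝ := fun n i => if (i : ℕ) < n then c ε i else x i with hw
    have hw0 : w 0 = x := by funext i; simp [hw]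
    have hwN : w N = c ε := by funext i; simp [hw, i.isLt]
    have hupd1 : ∀ k : Fin N, w (k + 1) = Function.update (w k) k (c ε k) := by
      intro k; funext i
      rcases eq_or_ne i k with rfl | hik
      · simp [hw, Function.update_self]
      · have : (i : ℕ) < (k : ℕ) + 1 ↔ (i : ℕ) < (k : ℕ) := by
          constructor
          · intro h; rcases Nat.lt_succ_iff_lt_or_eq.1 h with h | h
            · exact h
            · exact absurd (Fin.ext h) hik
          · exact fun h => Nat.lt_succ_of_lt h
        simp [hw, Function.update_of_ne hik, this]
    have hupd0 : ∀ k : Fin N, w (k : ℕ) = Function.update (w k) k (x k) := by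
      intro k; funext i
      rcases eq_or_ne i k with rfl | hik
      · simp [hw, Function.update_self]
      · simp [hw, Function.update_of_ne hik]
    choose ξ hξ1 hξ2 using fun k : Fin N =>
      slope_aux (fun s => F (Function.update (w (k : ℕ)) k s))
        (fun s => D (Function.update (w (k : ℕ)) k s) k) (hDat _ k) (x k) (c ε k)
    refine ⟨fun k => Function.update (w (k : ℕ)) k (ξ k), ?_, ?_⟩
    · intro k i
      show |Function.update (w (k : ℕ)) k (ξ k) i - x i| ≤ |c ε i - x i|
      rcases eq_or_ne i k with rfl | hik
      · simpa [Function.update_self] using hξ1 i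
      · rw [Function.update_of_ne hik]
        by_cases h : (i : ℕ) < (k : ℕ) <;> simp [hw, h, abs_nonneg]
    · have htel : F (c ε) - F x = ∑ k ∈ Finset.range N, (F (w (k + 1)) - F (w k)) := by
        rw [Finset.sum_range_sub (fun k => F (w k)), hw0, hwN]
      rw [htel, ← Fin.sum_univ_eq_sum_range (fun k => F (w (k + 1)) - F (w k)) N]
      refine Finset.sum_congr rfl fun k _ => ?_
      have e1 : F (w ((k : ℕ) + 1)) = F (Function.update (w (k : ℕ)) k (c ε k)) := by
        rw [hupd1]
      have e2 : F (w (k : ℕ)) = F (Function.update (w (k : ℕ)) k (x k)) := by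
        conv_lhs => rw [hupd0]
      rw [e1, e2]
      exact hξ2 k
  choose m hm1 hm2 using key
  have hmt : ∀ k : Fin N, Tendsto (fun ε => m ε k) (𝓝[>] (0:ℝ)) (𝓝 x) := by
    intro k
    rw [tendsto_pi_nhds]
    intro i
    have habs : Tendsto (fun ε => |c ε i - x i|) (𝓝[>] (0:ℝ)) (𝓝 0) := by
      have := (hc0 i).abs; simpa using this
    have h0 : Tendsto (fun ε => m ε k i - x i) (𝓝[>] (0:ℝ)) (𝓝 0) :=
      squeeze_zero_norm (fun ε => hm1 ε k i) habs
    have := h0.add_const (x i)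
    simpa using this
  have final : Tendsto (fun ε => ∑ k : Fin N, D (m ε k) k * ((c ε k - x k) / ε))
      (𝓝[>] (0:ℝ)) (𝓝 (∑ k : Fin N, D x k * L k)) := by
    refine tendsto_finset_sum _ fun k _ => Tendsto.mul ?_ (hc k)
    exact ((hDc k).tendsto x).comp (hmt k)
  refine final.congr fun ε => ?_
  rw [hm2 ε, Finset.sum_div]
  exact Finset.sum_congr rfl fun k _ => (mul_div_assoc _ _ _).symm


set_option maxHeartbeats 1000000 in
lemma keyC' (t : ℝ) (ht : 0 ≤ t) (η : ℝ → ℝ) (hη : Continuous η)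
    (g G : ℝ → ℝ) (hg : ∀ s, HasDerivAt g (G s) s) (hG : Continuous G) :
    Tendsto (fun ε => ((∫ y in (-t)..0, η y * g (y + t)) -
        ∫ y in (-t)..0, η (y - ε) * g (y + t)) / ε) (𝓝[>] (0:ℝ))
      (𝓝 (η 0 * g t - η (-t) * g 0 - ∫ y in (-t)..0, η y * G (y + t))) := by
  have hgc : Continuous g := by
    exact continuous_iff_continuousAt.2 fun s => (hg s).continuousAt
  set h : ℝ → ℝ := fun z => η z * g (z + t) with hh
  set h2 : ℝ → ℝ := fun z => η z * G (z + t) with hh2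
  have hhc : Continuous h := hη.mul (hgc.comp (continuous_id.add continuous_const))
  have hh2c : Continuous h2 := hη.mul (hG.comp (continuous_id.add continuous_const))
  set P : ℝ → ℝ := fun x => ∫ y in x..0, h y with hP'
  set Q : ℝ → ℝ := fun x => ∫ y in x..0, h2 y with hQ'
  have hP : ∀ x, HasDerivAt P (-(h x)) x := fun x =>
    (intervalIntegral.integral_hasStrictDerivAt_left (hhc.intervalIntegrable x 0)
      (hhc.stronglyMeasurableAtFilter volume (𝓝 x)) hhc.continuousAt).hasDerivAt
  have hQ : ∀ x, HasDerivAt Q (-(h2 x)) x := fun x =>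
    (intervalIntegral.integral_hasStrictDerivAt_left (hh2c.intervalIntegrable x 0)
      (hh2c.stronglyMeasurableAtFilter volume (𝓝 x)) hh2c.continuousAt).hasDerivAt
  have hQc : Continuous Q := continuous_iff_continuousAt.2 fun x => (hQ x).continuousAt
  set q : ℝ → ℝ → ℝ := fun ε z => (g (z + t + ε) - g (z + t)) / ε with hq'
  have hqc : ∀ ε, Continuous fun z => q ε z := fun ε => by
    apply Continuous.div_const
    exact (hgc.comp (by continuity)).sub (hgc.comp (by continuity))
  set E1 : ℝ → ℝ := fun ε => ∫ z in (-t-ε)..(-ε), (η z * q ε z - h2 z) with hE1'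
  set E2 : ℝ → ℝ := fun ε => Q (-t-ε) - Q (-ε) - Q (-t) with hE2'
  -- the pointwise identity for ε > 0
  have identity : ∀ ε : ℝ, 0 < ε →
      ((∫ y in (-t)..0, η y * g (y + t)) - ∫ y in (-t)..0, η (y - ε) * g (y + t)) / ε
        = (P (-ε) - P 0) / ε - (P (-t-ε) - P (-t)) / ε - (E1 ε + E2 ε + Q (-t)) := by
    intro ε hε
    have step1 : (∫ y in (-t)..0, η (y - ε) * g (y + t))
        = ∫ z in (-t-ε)..(-ε), η z * g (z + t + ε) := by
      have e1 : (∫ y in (-t)..0, η (y - ε) * g (y + t))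
          = ∫ y in (-t)..0, (fun z => η z * g (z + t + ε)) (y - ε) := by
        congr 1; funext y
        simp only []
        congr 2
        ring
      rw [e1, intervalIntegral.integral_comp_sub_right (fun z => η z * g (z + t + ε)) ε]
      norm_num
    have hint1 : IntervalIntegrable h volume (-t-ε) (-ε) := hhc.intervalIntegrable _ _
    have hint2 : IntervalIntegrable h volume (-ε) 0 := hhc.intervalIntegrable _ _
    have hBc : Continuous fun z => η z * (g (z + t + ε) - g (z + t)) :=
      hη.mul ((hgc.comp (by continuity)).sub (hgc.comp (by continuity)))
    have step2 : (∫ z in (-t-ε)..(-ε), η z * g (z + t + ε))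
        = (P (-t-ε) - P (-ε)) + ∫ z in (-t-ε)..(-ε), η z * (g (z + t + ε) - g (z + t)) := by
      have e2 : (∫ z in (-t-ε)..(-ε), η z * g (z + t + ε))
          = ∫ z in (-t-ε)..(-ε), (h z + η z * (g (z + t + ε) - g (z + t))) := by
        congr 1; funext z; simp only [hh]; ring
      rw [e2, intervalIntegral.integral_add hint1 (hBc.intervalIntegrable _ _)]
      have adj := intervalIntegral.integral_add_adjacent_intervals hint1 hint2
      have : (∫ z in (-t-ε)..(-ε), h z) = P (-t-ε) - P (-ε) := by
        simp only [hP']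
        linarith [adj]
      rw [this]
    -- B ε / ε = E1 ε + E2 ε + Q (-t)
    have step3 : (∫ z in (-t-ε)..(-ε), η z * (g (z + t + ε) - g (z + t))) / ε
        = E1 ε + E2 ε + Q (-t) := by
      have e3 : (∫ z in (-t-ε)..(-ε), η z * (g (z + t + ε) - g (z + t))) / ε
          = ∫ z in (-t-ε)..(-ε), η z * q ε z := by
        rw [← intervalIntegral.integral_div]
        congr 1; funext z
        simp only [hq']
        ring
      have e4 : (∫ z in (-t-ε)..(-ε), η z * q ε z)
          = E1 ε + ∫ z in (-t-ε)..(-ε), h2 z := by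
        have i1 : IntervalIntegrable (fun z => η z * q ε z) volume (-t-ε) (-ε) :=
          (hη.mul (hqc ε)).intervalIntegrable _ _
        have i2 : IntervalIntegrable h2 volume (-t-ε) (-ε) := hh2c.intervalIntegrable _ _
        simp only [hE1']
        rw [intervalIntegral.integral_sub i1 i2]
        ring
      have adj2 := intervalIntegral.integral_add_adjacent_intervals
        (hh2c.intervalIntegrable (μ := volume) (-t-ε) (-ε)) (hh2c.intervalIntegrable (-ε) 0)
      have e5 : (∫ z in (-t-ε)..(-ε), h2 z) = E2 ε + Q (-t) := by
        simp only [hE2', hQ']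
        linarith [adj2]
      rw [e3, e4, e5]; ring
    have hP0 : P 0 = 0 := intervalIntegral.integral_same
    have hPt : P (-t) = ∫ y in (-t)..0, η y * g (y + t) := rfl
    rw [← hPt, step1, step2, ← step3, hP0]
    field_simp
    ring
  -- Tendsto components
  have TA : Tendsto (fun ε => (P (-ε) - P 0) / ε) (𝓝[>] (0:ℝ)) (𝓝 (h 0)) := by
    have d1 : HasDerivAt (fun ε : ℝ => P (-ε)) (h 0) 0 := by
      have hinner : HasDerivAt (fun ε : ℝ => -ε) (-1) 0 := hasDerivAt_neg 0
      have houter : HasDerivAt P (-(h (-0))) (-0) := hP (-0)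
      have := HasDerivAt.comp 0 houter hinner
      simpa [Function.comp_def] using this
    have := hasDerivAt_iff_tendsto_slope.1 d1
    have h2' := this.mono_left (nhdsWithin_mono 0 (fun x hx => ne_of_gt hx))
    refine h2'.congr fun ε => ?_
    simp [slope_def_field]
  have TB : Tendsto (fun ε => (P (-t-ε) - P (-t)) / ε) (𝓝[>] (0:ℝ)) (𝓝 (h (-t))) := by
    have d1 : HasDerivAt (fun ε : ℝ => P (-t-ε)) (h (-t)) 0 := by
      have hinner : HasDerivAt (fun ε : ℝ => -t-ε) (-1) 0 :=
        (hasDerivAt_const 0 (-t)).sub (hasDerivAt_id 0) |>.congr_deriv (by ring)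
      have houter : HasDerivAt P (-(h (-t-0))) (-t-0) := hP (-t-0)
      have := HasDerivAt.comp 0 houter hinner
      simpa [Function.comp_def] using this
    have := hasDerivAt_iff_tendsto_slope.1 d1
    have h2' := this.mono_left (nhdsWithin_mono 0 (fun x hx => ne_of_gt hx))
    refine h2'.congr fun ε => ?_
    simp [slope_def_field]
  have TD : Tendsto E2 (𝓝[>] (0:ℝ)) (𝓝 0) := by
    have hc : Continuous E2 := by
      simp only [hE2']
      exact ((hQc.comp (by continuity)).sub (hQc.comp (by continuity))).sub continuous_const
    have : Tendsto E2 (𝓝[>] (0:ℝ)) (𝓝 (E2 0)) :=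
      (hc.continuousAt (x := 0)).tendsto.mono_left nhdsWithin_le_nhds
    have hE20 : E2 0 = 0 := by
      simp [hE2', hQ', intervalIntegral.integral_same]
    rwa [hE20] at this
  have TC : Tendsto E1 (𝓝[>] (0:ℝ)) (𝓝 0) := by
    rw [Metric.tendsto_nhdsWithin_nhds]
    intro e he
    obtain ⟨C, hC⟩ := (isCompact_Icc (a := -t-1) (b := 0)).exists_bound_of_continuousOn
      hη.continuousOn
    have hC0 : 0 ≤ C := le_trans (norm_nonneg (η 0)) (hC 0 ⟨by linarith, le_refl 0⟩)
    set e' := e / ((C+1)*(t+1)) with he'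
    have hD1 : (0:ℝ) < (C+1)*(t+1) := by nlinarith
    have he'pos : 0 < e' := div_pos he hD1
    obtain ⟨d, hd, hdG⟩ := Metric.uniformContinuousOn_iff.1
      ((isCompact_Icc (a := -1) (b := t+1)).uniformContinuousOn_of_continuous hG.continuousOn)
      e' he'pos
    refine ⟨min d 1, lt_min hd one_pos, ?_⟩
    intro ε hε hεd
    have hε0 : 0 < ε := hε
    rw [Real.dist_eq, sub_zero, abs_of_pos hε0] at hεd
    have hεd' : ε < d := lt_of_lt_of_le hεd (min_le_left _ _)
    have hε1 : ε ≤ 1 := le_of_lt (lt_of_lt_of_le hεd (min_le_right _ _))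
    rw [Real.dist_eq, sub_zero]
    have key : ∀ z ∈ Set.uIoc (-t-ε) (-ε), ‖η z * q ε z - h2 z‖ ≤ C * e' := by
      intro z hz
      rw [Set.uIoc_of_le (by linarith : -t-ε ≤ -ε)] at hz
      obtain ⟨hz1, hz2⟩ := hz
      have hgdiff : g (z+t+ε) - g (z+t) = ∫ u in (z+t)..(z+t+ε), G u :=
        (intervalIntegral.integral_eq_sub_of_hasDerivAt (fun u _ => hg u)
          (hG.intervalIntegrable _ _)).symm
      have hqG : |q ε z - G (z+t)| ≤ e' := by
        have hrepr : q ε z - G (z+t) = (∫ u in (z+t)..(z+t+ε), (G u - G (z+t))) / ε := by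
          rw [intervalIntegral.integral_sub (hG.intervalIntegrable _ _)
            intervalIntegrable_const, intervalIntegral.integral_const]
          simp only [hq']
          rw [hgdiff]
          have : z + t + ε - (z + t) = ε := by ring
          rw [this]
          field_simp
          rw [smul_eq_mul]
        rw [hrepr, abs_div, abs_of_pos hε0, div_le_iff₀ hε0]
        have hb : ∀ u ∈ Set.uIoc (z+t) (z+t+ε), ‖G u - G (z+t)‖ ≤ e' := by
          intro u hu
          rw [Set.uIoc_of_le (by linarith : z+t ≤ z+t+ε)] at hu
          obtain ⟨hu1, hu2⟩ := hu
          have hmem1 : u ∈ Set.Icc (-1 : ℝ) (t+1) := ⟨by linarith, by linarith⟩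
          have hmem2 : z + t ∈ Set.Icc (-1 : ℝ) (t+1) := ⟨by linarith, by linarith⟩
          have := hdG u hmem1 (z+t) hmem2 (by rw [Real.dist_eq]; rw [abs_of_pos (by linarith)]; linarith)
          rw [Real.dist_eq] at this
          exact le_of_lt this
        have := intervalIntegral.norm_integral_le_of_norm_le_const hb
        have habs : |z + t + ε - (z + t)| = ε := by rw [show z+t+ε-(z+t) = ε by ring, abs_of_pos hε0]
        rw [habs] at this
        exact this
      have hfact : η z * q ε z - h2 z = η z * (q ε z - G (z+t)) := by
        simp only [hh2]; ring
      rw [hfact]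
      rw [show ‖η z * (q ε z - G (z+t))‖ = |η z| * |q ε z - G (z+t)| from abs_mul _ _]
      exact mul_le_mul (hC z ⟨by linarith, by linarith⟩) hqG (abs_nonneg _) hC0
    have hb2 := intervalIntegral.norm_integral_le_of_norm_le_const key
    have habs2 : |(-ε) - (-t-ε)| = t := by rw [show -ε - (-t-ε) = t by ring, abs_of_nonneg ht]
    rw [habs2] at hb2
    calc |E1 ε| ≤ C * e' * t := hb2
      _ < e := by
        have h9 : C * e' * t = C*t*e/((C+1)*(t+1)) := by rw [he']; ring
        rw [h9, div_lt_iff₀ hD1]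
        nlinarith
  -- final assembly
  have combined := (TA.sub TB).sub ((TC.add TD).add (tendsto_const_nhds (x := Q (-t))))
  have heq : (fun ε => ((∫ y in (-t)..0, η y * g (y + t)) -
      ∫ y in (-t)..0, η (y - ε) * g (y + t)) / ε) =ᶠ[𝓝[>] (0:ℝ)]
      fun ε => (P (-ε) - P 0) / ε - (P (-t-ε) - P (-t)) / ε - (E1 ε + E2 ε + Q (-t)) := by
    filter_upwards [self_mem_nhdsWithin] with ε hε
    exact identity ε hε
  have final := Filter.Tendsto.congr' heq.symm combined
  have hval : h 0 - h (-t) - (0 + 0 + Q (-t))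
      = η 0 * g t - η (-t) * g 0 - ∫ y in (-t)..0, η y * G (y + t) := by
    simp only [hh, hh2, hQ', zero_add, neg_add_cancel]
  rw [hval] at final
  exact final



lemma keyC (T : ℝ) (hT : 0 < T) (t : ℝ) (ht : t ∈ Set.Ico (0:ℝ) T)
    (η : ℝ → ℝ) (hη : ContinuousOn η (Set.Icc (-T) 0))
    (g g' : ℝ → ℝ) (hg : ∀ x ∈ Set.Icc (0:ℝ) T, HasDerivWithinAt g (g' x) (Set.Icc 0 T) x)
    (hg' : ContinuousOn g' (Set.Icc 0 T)) :
    Tendsto (fun ε : ℝ => ((∫ y in (-t)..0, η y * g (y + t)) -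
        ∫ y in (-t)..0, (if y - ε < -T then 0 else η (y - ε)) * g (y + t)) / ε)
      (𝓝[>] (0:ℝ))
      (𝓝 (η 0 * g t - η (-t) * g 0 - ∫ y in (-t)..0, η y * g' (y + t))) := by
  obtain ⟨ht0, htT⟩ := ht
  set ηe : ℝ → ℝ := fun y => η (min 0 (max y (-T))) with hηe'
  have hmem1 : ∀ y : ℝ, min 0 (max y (-T)) ∈ Set.Icc (-T) 0 := by
    intro y
    constructor
    · exact le_min (by linarith) (le_max_right _ _)
    · exact min_le_left _ _
  have hηec : Continuous ηe :=
    hη.comp_continuous (continuous_const.min (continuous_id.max continuous_const)) hmem1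
  have hηfix : ∀ y ∈ Set.Icc (-T) 0, ηe y = η y := by
    intro y hy
    simp only [hηe']
    rw [max_eq_left hy.1, min_eq_right hy.2]
  set Ge : ℝ → ℝ := fun s => g' (min T (max s 0)) with hGe'
  have hmem2 : ∀ s : ℝ, min T (max s 0) ∈ Set.Icc (0:ℝ) T := by
    intro s
    exact ⟨le_min (le_of_lt hT) (le_max_right _ _), min_le_left _ _⟩
  have hGec : Continuous Ge := hg'.comp_continuous (continuous_const.min (continuous_id.max continuous_const)) hmem2
  have hGfix : ∀ s ∈ Set.Icc (0:ℝ) T, Ge s = g' s := by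
    intro s hs
    simp only [hGe']
    rw [max_eq_left hs.1, min_eq_right hs.2]
  set ge : ℝ → ℝ := fun s => g 0 + ∫ u in (0:ℝ)..s, Ge u with hge'
  have hged : ∀ s, HasDerivAt ge (Ge s) s := by
    intro s
    exact ((hGec.integral_hasStrictDerivAt 0 s).hasDerivAt).const_add (g 0)
  have hgcont : ContinuousOn g (Set.Icc 0 T) := fun x hx => (hg x hx).continuousWithinAt
  have hgfix : ∀ s ∈ Set.Icc (0:ℝ) T, ge s = g s := by
    intro s hs
    have h1 : (∫ u in (0:ℝ)..s, Ge u) = ∫ u in (0:ℝ)..s, g' u := by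
      apply intervalIntegral.integral_congr
      intro u hu
      rw [uIcc_of_le hs.1] at hu
      exact hGfix u ⟨hu.1, le_trans hu.2 hs.2⟩
    have h2 : (∫ u in (0:ℝ)..s, g' u) = g s - g 0 := by
      apply intervalIntegral.integral_eq_sub_of_hasDeriv_right_of_le hs.1
      · exact hgcont.mono (Icc_subset_Icc le_rfl hs.2)
      · intro x hx
        have hx' : x ∈ Set.Icc (0:ℝ) T := ⟨le_of_lt hx.1, le_trans (le_of_lt hx.2) hs.2⟩
        exact ((hg x hx').hasDerivAt (Icc_mem_nhds hx.1 (lt_of_lt_of_le hx.2 hs.2))).hasDerivWithinAt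
      · exact (hg'.mono (by rw [uIcc_of_le hs.1]; exact Icc_subset_Icc le_rfl hs.2)).intervalIntegrable
    simp only [hge']
    rw [h1, h2]
    ring
  have base := keyC' t ht0 ηe hηec ge Ge hged hGec
  have hval : ηe 0 * ge t - ηe (-t) * ge 0 - (∫ y in (-t)..0, ηe y * Ge (y + t))
      = η 0 * g t - η (-t) * g 0 - ∫ y in (-t)..0, η y * g' (y + t) := by
    have v1 : ηe 0 = η 0 := hηfix 0 ⟨by linarith, le_rfl⟩
    have v2 : ηe (-t) = η (-t) := hηfix (-t) ⟨by linarith, by linarith⟩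
    have v3 : ge t = g t := hgfix t ⟨ht0, le_of_lt htT⟩
    have v4 : ge 0 = g 0 := hgfix 0 ⟨le_rfl, le_of_lt hT⟩
    have v5 : (∫ y in (-t)..0, ηe y * Ge (y + t)) = ∫ y in (-t)..0, η y * g' (y + t) := by
      apply intervalIntegral.integral_congr
      intro y hy
      rw [uIcc_of_le (by linarith : -t ≤ (0:ℝ))] at hy
      show ηe y * Ge (y + t) = η y * g' (y + t)
      rw [hηfix y ⟨by linarith [hy.1], hy.2⟩, hGfix (y + t) ⟨by linarith [hy.1], by linarith [hy.2]⟩]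
    rw [v1, v2, v3, v4, v5]
  have hfun : (fun ε : ℝ => ((∫ y in (-t)..0, η y * g (y + t)) -
        ∫ y in (-t)..0, (if y - ε < -T then 0 else η (y - ε)) * g (y + t)) / ε) =ᶠ[𝓝[>] (0:ℝ)]
      (fun ε => ((∫ y in (-t)..0, ηe y * ge (y + t)) -
        ∫ y in (-t)..0, ηe (y - ε) * ge (y + t)) / ε) := by
    filter_upwards [Ioo_mem_nhdsGT_of_mem (⟨le_refl (0:ℝ), by linarith⟩ : (0:ℝ) ∈ Set.Ico 0 (T - t))]
      with ε hε
    obtain ⟨hε0, hεT⟩ := hε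
    have c1 : (∫ y in (-t)..0, η y * g (y + t)) = ∫ y in (-t)..0, ηe y * ge (y + t) := by
      apply intervalIntegral.integral_congr
      intro y hy
      rw [uIcc_of_le (by linarith : -t ≤ (0:ℝ))] at hy
      show η y * g (y + t) = ηe y * ge (y + t)
      rw [hηfix y ⟨by linarith [hy.1], hy.2⟩, hgfix (y + t) ⟨by linarith [hy.1], by linarith [hy.2]⟩]
    have c2 : (∫ y in (-t)..0, (if y - ε < -T then 0 else η (y - ε)) * g (y + t))
        = ∫ y in (-t)..0, ηe (y - ε) * ge (y + t) := by
      apply intervalIntegral.integral_congr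
      intro y hy
      rw [uIcc_of_le (by linarith : -t ≤ (0:ℝ))] at hy
      have hyε : y - ε ∈ Set.Icc (-T) 0 := ⟨by linarith [hy.1], by linarith [hy.2]⟩
      show (if y - ε < -T then 0 else η (y - ε)) * g (y + t) = ηe (y - ε) * ge (y + t)
      rw [if_neg (not_lt.2 hyε.1), hηfix _ hyε,
        hgfix (y + t) ⟨by linarith [hy.1], by linarith [hy.2]⟩]
    rw [c1, c2]
  rw [← hval]
  exact Filter.Tendsto.congr' hfun.symm base

/-- Horizontal derivative of a cylindrical functional
`u(t,η) = Ψ(t, x₁(t,η),…,x_N(t,η))` with `x_i(t,η) = η(0)φ_i(t) − ∫_{−t}^0 η(x)φ_i'(x+t)dx`,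
for `Ψ ∈ C^{1,2}([0,T] × ℝ^N)` and `φ_i ∈ C²([0,T])`: for every `(t,η) ∈ [0,T[ × C([-T,0])`
the limit defining `D^H u(t,η)` exists and equals
`−∑_i D_{x_i}Ψ(t,x(t,η))·(η(0)φ_i'(t) − η(−t)φ_i'(0) − ∫_{−t}^0 η(x)φ_i''(x+t)dx)`.
The shifted path `η(·−ε)` is extended by `0` to the left of `−T`. -/
theorem stmt18 (T : ℝ) (hT : 0 < T) (N : ℕ)
    (Ψ dtΨ : ℝ → (Fin N → ℝ) → ℝ) (DΨ : ℝ → (Fin N → ℝ) → Fin N → ℝ)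
    (D2Ψ : ℝ → (Fin N → ℝ) → Fin N → Fin N → ℝ)
    (hΨc : Continuous fun p : ℝ × (Fin N → ℝ) => Ψ p.1 p.2)
    (hdt : ∀ τ x, HasDerivAt (fun s => Ψ s x) (dtΨ τ x) τ)
    (hdtc : Continuous fun p : ℝ × (Fin N → ℝ) => dtΨ p.1 p.2)
    (hDΨ : ∀ τ x i, HasDerivAt (fun s => Ψ τ (Function.update x i s)) (DΨ τ x i) (x i))
    (hDΨc : ∀ i, Continuous fun p : ℝ × (Fin N → ℝ) => DΨ p.1 p.2 i)
    (hD2Ψ : ∀ τ x i j,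
      HasDerivAt (fun s => DΨ τ (Function.update x j s) i) (D2Ψ τ x i j) (x j))
    (hD2Ψc : ∀ i j, Continuous fun p : ℝ × (Fin N → ℝ) => D2Ψ p.1 p.2 i j)
    (φ φ' φ'' : Fin N → ℝ → ℝ)
    (hφ : ∀ i, ∀ x ∈ Set.Icc (0:ℝ) T, HasDerivWithinAt (φ i) (φ' i x) (Set.Icc 0 T) x)
    (hφ' : ∀ i, ∀ x ∈ Set.Icc (0:ℝ) T, HasDerivWithinAt (φ' i) (φ'' i x) (Set.Icc 0 T) x)
    (hφ'' : ∀ i, ContinuousOn (φ'' i) (Set.Icc 0 T)) :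
    ∀ t ∈ Set.Ico (0:ℝ) T, ∀ η : ℝ → ℝ, ContinuousOn η (Set.Icc (-T) 0) →
      Tendsto (fun ε : ℝ =>
          (Ψ t (fun i => η 0 * φ i t - ∫ x in (-t)..0, η x * φ' i (x + t)) -
            Ψ t (fun i => η 0 * φ i t -
              ∫ x in (-t)..0, (if x - ε < -T then 0 else η (x - ε)) * φ' i (x + t))) / ε)
        (𝓝[>] 0)
        (𝓝 (-∑ i : Fin N,
          DΨ t (fun j => η 0 * φ j t - ∫ x in (-t)..0, η x * φ' j (x + t)) i *
            (η 0 * φ' i t - η (-t) * φ' i 0 -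
              ∫ x in (-t)..0, η x * φ'' i (x + t)))) := by
  intro t ht η hη
  set x : Fin N → ℝ := fun i => η 0 * φ i t - ∫ y in (-t)..0, η y * φ' i (y + t) with hx
  set c : ℝ → Fin N → ℝ := fun ε i => η 0 * φ i t -
    ∫ y in (-t)..0, (if y - ε < -T then 0 else η (y - ε)) * φ' i (y + t) with hc'
  set S : Fin N → ℝ := fun i => η 0 * φ' i t - η (-t) * φ' i 0 -
    ∫ y in (-t)..0, η y * φ'' i (y + t) with hS'
  have hci : ∀ i, Tendsto (fun ε => (c ε i - x i) / ε) (𝓝[>] (0:ℝ)) (𝓝 (S i)) := by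
    intro i
    have hk := keyC T hT t ht η hη (φ' i) (φ'' i) (hφ' i) (hφ'' i)
    refine hk.congr fun ε => ?_
    simp only [hx, hc']
    ring
  have hchain := chain_aux N (Ψ t) (DΨ t) (hDΨ t)
    (fun i => (hDΨc i).comp (continuous_const.prodMk continuous_id)) x S c hci
  have hneg := hchain.neg
  refine hneg.congr fun ε => ?_
  rw [← neg_div, neg_sub]
end
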